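/- arXiv:1705.01600 — 8 statements merged into one kernel-verified Lean document; each statement's English description precedes it below -/
import Mathlib

section
/- Suppose there are constants C_α > 0 and α > 0 such that for every i ≥ 0 and every real x ≥ 1 one has, almost surely, P(X_{i+1} > x | 𝓕_i) ≤ C_α x^{-α}. Then for every γ with 0 < γ < α, every ε > 0 and every k ≥ 1, E[ (ε^k Π_k)^γ ] ≤ ( ε (1 + γ C_α/(α−γ))^{1/γ} )^{kγ}. -/
open MeasureTheory

lemma stmt2_aux {Ω : Type*} {m : MeasurableSpace Ω} {m0 : MeasurableSpace Ω}
    (μ : Measure Ω) [IsProbabilityMeasure μ] (hm : m ≤ m0)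
    (Z : Ω → ℝ) (hZmeas : Measurable Z)
    (Cα α : ℝ) (hCα : 0 < Cα) (hα : 0 < α)
    (htail : ∀ x : ℝ, 1 ≤ x → ∀ᵐ ω ∂μ,
        (μ[Set.indicator {ω' | x < Z ω'} (fun _ => (1:ℝ)) | m]) ω ≤ Cα * x ^ (-α))
    (γ : ℝ) (hγ : 0 < γ) (hγα : γ < α)
    (Y : Ω → ℝ) (hYmeas : StronglyMeasurable[m] Y) (hY0 : ∀ ω, 0 ≤ Y ω)
    (hYint : Integrable Y μ) :
    ∫⁻ ω, ENNReal.ofReal (Y ω) * ENNReal.ofReal ((Z ω ⊔ 1) ^ γ) ∂μ ≤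
      ENNReal.ofReal (1 + γ * Cα / (α - γ)) * ∫⁻ ω, ENNReal.ofReal (Y ω) ∂μ := by
  have hαγ : 0 < α - γ := by linarith
  set R : ℝ := ∫ ω, Y ω ∂μ with hR
  have hR0 : 0 ≤ R := integral_nonneg hY0
  -- real-valued tail bound weighted by Y
  have tail : ∀ t : ℝ, 1 ≤ t →
      ∫ ω, Y ω * Set.indicator {ω' | t < Z ω'} (fun _ => (1:ℝ)) ω ∂μ ≤ Cα * t ^ (-α) * R := by
    intro t ht
    set g : Ω → ℝ := Set.indicator {ω' | t < Z ω'} (fun _ => (1:ℝ)) with hg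
    have hA : MeasurableSet[m0] {ω' | t < Z ω'} := measurableSet_lt measurable_const hZmeas
    have hgint : Integrable g μ := (integrable_const (1:ℝ)).indicator hA
    have hYg : Y * g = {ω' | t < Z ω'}.indicator Y := by
      ext ω
      by_cases hω : ω ∈ {ω' | t < Z ω'} <;>
        simp [hg, Set.indicator_of_mem, Set.indicator_of_notMem, hω]
    have hYg_int : Integrable (Y * g) μ := by
      rw [hYg]; exact hYint.indicator hA
    have h1 : ∫ ω, Y ω * g ω ∂μ = ∫ ω, (μ[Y * g | m]) ω ∂μ := (integral_condExp hm).symm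
    have h2 : μ[Y * g|m] =ᵐ[μ] Y * μ[g|m] :=
      condExp_mul_of_stronglyMeasurable_left hYmeas hYg_int hgint
    have hcint : Integrable (Y * μ[g|m]) μ := integrable_condExp.congr h2
    have hbound : ∀ᵐ ω ∂μ, Y ω * (μ[g|m]) ω ≤ Y ω * (Cα * t ^ (-α)) := by
      filter_upwards [htail t ht] with ω h using mul_le_mul_of_nonneg_left h (hY0 ω)
    calc ∫ ω, Y ω * g ω ∂μ = ∫ ω, (μ[Y * g | m]) ω ∂μ := h1
      _ = ∫ ω, (Y * μ[g|m]) ω ∂μ := integral_congr_ae h2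
      _ ≤ ∫ ω, Y ω * (Cα * t ^ (-α)) ∂μ :=
          integral_mono_ae hcint (hYint.mul_const _) hbound
      _ = Cα * t ^ (-α) * R := by rw [integral_mul_const]; ring
  -- pass to the weighted measure ν
  set ν : @Measure Ω m0 := μ.withDensity (fun ω => ENNReal.ofReal (Y ω)) with hν
  have hYm0 : Measurable Y := (hYmeas.mono hm).measurable
  have hνA : ∀ s : Set Ω, MeasurableSet[m0] s → ν s = ENNReal.ofReal (∫ ω in s, Y ω ∂μ) := by
    intro s hs
    rw [hν, withDensity_apply _ hs,
      ofReal_integral_eq_lintegral_ofReal (hYint.restrict)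
        (Filter.Eventually.of_forall hY0)]
  have hνuniv : ν Set.univ = ENNReal.ofReal R := by
    rw [hνA _ MeasurableSet.univ, setIntegral_univ]
  have hLY : ∫⁻ ω, ENNReal.ofReal (Y ω) ∂μ = ENNReal.ofReal R := by
    rw [hR, ofReal_integral_eq_lintegral_ofReal hYint (Filter.Eventually.of_forall hY0)]
  -- rewrite lhs as integral over ν
  have hWmeas : Measurable (fun ω => (Z ω ⊔ 1) ^ γ) :=
    (Real.continuous_rpow_const hγ.le).measurable.comp (hZmeas.sup measurable_const)
  have hlhs : ∫⁻ ω, ENNReal.ofReal (Y ω) * ENNReal.ofReal ((Z ω ⊔ 1) ^ γ) ∂μ =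
      ∫⁻ ω, ENNReal.ofReal ((Z ω ⊔ 1) ^ γ) ∂ν := by
    rw [hν, lintegral_withDensity_eq_lintegral_mul _ hYm0.ennreal_ofReal
      hWmeas.ennreal_ofReal]
    rfl
  rw [hlhs, hLY]
  -- layer cake on ν
  have hcake := lintegral_rpow_eq_lintegral_meas_lt_mul ν
    (f := fun ω => Z ω ⊔ 1) (Filter.Eventually.of_forall fun ω => le_trans zero_le_one le_sup_right)
    ((hZmeas.sup measurable_const)).aemeasurable hγ
  have hcake' : ∫⁻ ω, ENNReal.ofReal ((Z ω ⊔ 1) ^ γ) ∂ν =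
      ENNReal.ofReal γ * ∫⁻ t in Set.Ioi 0, ν {a | t < Z a ⊔ 1} * ENNReal.ofReal (t ^ (γ - 1)) :=
    hcake
  rw [hcake']
  -- split the t-integral
  have hsplit : (Set.Ioi (0:ℝ)) = Set.Ioc (0:ℝ) 1 ∪ Set.Ioi 1 := (Set.Ioc_union_Ioi_eq_Ioi zero_le_one).symm
  rw [hsplit, lintegral_union measurableSet_Ioi Set.Ioc_disjoint_Ioi_same]
  -- part 1
  have hI1 : ∫⁻ t in Set.Ioc (0:ℝ) 1, ENNReal.ofReal (t ^ (γ - 1)) = ENNReal.ofReal (1 / γ) := by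
    have hintble : IntegrableOn (fun t : ℝ => t ^ (γ - 1)) (Set.Ioc 0 1) :=
      (_root_.intervalIntegral.intervalIntegrable_rpow' (r := γ - 1) (by linarith) (a := 0) (b := 1)).1
    rw [← ofReal_integral_eq_lintegral_ofReal hintble]
    · congr 1
      have := integral_rpow (r := γ - 1) (a := 0) (b := 1) (Or.inl (by linarith))
      rw [intervalIntegral.integral_of_le zero_le_one] at this
      rw [this]
      simp [Real.zero_rpow (by positivity : γ ≠ 0), Real.one_rpow, sub_add_cancel]
    · filter_upwards [self_mem_ae_restrict (measurableSet_Ioc :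
        MeasurableSet (Set.Ioc (0:ℝ) 1))] with t ht
      exact Real.rpow_nonneg ht.1.le _
  have hpart1 : ∫⁻ t in Set.Ioc (0:ℝ) 1, ν {a | t < Z a ⊔ 1} * ENNReal.ofReal (t ^ (γ - 1)) ≤
      ENNReal.ofReal R * ENNReal.ofReal (1 / γ) := by
    calc ∫⁻ t in Set.Ioc (0:ℝ) 1, ν {a | t < Z a ⊔ 1} * ENNReal.ofReal (t ^ (γ - 1))
        ≤ ∫⁻ t in Set.Ioc (0:ℝ) 1, ENNReal.ofReal R * ENNReal.ofReal (t ^ (γ - 1)) := by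
          refine lintegral_mono fun t => ?_
          gcongr
          rw [← hνuniv]
          exact measure_mono (Set.subset_univ _)
      _ = ENNReal.ofReal R * ENNReal.ofReal (1 / γ) := by
          rw [lintegral_const_mul' _ _ ENNReal.ofReal_ne_top, hI1]
  -- part 2
  have hI2 : ∫⁻ t in Set.Ioi (1:ℝ), ENNReal.ofReal (t ^ (γ - 1 - α)) =
      ENNReal.ofReal (1 / (α - γ)) := by
    have hlt : γ - 1 - α < -1 := by linarith
    have hintble : IntegrableOn (fun t : ℝ => t ^ (γ - 1 - α)) (Set.Ioi 1) :=
      integrableOn_Ioi_rpow_of_lt hlt zero_lt_one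
    rw [← ofReal_integral_eq_lintegral_ofReal hintble]
    · congr 1
      rw [integral_Ioi_rpow_of_lt hlt zero_lt_one]
      rw [Real.one_rpow, show γ - 1 - α + 1 = γ - α by ring, neg_div, ← div_neg, neg_sub]
    · filter_upwards [self_mem_ae_restrict (measurableSet_Ioi :
        MeasurableSet (Set.Ioi (1:ℝ)))] with t ht
      exact Real.rpow_nonneg (le_trans zero_le_one ht.le) _
  have hpart2 : ∫⁻ t in Set.Ioi (1:ℝ), ν {a | t < Z a ⊔ 1} * ENNReal.ofReal (t ^ (γ - 1)) ≤
      ENNReal.ofReal (Cα * R) * ENNReal.ofReal (1 / (α - γ)) := by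
    have hb : ∀ t : ℝ, t ∈ Set.Ioi (1:ℝ) →
        ν {a | t < Z a ⊔ 1} * ENNReal.ofReal (t ^ (γ - 1)) ≤
        ENNReal.ofReal (Cα * R) * ENNReal.ofReal (t ^ (γ - 1 - α)) := by
      intro t ht
      have ht1 : (1:ℝ) ≤ t := le_of_lt ht
      have ht0 : (0:ℝ) < t := lt_of_lt_of_le zero_lt_one ht1
      have hset : {a | t < Z a ⊔ 1} = {a | t < Z a} := by
        ext a; simp only [Set.mem_setOf_eq, lt_sup_iff]
        constructor
        · rintro (h | h)
          · exact h
          · exact absurd h (not_lt.2 ht1)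
        · exact Or.inl
      have hA : MeasurableSet[m0] {a | t < Z a} := measurableSet_lt measurable_const hZmeas
      have hν1 : ν {a | t < Z a ⊔ 1} ≤ ENNReal.ofReal (Cα * t ^ (-α) * R) := by
        rw [hset, hνA _ hA]
        apply ENNReal.ofReal_le_ofReal
        have : ∫ ω in {a | t < Z a}, Y ω ∂μ =
            ∫ ω, Y ω * Set.indicator {ω' | t < Z ω'} (fun _ => (1:ℝ)) ω ∂μ := by
          rw [← integral_indicator hA]
          congr 1
          ext ω
          by_cases hω : ω ∈ {ω' | t < Z ω'} <;>
            simp [Set.indicator_of_mem, Set.indicator_of_notMem, hω]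
        rw [this]
        exact tail t ht1
      calc ν {a | t < Z a ⊔ 1} * ENNReal.ofReal (t ^ (γ - 1))
          ≤ ENNReal.ofReal (Cα * t ^ (-α) * R) * ENNReal.ofReal (t ^ (γ - 1)) := by gcongr
        _ = ENNReal.ofReal (Cα * R) * ENNReal.ofReal (t ^ (γ - 1 - α)) := by
            rw [← ENNReal.ofReal_mul (by positivity), ← ENNReal.ofReal_mul (by positivity)]
            congr 1
            rw [show γ - 1 - α = -α + (γ - 1) by ring, Real.rpow_add ht0]
            ring
    calc ∫⁻ t in Set.Ioi (1:ℝ), ν {a | t < Z a ⊔ 1} * ENNReal.ofReal (t ^ (γ - 1))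
        ≤ ∫⁻ t in Set.Ioi (1:ℝ), ENNReal.ofReal (Cα * R) * ENNReal.ofReal (t ^ (γ - 1 - α)) := by
          refine lintegral_mono_ae ?_
          filter_upwards [self_mem_ae_restrict (measurableSet_Ioi :
            MeasurableSet (Set.Ioi (1:ℝ)))] with t ht
          exact hb t ht
      _ = ENNReal.ofReal (Cα * R) * ENNReal.ofReal (1 / (α - γ)) := by
          rw [lintegral_const_mul' _ _ ENNReal.ofReal_ne_top, hI2]
  -- combine
  calc ENNReal.ofReal γ * ((∫⁻ t in Set.Ioc (0:ℝ) 1, ν {a | t < Z a ⊔ 1} * ENNReal.ofReal (t ^ (γ - 1)))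
        + ∫⁻ t in Set.Ioi (1:ℝ), ν {a | t < Z a ⊔ 1} * ENNReal.ofReal (t ^ (γ - 1)))
      ≤ ENNReal.ofReal γ * (ENNReal.ofReal R * ENNReal.ofReal (1 / γ)
        + ENNReal.ofReal (Cα * R) * ENNReal.ofReal (1 / (α - γ))) := by gcongr
    _ = ENNReal.ofReal (1 + γ * Cα / (α - γ)) * ENNReal.ofReal R := by
        rw [← ENNReal.ofReal_mul hR0, ← ENNReal.ofReal_mul (by positivity),
          ← ENNReal.ofReal_add (by positivity) (by positivity),
          ← ENNReal.ofReal_mul hγ.le, ← ENNReal.ofReal_mul (by positivity)]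
        congr 1
        field_simp

/-- Given a filtration `ℱ` and nonnegative `ℱ i`-measurable random variables `X i`
(`i ≥ 1`) with conditional tail bounds `P(X_{i+1} > x | ℱ i) ≤ C_α x^{-α}` for `x ≥ 1`, then for
every `0 < γ < α`, every `ε > 0` and every `k ≥ 1`,
`E[(ε^k Π_k)^γ] ≤ (ε (1 + γ C_α/(α-γ))^{1/γ})^{kγ}`, where `Π_k = ∏_{j=1}^k X_j`. -/
theorem stmt2 {Ω : Type*} {m0 : MeasurableSpace Ω} (μ : Measure Ω) [IsProbabilityMeasure μ]
    (ℱ : Filtration ℕ m0) (X : ℕ → Ω → ℝ)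
    (hXmeas : ∀ i : ℕ, StronglyMeasurable[ℱ (i + 1)] (X (i + 1)))
    (hX0 : ∀ (i : ℕ) (ω : Ω), 0 ≤ X (i + 1) ω)
    (Cα α : ℝ) (hCα : 0 < Cα) (hα : 0 < α)
    (hXtail : ∀ i : ℕ, ∀ x : ℝ, 1 ≤ x →
      ∀ᵐ ω ∂μ,
        (μ[Set.indicator {ω' | x < X (i + 1) ω'} (fun _ => (1 : ℝ)) | ℱ i]) ω ≤ Cα * x ^ (-α)) :
    ∀ γ : ℝ, 0 < γ → γ < α → ∀ ε : ℝ, 0 < ε → ∀ k : ℕ, 1 ≤ k →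
      ∫ ω, (ε ^ k * ∏ j ∈ Finset.Icc 1 k, X j ω) ^ γ ∂μ ≤
        (ε * (1 + γ * Cα / (α - γ)) ^ (1 / γ)) ^ ((k : ℝ) * γ) := by
  intro γ hγ hγα ε hε k _
  have hαγ : 0 < α - γ := by linarith
  set M : ℝ := 1 + γ * Cα / (α - γ) with hMdef
  have hM1 : 1 ≤ M := le_add_of_nonneg_right (by positivity)
  have hM0 : 0 < M := lt_of_lt_of_le one_pos hM1
  -- every X j (j ≥ 1) is nonneg
  have hX0' : ∀ j : ℕ, 1 ≤ j → ∀ ω, 0 ≤ X j ω := by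
    intro j hj ω
    obtain ⟨i, rfl⟩ := Nat.exists_eq_add_of_le hj
    simpa [Nat.add_comm] using hX0 i ω
  have hXm' : ∀ j : ℕ, 1 ≤ j → StronglyMeasurable[ℱ j] (X j) := by
    intro j hj
    obtain ⟨i, rfl⟩ := Nat.exists_eq_add_of_le hj
    rw [Nat.add_comm]; exact hXmeas i
  set Y : ℕ → Ω → ℝ := fun n ω => ∏ j ∈ Finset.Icc 1 n, (X j ω ⊔ 1) ^ γ with hYdef
  have hY0 : ∀ n ω, 0 ≤ Y n ω := fun n ω =>
    Finset.prod_nonneg fun j _ => Real.rpow_nonneg (le_trans zero_le_one le_sup_right) _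
  have hYmeas : ∀ n, StronglyMeasurable[ℱ n] (Y n) := by
    intro n
    refine Finset.stronglyMeasurable_fun_prod (m := ℱ n)
      (f := fun j ω => (X j ω ⊔ 1) ^ γ) (Finset.Icc 1 n) fun j hj => ?_
    obtain ⟨hj1, hjn⟩ := Finset.mem_Icc.mp hj
    have hXm : StronglyMeasurable[ℱ n] (X j) := (hXm' j hj1).mono (ℱ.mono hjn)
    have h1 : StronglyMeasurable[ℱ n] (fun ω => X j ω ⊔ 1) := by
      letI : MeasurableSpace Ω := ℱ n
      exact hXm.sup stronglyMeasurable_const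
    exact (Real.continuous_rpow_const hγ.le).comp_stronglyMeasurable h1
  have hrec : ∀ n, ∫⁻ ω, ENNReal.ofReal (Y n ω) ∂μ ≤ ENNReal.ofReal M ^ n := by
    intro n
    induction n with
    | zero => simp [hYdef]
    | succ n ih =>
      have hsplit : ∀ ω, ENNReal.ofReal (Y (n + 1) ω) =
          ENNReal.ofReal (Y n ω) * ENNReal.ofReal ((X (n + 1) ω ⊔ 1) ^ γ) := by
        intro ω
        rw [← ENNReal.ofReal_mul (hY0 n ω)]
        congr 1
        simp only [hYdef]
        rw [Finset.prod_Icc_succ_top (by omega : 1 ≤ n + 1)]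
      have hfin : ∫⁻ ω, ENNReal.ofReal (Y n ω) ∂μ ≠ ⊤ :=
        (lt_of_le_of_lt ih (ENNReal.pow_lt_top ENNReal.ofReal_lt_top)).ne
      have hYint : Integrable (Y n) μ := by
        constructor
        · exact ((hYmeas n).mono (ℱ.le n)).aestronglyMeasurable
        · rw [hasFiniteIntegral_iff_ofReal (Filter.Eventually.of_forall (hY0 n))]
          exact hfin.lt_top
      calc ∫⁻ ω, ENNReal.ofReal (Y (n + 1) ω) ∂μ
          = ∫⁻ ω, ENNReal.ofReal (Y n ω) * ENNReal.ofReal ((X (n + 1) ω ⊔ 1) ^ γ) ∂μ := by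
            simp_rw [hsplit]
        _ ≤ ENNReal.ofReal M * ∫⁻ ω, ENNReal.ofReal (Y n ω) ∂μ :=
            stmt2_aux μ (ℱ.le n) (X (n + 1))
              ((hXmeas n).mono (ℱ.le (n + 1))).measurable Cα α hCα hα (hXtail n)
              γ hγ hγα (Y n) (hYmeas n) (hY0 n) hYint
        _ ≤ ENNReal.ofReal M * ENNReal.ofReal M ^ n := by gcongr
        _ = ENNReal.ofReal M ^ (n + 1) := by rw [pow_succ]; ring
  -- pointwise bound
  have hbase : ∀ ω, 0 ≤ ε ^ k * ∏ j ∈ Finset.Icc 1 k, X j ω := by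
    intro ω
    refine mul_nonneg (by positivity) (Finset.prod_nonneg fun j hj => ?_)
    exact hX0' j (Finset.mem_Icc.mp hj).1 ω
  have hpoint : ∀ ω, (ε ^ k * ∏ j ∈ Finset.Icc 1 k, X j ω) ^ γ ≤ (ε ^ k) ^ γ * Y k ω := by
    intro ω
    have h2 : ε ^ k * ∏ j ∈ Finset.Icc 1 k, X j ω ≤
        ε ^ k * ∏ j ∈ Finset.Icc 1 k, (X j ω ⊔ 1) := by
      refine mul_le_mul_of_nonneg_left ?_ (by positivity)
      exact Finset.prod_le_prod (fun j hj => hX0' j (Finset.mem_Icc.mp hj).1 ω)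
        (fun j _ => le_sup_left)
    calc (ε ^ k * ∏ j ∈ Finset.Icc 1 k, X j ω) ^ γ
        ≤ (ε ^ k * ∏ j ∈ Finset.Icc 1 k, (X j ω ⊔ 1)) ^ γ :=
          Real.rpow_le_rpow (hbase ω) h2 hγ.le
      _ = (ε ^ k) ^ γ * Y k ω := by
          rw [Real.mul_rpow (by positivity)
            (Finset.prod_nonneg fun j _ => le_trans zero_le_one le_sup_right)]
          congr 1
          simp only [hYdef]
          exact (Real.finset_prod_rpow _ _ (fun j _ => le_trans zero_le_one le_sup_right) _).symm
  -- measurability of the integrand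
  have hmeasX : ∀ j ∈ Finset.Icc 1 k, Measurable (X j) := fun j hj =>
    ((hXm' j (Finset.mem_Icc.mp hj).1).mono (ℱ.le j)).measurable
  have hmeasI : Measurable fun ω => (ε ^ k * ∏ j ∈ Finset.Icc 1 k, X j ω) ^ γ := by
    apply (Real.continuous_rpow_const hγ.le).measurable.comp
    exact measurable_const.mul (Finset.measurable_prod _ hmeasX)
  have key : ∫⁻ ω, ENNReal.ofReal ((ε ^ k * ∏ j ∈ Finset.Icc 1 k, X j ω) ^ γ) ∂μ ≤
      ENNReal.ofReal ((ε ^ k) ^ γ * M ^ k) := by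
    calc ∫⁻ ω, ENNReal.ofReal ((ε ^ k * ∏ j ∈ Finset.Icc 1 k, X j ω) ^ γ) ∂μ
        ≤ ∫⁻ ω, ENNReal.ofReal ((ε ^ k) ^ γ) * ENNReal.ofReal (Y k ω) ∂μ := by
          refine lintegral_mono fun ω => ?_
          rw [← ENNReal.ofReal_mul (by positivity)]
          exact ENNReal.ofReal_le_ofReal (hpoint ω)
      _ = ENNReal.ofReal ((ε ^ k) ^ γ) * ∫⁻ ω, ENNReal.ofReal (Y k ω) ∂μ :=
          lintegral_const_mul' _ _ ENNReal.ofReal_ne_top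
      _ ≤ ENNReal.ofReal ((ε ^ k) ^ γ) * ENNReal.ofReal M ^ k := by
          gcongr
          exact hrec k
      _ = ENNReal.ofReal ((ε ^ k) ^ γ * M ^ k) := by
          rw [← ENNReal.ofReal_pow hM0.le, ← ENNReal.ofReal_mul (by positivity)]
  have hint : ∫ ω, (ε ^ k * ∏ j ∈ Finset.Icc 1 k, X j ω) ^ γ ∂μ =
      (∫⁻ ω, ENNReal.ofReal ((ε ^ k * ∏ j ∈ Finset.Icc 1 k, X j ω) ^ γ) ∂μ).toReal :=
    integral_eq_lintegral_of_nonneg_ae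
      (Filter.Eventually.of_forall fun ω => Real.rpow_nonneg (hbase ω) _)
      hmeasI.aestronglyMeasurable
  have hfinal : (ε * M ^ (1 / γ)) ^ ((k : ℝ) * γ) = (ε ^ k) ^ γ * M ^ k := by
    rw [Real.mul_rpow hε.le (Real.rpow_nonneg hM0.le _),
      ← Real.rpow_natCast ε k, ← Real.rpow_mul hε.le,
      ← Real.rpow_mul hM0.le, show 1 / γ * ((k : ℝ) * γ) = (k : ℝ) by field_simp,
      Real.rpow_natCast]
  rw [hint, hfinal]
  exact ENNReal.toReal_le_of_le_ofReal (by positivity) key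
end

section
/- Suppose there are constants C_α, C_β > 0 and α, β > 0 such that for every i ≥ 0, every real x ≥ 1 and every real t ≥ 1 one has, almost surely, P(X_{i+1} > x | 𝓕_i) ≤ C_α x^{-α} and P(τ_{i+1} > t | 𝓕_i) ≤ C_β t^{-β}. Fix γ with 0 < γ < min(α, β) and let ε₀ > 0 be determined by ε₀ (1 + γ C_α/(α−γ))^{1/γ} = 4^{-β/γ}. Then there is a constant C' > 0 depending only on β and C_β such that for all t ≥ 1, P( Σ_{k=0}^∞ ε₀^k Π_k τ_{k+1} > t · Σ_{k=0}^∞ 2^{-k} (ε₀^k Π_k)^{1−γ/β} ) ≤ C' t^{-β}, where by convention the event fails on the set where the right-hand series is infinite. -/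
open MeasureTheory

open ENNReal Set


lemma lemA {Ω : Type*} {m : MeasurableSpace Ω} [m0 : MeasurableSpace Ω] (hm : m ≤ m0) (μ : Measure Ω)
    {B : Set Ω} {c : ℝ≥0∞}
    (h : ∀ A : Set Ω, MeasurableSet[m] A → μ (A ∩ B) ≤ c * μ A)
    {f : Ω → ℝ≥0∞} (hf : Measurable[m] f) :
    ∫⁻ ω in B, f ω ∂μ ≤ c * ∫⁻ ω, f ω ∂μ := by
  have hle : (μ.restrict B).trim hm ≤ c • μ.trim hm := by
    refine Measure.le_iff.2 fun s hs => ?_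
    rw [trim_measurableSet_eq hm hs, Measure.smul_apply, trim_measurableSet_eq hm hs,
      Measure.restrict_apply (hm s hs)]
    exact (h s hs).trans (by rw [smul_eq_mul])
  calc ∫⁻ ω in B, f ω ∂μ = ∫⁻ ω, f ω ∂((μ.restrict B).trim hm) := (lintegral_trim hm hf).symm
    _ ≤ ∫⁻ ω, f ω ∂(c • μ.trim hm) := lintegral_mono' hle le_rfl
    _ = c * ∫⁻ ω, f ω ∂(μ.trim hm) := lintegral_smul_measure c f
    _ = c * ∫⁻ ω, f ω ∂μ := by rw [lintegral_trim hm hf]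

lemma lemSet {Ω : Type*} {m : MeasurableSpace Ω} [m0 : MeasurableSpace Ω] (hm : m ≤ m0)
    (μ : Measure Ω) [IsProbabilityMeasure μ] {B : Set Ω} (hB : MeasurableSet B) {c : ℝ}
    (hc : 0 ≤ c)
    (h : ∀ᵐ ω ∂μ, (μ[Set.indicator B (fun _ => (1 : ℝ)) | m]) ω ≤ c) :
    ∀ A : Set Ω, MeasurableSet[m] A → μ (A ∩ B) ≤ ENNReal.ofReal c * μ A := by
  intro A hA
  have hint : Integrable (B.indicator fun _ => (1 : ℝ)) μ := (integrable_const 1).indicator hB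
  have h1 : ∫ ω in A, B.indicator (fun _ => (1 : ℝ)) ω ∂μ = (μ (A ∩ B)).toReal := by
    rw [setIntegral_indicator hB]
    simp
    rfl
  have h2 : ∫ ω in A, (μ[B.indicator (fun _ => (1 : ℝ)) | m]) ω ∂μ
      = ∫ ω in A, B.indicator (fun _ => (1 : ℝ)) ω ∂μ := setIntegral_condExp hm hint hA
  have h3 : ∫ ω in A, (μ[B.indicator (fun _ => (1 : ℝ)) | m]) ω ∂μ ≤ ∫ _ in A, c ∂μ := by
    refine integral_mono_ae integrable_condExp.restrict (integrable_const c)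
      (ae_restrict_of_ae h)
  have h4 : (μ (A ∩ B)).toReal ≤ c * (μ A).toReal := by
    rw [← h1, ← h2]
    simpa [setIntegral_const, smul_eq_mul, mul_comm, measureReal_def] using h3
  calc μ (A ∩ B) = ENNReal.ofReal ((μ (A ∩ B)).toReal) := (ENNReal.ofReal_toReal (measure_ne_top _ _)).symm
    _ ≤ ENNReal.ofReal (c * (μ A).toReal) := ENNReal.ofReal_le_ofReal h4
    _ = ENNReal.ofReal c * ENNReal.ofReal ((μ A).toReal) := ENNReal.ofReal_mul hc
    _ = ENNReal.ofReal c * μ A := by rw [ENNReal.ofReal_toReal (measure_ne_top _ _)]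

lemma lemMoment {Ω : Type*} {m : MeasurableSpace Ω} [m0 : MeasurableSpace Ω] (hm : m ≤ m0)
    (μ : Measure Ω) [IsProbabilityMeasure μ]
    {Z : Ω → ℝ} (hZ : Measurable Z) (hZ0 : ∀ ω, 0 ≤ Z ω)
    {Cα α γ : ℝ} (hCα : 0 < Cα) (hγ0 : 0 < γ) (hγα : γ < α)
    (htail : ∀ x : ℝ, 1 ≤ x → ∀ A : Set Ω, MeasurableSet[m] A →
      μ (A ∩ {ω | x < Z ω}) ≤ ENNReal.ofReal (Cα * x ^ (-α)) * μ A)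
    {f : Ω → ℝ≥0∞} (hf : Measurable[m] f) :
    ∫⁻ ω, f ω * ENNReal.ofReal (Z ω ^ γ) ∂μ
      ≤ ENNReal.ofReal (1 + γ * Cα / (α - γ)) * ∫⁻ ω, f ω ∂μ := by
  have hfm0 : Measurable f := hf.mono hm le_rfl
  set g : ℝ → ℝ≥0∞ := fun x => ENNReal.ofReal (γ * x ^ (γ - 1)) with hg
  have hgmeas : Measurable g := by
    exact (measurable_const.mul (measurable_id.pow_const (γ - 1))).ennreal_ofReal
  set S : Set (Ω × ℝ) := {p | p.2 < Z p.1} with hS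
  have hSmeas : MeasurableSet S := measurableSet_lt measurable_snd (hZ.comp measurable_fst)
  set F : Ω → ℝ → ℝ≥0∞ := fun ω x => S.indicator (fun q => g q.2) (ω, x) with hF
  have hFeq : ∀ ω, (fun x => F ω x) = (Iio (Z ω)).indicator g := by
    intro ω; funext x
    simp only [hF, Set.indicator_apply, hS, Set.mem_setOf_eq, Set.mem_Iio]
  -- pointwise layer-cake bound
  have hpt : ∀ ω, ENNReal.ofReal (Z ω ^ γ) ≤ 1 + ∫⁻ x in Ioi (1 : ℝ), F ω x := by
    intro ω
    set z := Z ω with hz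
    have hz0 : 0 ≤ z := hZ0 ω
    have hinner : ∫⁻ x in Ioi (1 : ℝ), F ω x = ∫⁻ x in Ioo (1 : ℝ) z, g x := by
      rw [hFeq ω, lintegral_indicator measurableSet_Iio, Measure.restrict_restrict
        measurableSet_Iio, Set.inter_comm, Set.Ioi_inter_Iio]
    rcases le_or_gt z 1 with hz1 | hz1
    · calc ENNReal.ofReal (z ^ γ) ≤ 1 := by
            rw [← ENNReal.ofReal_one]
            exact ENNReal.ofReal_le_ofReal (Real.rpow_le_one hz0 hz1 hγ0.le)
        _ ≤ 1 + ∫⁻ x in Ioi (1 : ℝ), F ω x := le_self_add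
    · have hint : IntegrableOn (fun x : ℝ => γ * x ^ (γ - 1)) (Ioo 1 z) := by
        refine (IntegrableOn.mono_set ?_ Set.Ioo_subset_Ioc_self).const_mul γ
        have hri : IntervalIntegrable (fun x : ℝ => x ^ (γ - 1)) volume 1 z :=
          intervalIntegral.intervalIntegrable_rpow (Or.inr (by
            rw [Set.uIcc_of_le hz1.le]
            exact fun h => absurd h.1 (by norm_num)))
        exact (intervalIntegrable_iff_integrableOn_Ioc_of_le hz1.le).1 hri
      have hval : ∫ x in Ioo (1 : ℝ) z, γ * x ^ (γ - 1) = z ^ γ - 1 := by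
        rw [← integral_Ioc_eq_integral_Ioo, ← intervalIntegral.integral_of_le hz1.le,
          intervalIntegral.integral_const_mul, integral_rpow (Or.inl (by linarith))]
        have : γ - 1 + 1 = γ := by ring
        rw [this, Real.one_rpow]
        field_simp
      have : ∫⁻ x in Ioo (1 : ℝ) z, g x = ENNReal.ofReal (z ^ γ - 1) := by
        rw [hg, ← ofReal_integral_eq_lintegral_ofReal hint ?_, hval]
        · refine (ae_restrict_iff' measurableSet_Ioo).2 (ae_of_all _ fun x hx => ?_)
          have hx0 : (0 : ℝ) < x := lt_trans one_pos hx.1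
          positivity
      rw [hinner, this, ← ENNReal.ofReal_one, ← ENNReal.ofReal_add (by norm_num)
        (by nlinarith [Real.one_le_rpow hz1.le hγ0.le])]
      norm_num
  -- measurability of the product integrand
  have hindmeas : Measurable fun p : Ω × ℝ => S.indicator (fun q => g q.2) p :=
    (hgmeas.comp measurable_snd).indicator hSmeas
  have hFmeas : Measurable (Function.uncurry fun ω x => f ω * F ω x) :=
    (hfm0.comp measurable_fst).mul hindmeas
  have hZsetmeas : ∀ x : ℝ, MeasurableSet {ω' | x < Z ω'} := fun x =>
    measurableSet_lt measurable_const hZ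
  have key : ∫⁻ ω, f ω * ENNReal.ofReal (Z ω ^ γ) ∂μ
      ≤ (∫⁻ ω, f ω ∂μ) + ∫⁻ x in Ioi (1 : ℝ), ∫⁻ ω, f ω * F ω x ∂μ := by
    calc ∫⁻ ω, f ω * ENNReal.ofReal (Z ω ^ γ) ∂μ
        ≤ ∫⁻ ω, f ω * (1 + ∫⁻ x in Ioi (1 : ℝ), F ω x) ∂μ :=
          lintegral_mono fun ω => mul_le_mul_right (hpt ω) _
      _ = ∫⁻ ω, (f ω + f ω * ∫⁻ x in Ioi (1 : ℝ), F ω x) ∂μ := by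
          simp only [mul_add, mul_one]
      _ = (∫⁻ ω, f ω ∂μ) + ∫⁻ ω, (f ω * ∫⁻ x in Ioi (1 : ℝ), F ω x) ∂μ :=
          lintegral_add_left hfm0 _
      _ = (∫⁻ ω, f ω ∂μ) + ∫⁻ ω, (∫⁻ x in Ioi (1 : ℝ), f ω * F ω x) ∂μ := by
          congr 1
          refine lintegral_congr fun ω => ?_
          have hmx : Measurable fun x => F ω x := by
            rw [hFeq ω]; exact hgmeas.indicator measurableSet_Iio
          exact (lintegral_const_mul (f ω) hmx).symm
      _ = (∫⁻ ω, f ω ∂μ) + ∫⁻ x in Ioi (1 : ℝ), ∫⁻ ω, f ω * F ω x ∂μ := by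
          congr 1
          exact lintegral_lintegral_swap hFmeas.aemeasurable
  have hx_bound : ∀ x ∈ Ioi (1 : ℝ), ∫⁻ ω, f ω * F ω x ∂μ
      ≤ ENNReal.ofReal (γ * Cα * x ^ (γ - α - 1)) * ∫⁻ ω, f ω ∂μ := by
    intro x hx
    have hx1 : (1 : ℝ) ≤ x := le_of_lt hx
    have hx0 : (0 : ℝ) < x := lt_of_lt_of_le one_pos hx1
    have hfx : ∀ ω, f ω * F ω x = g x * ({ω' | x < Z ω'}.indicator f ω) := by
      intro ω
      by_cases h : x < Z ω
      · simp only [hF, Set.indicator_apply, hS, Set.mem_setOf_eq, h, if_true]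
        exact mul_comm _ _
      · simp [hF, Set.indicator_apply, hS, Set.mem_setOf_eq, h]
    calc ∫⁻ ω, f ω * F ω x ∂μ
        = g x * ∫⁻ ω, ({ω' | x < Z ω'}.indicator f) ω ∂μ := by
          simp_rw [hfx]
          exact lintegral_const_mul _ (hfm0.indicator (hZsetmeas x))
      _ = g x * ∫⁻ ω in {ω' | x < Z ω'}, f ω ∂μ := by
          rw [lintegral_indicator (hZsetmeas x)]
      _ ≤ g x * (ENNReal.ofReal (Cα * x ^ (-α)) * ∫⁻ ω, f ω ∂μ) :=
          mul_le_mul_right (lemA hm μ (htail x hx1) hf) _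
      _ = ENNReal.ofReal (γ * Cα * x ^ (γ - α - 1)) * ∫⁻ ω, f ω ∂μ := by
          rw [hg, ← mul_assoc, ← ENNReal.ofReal_mul (by positivity)]
          congr 2
          rw [mul_mul_mul_comm, ← Real.rpow_add hx0]
          have h2 : γ - 1 + -α = γ - α - 1 := by ring
          rw [h2]
  have hαγ : (0 : ℝ) < α - γ := by linarith
  have hxint : ∫⁻ x in Ioi (1 : ℝ), ENNReal.ofReal (γ * Cα * x ^ (γ - α - 1))
      = ENNReal.ofReal (γ * Cα / (α - γ)) := by
    have hlt : γ - α - 1 < -1 := by linarith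
    have hint2 : IntegrableOn (fun x : ℝ => γ * Cα * x ^ (γ - α - 1)) (Ioi 1) :=
      (integrableOn_Ioi_rpow_of_lt hlt one_pos).const_mul _
    rw [← ofReal_integral_eq_lintegral_ofReal hint2 ?_]
    · congr 1
      rw [integral_const_mul, integral_Ioi_rpow_of_lt hlt one_pos]
      have h3 : γ - α - 1 + 1 = γ - α := by ring
      rw [h3, Real.one_rpow]
      have hne : γ - α ≠ 0 := by linarith
      field_simp
      ring
    · refine (ae_restrict_iff' measurableSet_Ioi).2 (ae_of_all _ fun x hx => ?_)
      have hx0 : (0 : ℝ) < x := lt_trans one_pos hx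
      positivity
  have hgcmeas : Measurable fun x : ℝ => ENNReal.ofReal (γ * Cα * x ^ (γ - α - 1)) :=
    (measurable_const.mul (measurable_id.pow_const _)).ennreal_ofReal
  calc ∫⁻ ω, f ω * ENNReal.ofReal (Z ω ^ γ) ∂μ
      ≤ (∫⁻ ω, f ω ∂μ) + ∫⁻ x in Ioi (1 : ℝ), ∫⁻ ω, f ω * F ω x ∂μ := key
    _ ≤ (∫⁻ ω, f ω ∂μ) +
        ∫⁻ x in Ioi (1 : ℝ), ENNReal.ofReal (γ * Cα * x ^ (γ - α - 1)) * ∫⁻ ω, f ω ∂μ :=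
        add_le_add_right (setLIntegral_mono (hgcmeas.mul_const _) hx_bound) _
    _ = (∫⁻ ω, f ω ∂μ) + ENNReal.ofReal (γ * Cα / (α - γ)) * ∫⁻ ω, f ω ∂μ := by
        rw [lintegral_mul_const _ hgcmeas, hxint, mul_comm]
    _ = ENNReal.ofReal (1 + γ * Cα / (α - γ)) * ∫⁻ ω, f ω ∂μ := by
        rw [ENNReal.ofReal_add (by norm_num) (by positivity), add_mul,
          ENNReal.ofReal_one, one_mul]

lemma lemDyadic {Ω : Type*} {m : MeasurableSpace Ω} [m0 : MeasurableSpace Ω] (hm : m ≤ m0)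
    (μ : Measure Ω) [IsProbabilityMeasure μ]
    {T Y : Ω → ℝ} (hT : Measurable T) (hY : Measurable[m] Y) (hY0 : ∀ ω, 0 ≤ Y ω)
    {Cβ β : ℝ} (hCβ : 0 < Cβ) (hβ : 0 < β)
    (htail : ∀ x : ℝ, 1 ≤ x → ∀ A : Set Ω, MeasurableSet[m] A →
      μ (A ∩ {ω | x < T ω}) ≤ ENNReal.ofReal (Cβ * x ^ (-β)) * μ A)
    {c : ℝ} (hc : 0 < c) :
    μ {ω | c < T ω * Y ω} ≤ ENNReal.ofReal ((1 + Cβ) * 2 ^ β * c ^ (-β)) *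
      ∫⁻ ω, ENNReal.ofReal (Y ω ^ β) ∂μ := by
  have hYm0 : Measurable Y := hY.mono hm le_rfl
  have hfmeas : Measurable fun ω => ENNReal.ofReal (Y ω ^ β) :=
    (hYm0.pow_const β).ennreal_ofReal
  set I := ∫⁻ ω, ENNReal.ofReal (Y ω ^ β) ∂μ with hI
  set A : ℤ → Set Ω := fun n => {ω | (2 : ℝ) ^ n ≤ Y ω ∧ Y ω < (2 : ℝ) ^ (n + 1)} with hA
  have hAm : ∀ n : ℤ, MeasurableSet[m] (A n) := by
    intro n
    exact (hY measurableSet_Ici).inter (hY measurableSet_Iio)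
  have hAm0 : ∀ n : ℤ, MeasurableSet (A n) := fun n => hm _ (hAm n)
  set B : ℤ → Set Ω := fun n =>
    if 1 ≤ c * ((2 : ℝ) ^ (n + 1))⁻¹ then A n ∩ {ω | c * ((2 : ℝ) ^ (n + 1))⁻¹ < T ω}
    else ∅ with hB
  -- covering
  have hcover : {ω | c < T ω * Y ω} ⊆ {ω | c / 2 < Y ω} ∪ ⋃ n : ℤ, B n := by
    intro ω hω
    simp only [Set.mem_setOf_eq] at hω
    by_cases h2 : c / 2 < Y ω
    · exact Or.inl h2
    push_neg at h2
    right
    have hYpos : 0 < Y ω := by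
      rcases lt_or_eq_of_le (hY0 ω) with h | h
      · exact h
      · exfalso; rw [← h, mul_zero] at hω; exact absurd hω (not_lt_of_ge hc.le)
    set n := Int.log 2 (Y ω) with hn
    have h1 : (2 : ℝ) ^ n ≤ Y ω := by
      have := Int.zpow_log_le_self (b := 2) (by norm_num) hYpos
      simpa using this
    have h2' : Y ω < (2 : ℝ) ^ (n + 1) := by
      have := Int.lt_zpow_succ_log_self (b := 2) (by norm_num) (Y ω)
      simpa using this
    have hpow : (0 : ℝ) < (2 : ℝ) ^ (n + 1) := zpow_pos (by norm_num) _
    have hle : (2 : ℝ) ^ (n + 1) ≤ c := by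
      have : (2 : ℝ) ^ (n + 1) = 2 * (2 : ℝ) ^ n := by
        rw [zpow_add_one₀ (by norm_num : (2:ℝ) ≠ 0)]; ring
      rw [this]
      nlinarith
    have hx1 : 1 ≤ c * ((2 : ℝ) ^ (n + 1))⁻¹ := by
      rw [← div_eq_mul_inv, le_div_iff₀ hpow, one_mul]; exact hle
    have hTω : c * ((2 : ℝ) ^ (n + 1))⁻¹ < T ω := by
      have hT1 : c / Y ω < T ω := by
        rw [div_lt_iff₀ hYpos]; linarith [hω]
      have hT2 : c * ((2 : ℝ) ^ (n + 1))⁻¹ < c / Y ω := by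
        rw [← div_eq_mul_inv]
        exact div_lt_div_of_pos_left hc hYpos h2'
      linarith
    refine Set.mem_iUnion.2 ⟨n, ?_⟩
    rw [hB]
    simp only [if_pos hx1]
    exact ⟨⟨h1, h2'⟩, hTω⟩
  -- Markov part
  have hM : μ {ω | c / 2 < Y ω} ≤ ENNReal.ofReal ((c / 2) ^ (-β)) * I := by
    have hc2 : (0 : ℝ) < c / 2 := by linarith
    have hεpos : (0 : ℝ) < (c / 2) ^ β := Real.rpow_pos_of_pos hc2 β
    have hsub : {ω | c / 2 < Y ω} ⊆
        {ω | ENNReal.ofReal ((c / 2) ^ β) ≤ ENNReal.ofReal (Y ω ^ β)} := by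
      intro ω hω
      exact ENNReal.ofReal_le_ofReal
        (Real.rpow_le_rpow hc2.le (le_of_lt hω) hβ.le)
    calc μ {ω | c / 2 < Y ω} ≤ μ {ω | ENNReal.ofReal ((c / 2) ^ β) ≤ ENNReal.ofReal (Y ω ^ β)} :=
          measure_mono hsub
      _ ≤ I / ENNReal.ofReal ((c / 2) ^ β) :=
          meas_ge_le_lintegral_div hfmeas.aemeasurable
            (by simp [ENNReal.ofReal_eq_zero, not_le, hεpos]) ENNReal.ofReal_ne_top
      _ = ENNReal.ofReal ((c / 2) ^ (-β)) * I := by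
          rw [ENNReal.div_eq_inv_mul, ← ENNReal.ofReal_inv_of_pos hεpos,
            ← Real.rpow_neg hc2.le]
  -- per-slice bound
  have hBn : ∀ n : ℤ, μ (B n) ≤ ENNReal.ofReal (Cβ * 2 ^ β * c ^ (-β)) *
      ∫⁻ ω in A n, ENNReal.ofReal (Y ω ^ β) ∂μ := by
    intro n
    rw [hB]
    by_cases hx1 : 1 ≤ c * ((2 : ℝ) ^ (n + 1))⁻¹
    · simp only [if_pos hx1]
      set x := c * ((2 : ℝ) ^ (n + 1))⁻¹ with hx
      have hpow : (0 : ℝ) < (2 : ℝ) ^ (n + 1) := zpow_pos (by norm_num) _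
      have hpn : (0 : ℝ) < (2 : ℝ) ^ n := zpow_pos (by norm_num) _
      have h1 : μ (A n ∩ {ω | x < T ω}) ≤ ENNReal.ofReal (Cβ * x ^ (-β)) * μ (A n) :=
        htail x hx1 (A n) (hAm n)
      have e1 : (((2 : ℝ) ^ (n + 1))⁻¹) ^ (-β) = ((2 : ℝ) ^ (n + 1)) ^ β := by
        rw [Real.inv_rpow hpow.le, Real.rpow_neg hpow.le, inv_inv]
      have e2 : ((2 : ℝ) ^ (n + 1)) ^ β = ((2 : ℝ) ^ n) ^ β * 2 ^ β := by
        rw [zpow_add_one₀ (two_ne_zero), Real.mul_rpow hpn.le (by norm_num)]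
      have hxval : Cβ * x ^ (-β) = (Cβ * 2 ^ β * c ^ (-β)) * ((2 : ℝ) ^ n) ^ β := by
        rw [hx, Real.mul_rpow hc.le (inv_nonneg.2 hpow.le), e1, e2]
        ring
      calc μ (A n ∩ {ω | x < T ω}) ≤ ENNReal.ofReal (Cβ * x ^ (-β)) * μ (A n) := h1
        _ = ENNReal.ofReal (Cβ * 2 ^ β * c ^ (-β)) * (ENNReal.ofReal (((2 : ℝ) ^ n) ^ β) * μ (A n)) := by
            rw [hxval, ENNReal.ofReal_mul (by positivity), mul_assoc]
        _ ≤ ENNReal.ofReal (Cβ * 2 ^ β * c ^ (-β)) * ∫⁻ ω in A n, ENNReal.ofReal (Y ω ^ β) ∂μ := by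
            refine mul_le_mul_right ?_ _
            calc ENNReal.ofReal (((2 : ℝ) ^ n) ^ β) * μ (A n)
                = ∫⁻ _ in A n, ENNReal.ofReal (((2 : ℝ) ^ n) ^ β) ∂μ := (setLIntegral_const _ _).symm
              _ ≤ ∫⁻ ω in A n, ENNReal.ofReal (Y ω ^ β) ∂μ :=
                  setLIntegral_mono hfmeas fun ω hω =>
                    ENNReal.ofReal_le_ofReal (Real.rpow_le_rpow hpn.le hω.1 hβ.le)
    · simp only [if_neg hx1, measure_empty]
      exact zero_le
  -- disjointness and sum
  have hdisj : Pairwise (Function.onFun Disjoint A) := by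
    have key : ∀ i j : ℤ, i < j → Disjoint (A i) (A j) := by
      intro i j hij
      refine Set.disjoint_left.2 fun ω h1 h2 => ?_
      have hle : (2 : ℝ) ^ (i + 1) ≤ (2 : ℝ) ^ j :=
        zpow_le_zpow_right₀ (by norm_num) (by omega)
      have := h1.2
      have := h2.1
      linarith
    intro i j hij
    rcases lt_or_gt_of_ne hij with h | h
    · exact key i j h
    · exact (key j i h).symm
  have hsum : ∑' n : ℤ, ∫⁻ ω in A n, ENNReal.ofReal (Y ω ^ β) ∂μ ≤ I := by
    rw [← lintegral_iUnion hAm0 hdisj]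
    exact setLIntegral_le_lintegral _ _
  have hc2rpow : (c / 2 : ℝ) ^ (-β) = 2 ^ β * c ^ (-β) := by
    rw [div_eq_mul_inv, Real.mul_rpow hc.le (by norm_num),
      Real.inv_rpow (by norm_num : (0:ℝ) ≤ 2), Real.rpow_neg (by norm_num : (0:ℝ) ≤ 2), inv_inv]
    ring
  calc μ {ω | c < T ω * Y ω} ≤ μ ({ω | c / 2 < Y ω} ∪ ⋃ n : ℤ, B n) := measure_mono hcover
    _ ≤ μ {ω | c / 2 < Y ω} + μ (⋃ n : ℤ, B n) := measure_union_le _ _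
    _ ≤ ENNReal.ofReal ((c / 2) ^ (-β)) * I + ∑' n : ℤ, μ (B n) :=
        add_le_add hM (measure_iUnion_le _)
    _ ≤ ENNReal.ofReal ((c / 2) ^ (-β)) * I + ENNReal.ofReal (Cβ * 2 ^ β * c ^ (-β)) * I := by
        refine add_le_add_right ?_ _
        calc ∑' n : ℤ, μ (B n)
            ≤ ∑' n : ℤ, ENNReal.ofReal (Cβ * 2 ^ β * c ^ (-β)) *
                ∫⁻ ω in A n, ENNReal.ofReal (Y ω ^ β) ∂μ := ENNReal.tsum_le_tsum hBn
          _ = ENNReal.ofReal (Cβ * 2 ^ β * c ^ (-β)) *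
                ∑' n : ℤ, ∫⁻ ω in A n, ENNReal.ofReal (Y ω ^ β) ∂μ := ENNReal.tsum_mul_left
          _ ≤ _ := mul_le_mul_right hsum _
    _ = ENNReal.ofReal ((1 + Cβ) * 2 ^ β * c ^ (-β)) * I := by
        rw [← add_mul]
        congr 1
        rw [← ENNReal.ofReal_add (by positivity) (by positivity), hc2rpow]
        congr 1
        ring

/-- With the conditional tail bounds of Lemma 2.4 for `X_i` and `τ_i`, fix
`0 < γ < min α β` and let `ε₀ > 0` satisfy `ε₀ (1 + γ C_α/(α-γ))^{1/γ} = 4^{-β/γ}`.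
Then there is `C' > 0` (depending only on `β` and `C_β`) such that for `t ≥ 1`,
`P( Σ_{k=0}^∞ ε₀^k Π_k τ_{k+1} > t Σ_{k=0}^∞ 2^{-k}(ε₀^k Π_k)^{1-γ/β} ) ≤ C' t^{-β}`,
with the event failing wherever the right-hand series is infinite (both series are
formalized in `ℝ≥0∞`, where `t · ∞ = ∞` makes the strict inequality false). -/
theorem stmt3 {Ω : Type*} {m0 : MeasurableSpace Ω} (μ : Measure Ω) [IsProbabilityMeasure μ]
    (ℱ : Filtration ℕ m0) (X τ : ℕ → Ω → ℝ)
    (hXmeas : ∀ i : ℕ, StronglyMeasurable[ℱ (i + 1)] (X (i + 1)))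
    (hτmeas : ∀ i : ℕ, StronglyMeasurable[ℱ (i + 1)] (τ (i + 1)))
    (hX0 : ∀ (i : ℕ) (ω : Ω), 0 ≤ X (i + 1) ω)
    (hτ0 : ∀ (i : ℕ) (ω : Ω), 0 ≤ τ (i + 1) ω)
    (Cα Cβ α β : ℝ) (hCα : 0 < Cα) (hCβ : 0 < Cβ) (hα : 0 < α) (hβ : 0 < β)
    (hXtail : ∀ i : ℕ, ∀ x : ℝ, 1 ≤ x →
      ∀ᵐ ω ∂μ,
        (μ[Set.indicator {ω' | x < X (i + 1) ω'} (fun _ => (1 : ℝ)) | ℱ i]) ω ≤ Cα * x ^ (-α))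
    (hτtail : ∀ i : ℕ, ∀ t : ℝ, 1 ≤ t →
      ∀ᵐ ω ∂μ,
        (μ[Set.indicator {ω' | t < τ (i + 1) ω'} (fun _ => (1 : ℝ)) | ℱ i]) ω ≤ Cβ * t ^ (-β))
    (γ : ℝ) (hγ0 : 0 < γ) (hγ : γ < min α β)
    (ε₀ : ℝ) (hε₀pos : 0 < ε₀)
    (hε₀ : ε₀ * (1 + γ * Cα / (α - γ)) ^ (1 / γ) = (4 : ℝ) ^ (-β / γ)) :
    ∃ C' > (0 : ℝ), ∀ t : ℝ, 1 ≤ t →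
      μ {ω |
          ENNReal.ofReal t *
              ∑' k : ℕ,
                ENNReal.ofReal
                  ((1 / 2 : ℝ) ^ k *
                    (ε₀ ^ k * ∏ j ∈ Finset.Icc 1 k, X j ω) ^ (1 - γ / β)) <
            ∑' k : ℕ,
              ENNReal.ofReal (ε₀ ^ k * (∏ j ∈ Finset.Icc 1 k, X j ω) * τ (k + 1) ω)}
        ≤ ENNReal.ofReal (C' * t ^ (-β)) := by
  have hγα : γ < α := lt_of_lt_of_le hγ (min_le_left _ _)
  have hγβ : γ < β := lt_of_lt_of_le hγ (min_le_right _ _)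
  have hαγ : (0 : ℝ) < α - γ := by linarith
  set D : ℝ := 1 + γ * Cα / (α - γ) with hDdef
  have hDaux : 0 < γ * Cα / (α - γ) := by positivity
  have hD0 : (0 : ℝ) < D := by rw [hDdef]; linarith
  have hεD : ε₀ ^ γ * D = (4 : ℝ) ^ (-β) := by
    have h := congrArg (fun y : ℝ => y ^ γ) hε₀
    rw [Real.mul_rpow hε₀pos.le (Real.rpow_nonneg hD0.le _), ← Real.rpow_mul hD0.le,
      one_div, inv_mul_cancel₀ hγ0.ne', Real.rpow_one,
      ← Real.rpow_mul (by norm_num : (0:ℝ) ≤ 4), div_mul_cancel₀ _ hγ0.ne'] at h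
    exact h
  -- measurability facts
  have hXm : ∀ i : ℕ, Measurable (X (i + 1)) := fun i =>
    ((hXmeas i).measurable).mono (ℱ.le _) le_rfl
  have hτm : ∀ i : ℕ, Measurable (τ (i + 1)) := fun i =>
    ((hτmeas i).measurable).mono (ℱ.le _) le_rfl
  have hPm : ∀ k : ℕ, Measurable[ℱ k] fun ω => ∏ j ∈ Finset.Icc 1 k, X j ω := by
    intro k
    refine Finset.measurable_prod _ fun j hj => ?_
    obtain ⟨hj1, hjk⟩ := Finset.mem_Icc.1 hj
    obtain ⟨i, rfl⟩ : ∃ i, j = i + 1 := ⟨j - 1, by omega⟩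
    exact ((hXmeas i).measurable).mono (ℱ.mono hjk) le_rfl
  have hP0 : ∀ (k : ℕ) (ω : Ω), 0 ≤ ∏ j ∈ Finset.Icc 1 k, X j ω := by
    intro k ω
    refine Finset.prod_nonneg fun j hj => ?_
    obtain ⟨hj1, hjk⟩ := Finset.mem_Icc.1 hj
    obtain ⟨i, rfl⟩ : ∃ i, j = i + 1 := ⟨j - 1, by omega⟩
    exact hX0 i ω
  have hznn : ∀ (k : ℕ) (ω : Ω), 0 ≤ ε₀ ^ k * ∏ j ∈ Finset.Icc 1 k, X j ω := fun k ω =>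
    mul_nonneg (pow_nonneg hε₀pos.le k) (hP0 k ω)
  have hXset : ∀ (i : ℕ) (x : ℝ), 1 ≤ x → ∀ A : Set Ω, MeasurableSet[ℱ i] A →
      μ (A ∩ {ω | x < X (i + 1) ω}) ≤ ENNReal.ofReal (Cα * x ^ (-α)) * μ A := by
    intro i x hx
    have hx0 : (0 : ℝ) < x := lt_of_lt_of_le one_pos hx
    exact lemSet (ℱ.le i) μ (measurableSet_lt measurable_const (hXm i))
      (by positivity) (hXtail i x hx)
  have hτset : ∀ (i : ℕ) (x : ℝ), 1 ≤ x → ∀ A : Set Ω, MeasurableSet[ℱ i] A →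
      μ (A ∩ {ω | x < τ (i + 1) ω}) ≤ ENNReal.ofReal (Cβ * x ^ (-β)) * μ A := by
    intro i x hx
    have hx0 : (0 : ℝ) < x := lt_of_lt_of_le one_pos hx
    exact lemSet (ℱ.le i) μ (measurableSet_lt measurable_const (hτm i))
      (by positivity) (hτtail i x hx)
  -- the moment sequence
  set M : ℕ → ℝ≥0∞ :=
    fun k => ∫⁻ ω, ENNReal.ofReal ((ε₀ ^ k * ∏ j ∈ Finset.Icc 1 k, X j ω) ^ γ) ∂μ with hMdef
  have hfγmeas : ∀ k : ℕ, Measurable[ℱ k]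
      fun ω => ENNReal.ofReal ((ε₀ ^ k * ∏ j ∈ Finset.Icc 1 k, X j ω) ^ γ) := fun k =>
    ((measurable_const.mul (hPm k)).pow_const γ).ennreal_ofReal
  have hM : ∀ k : ℕ, M k ≤ (ENNReal.ofReal ((4 : ℝ) ^ (-β))) ^ k := by
    intro k
    induction k with
    | zero =>
        rw [hMdef]
        simp [Real.one_rpow]
    | succ k ih =>
        have hprod : ∀ ω, (∏ j ∈ Finset.Icc 1 (k + 1), X j ω)
            = (∏ j ∈ Finset.Icc 1 k, X j ω) * X (k + 1) ω := fun ω =>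
          Finset.prod_Icc_succ_top (by omega) _
        have hsplit : ∀ ω, ((ε₀ ^ (k + 1) * ∏ j ∈ Finset.Icc 1 (k + 1), X j ω) ^ γ : ℝ)
            = ε₀ ^ γ * ((ε₀ ^ k * ∏ j ∈ Finset.Icc 1 k, X j ω) ^ γ * X (k + 1) ω ^ γ) := by
          intro ω
          rw [hprod ω, pow_succ,
            show ε₀ ^ k * ε₀ * ((∏ j ∈ Finset.Icc 1 k, X j ω) * X (k + 1) ω)
              = ε₀ * ((ε₀ ^ k * ∏ j ∈ Finset.Icc 1 k, X j ω) * X (k + 1) ω) by ring,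
            Real.mul_rpow hε₀pos.le (mul_nonneg (hznn k ω) (hX0 k ω)),
            Real.mul_rpow (hznn k ω) (hX0 k ω)]
        calc M (k + 1)
            = ∫⁻ ω, ENNReal.ofReal (ε₀ ^ γ) *
                (ENNReal.ofReal ((ε₀ ^ k * ∏ j ∈ Finset.Icc 1 k, X j ω) ^ γ) *
                  ENNReal.ofReal (X (k + 1) ω ^ γ)) ∂μ := by
              rw [hMdef]
              refine lintegral_congr fun ω => ?_
              rw [hsplit ω, ENNReal.ofReal_mul (Real.rpow_nonneg hε₀pos.le _),
                ENNReal.ofReal_mul (Real.rpow_nonneg (hznn k ω) _)]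
          _ = ENNReal.ofReal (ε₀ ^ γ) *
              ∫⁻ ω, ENNReal.ofReal ((ε₀ ^ k * ∏ j ∈ Finset.Icc 1 k, X j ω) ^ γ) *
                ENNReal.ofReal (X (k + 1) ω ^ γ) ∂μ := by
              refine lintegral_const_mul _ ?_
              exact (((hfγmeas k).mono (ℱ.le k) le_rfl).mul
                ((hXm k).pow_const γ).ennreal_ofReal)
          _ ≤ ENNReal.ofReal (ε₀ ^ γ) * (ENNReal.ofReal D * M k) := by
              refine mul_le_mul_right ?_ _
              exact lemMoment (ℱ.le k) μ (hXm k) (hX0 k) hCα hγ0 hγα (hXset k) (hfγmeas k)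
          _ = ENNReal.ofReal ((4 : ℝ) ^ (-β)) * M k := by
              rw [← mul_assoc, ← ENNReal.ofReal_mul (by positivity), hεD]
          _ ≤ ENNReal.ofReal ((4 : ℝ) ^ (-β)) * (ENNReal.ofReal ((4 : ℝ) ^ (-β))) ^ k :=
              mul_le_mul_right ih _
          _ = (ENNReal.ofReal ((4 : ℝ) ^ (-β))) ^ (k + 1) := (pow_succ' _ _).symm
  -- constants
  have h2β : (0 : ℝ) < 1 - (2 : ℝ) ^ (-β) := by
    have h1 : (2 : ℝ) ^ (-β) < (2 : ℝ) ^ (0 : ℝ) := by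
      refine (Real.rpow_lt_rpow_left_iff one_lt_two).2 (by linarith)
    rw [Real.rpow_zero] at h1
    linarith
  refine ⟨(1 + Cβ) * 2 ^ β * (1 - (2 : ℝ) ^ (-β))⁻¹, by positivity, ?_⟩
  intro t ht
  have ht0 : (0 : ℝ) < t := lt_of_lt_of_le one_pos ht
  -- the per-k event
  set Ek : ℕ → Set Ω := fun k => {ω |
      t * ((1 / 2 : ℝ) ^ k * (ε₀ ^ k * ∏ j ∈ Finset.Icc 1 k, X j ω) ^ (1 - γ / β))
        < ε₀ ^ k * (∏ j ∈ Finset.Icc 1 k, X j ω) * τ (k + 1) ω} with hEk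
  -- inclusion of the main event into the union
  have hincl : {ω |
      ENNReal.ofReal t *
          ∑' k : ℕ, ENNReal.ofReal
            ((1 / 2 : ℝ) ^ k * (ε₀ ^ k * ∏ j ∈ Finset.Icc 1 k, X j ω) ^ (1 - γ / β)) <
        ∑' k : ℕ, ENNReal.ofReal (ε₀ ^ k * (∏ j ∈ Finset.Icc 1 k, X j ω) * τ (k + 1) ω)}
      ⊆ ⋃ k : ℕ, Ek k := by
    intro ω hω
    simp only [Set.mem_setOf_eq] at hω
    by_contra hnot
    simp only [Set.mem_iUnion, not_exists, hEk, Set.mem_setOf_eq, not_lt] at hnot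
    refine absurd hω (not_lt.2 ?_)
    calc ∑' k : ℕ, ENNReal.ofReal (ε₀ ^ k * (∏ j ∈ Finset.Icc 1 k, X j ω) * τ (k + 1) ω)
        ≤ ∑' k : ℕ, ENNReal.ofReal (t *
            ((1 / 2 : ℝ) ^ k * (ε₀ ^ k * ∏ j ∈ Finset.Icc 1 k, X j ω) ^ (1 - γ / β))) :=
          ENNReal.tsum_le_tsum fun k => ENNReal.ofReal_le_ofReal (hnot k)
      _ = ENNReal.ofReal t * ∑' k : ℕ, ENNReal.ofReal
            ((1 / 2 : ℝ) ^ k * (ε₀ ^ k * ∏ j ∈ Finset.Icc 1 k, X j ω) ^ (1 - γ / β)) := by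
          rw [← ENNReal.tsum_mul_left]
          exact tsum_congr fun k => ENNReal.ofReal_mul ht0.le
  -- per-k bound
  have hbound : ∀ k : ℕ, μ (Ek k) ≤
      ENNReal.ofReal ((1 + Cβ) * 2 ^ β * t ^ (-β)) * (ENNReal.ofReal ((2 : ℝ) ^ (-β))) ^ k := by
    intro k
    set Y : Ω → ℝ := fun ω => (ε₀ ^ k * ∏ j ∈ Finset.Icc 1 k, X j ω) ^ (γ / β) with hYdef
    have hYmeas : Measurable[ℱ k] Y := (measurable_const.mul (hPm k)).pow_const _
    have hY0 : ∀ ω, 0 ≤ Y ω := fun ω => Real.rpow_nonneg (hznn k ω) _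
    have hck : (0 : ℝ) < t * (1 / 2 : ℝ) ^ k := by positivity
    -- Ek ⊆ dyadic event
    have hsub : Ek k ⊆ {ω | t * (1 / 2 : ℝ) ^ k < τ (k + 1) ω * Y ω} := by
      intro ω hω
      simp only [hEk, Set.mem_setOf_eq] at hω ⊢
      set z : ℝ := ε₀ ^ k * ∏ j ∈ Finset.Icc 1 k, X j ω with hz
      have hz0 : 0 ≤ z := hznn k ω
      have hzpos : 0 < z := by
        rcases lt_or_eq_of_le hz0 with h | h
        · exact h
        · exfalso
          rw [← h, Real.zero_rpow (by
              have : γ / β < 1 := (div_lt_one hβ).2 hγβ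
              linarith), mul_zero, mul_zero, zero_mul] at hω
          exact absurd hω (lt_irrefl 0)
      have hYpos : 0 < z ^ (γ / β) := Real.rpow_pos_of_pos hzpos _
      have hmul : z ^ (1 - γ / β) * z ^ (γ / β) = z := by
        rw [← Real.rpow_add hzpos, sub_add_cancel, Real.rpow_one]
      have h1 : t * (1 / 2 : ℝ) ^ k * (z ^ (1 - γ / β) * z ^ (γ / β))
          < z * τ (k + 1) ω * z ^ (γ / β) := by
        have := mul_lt_mul_of_pos_right hω hYpos
        calc t * (1 / 2 : ℝ) ^ k * (z ^ (1 - γ / β) * z ^ (γ / β))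
            = t * ((1 / 2 : ℝ) ^ k * z ^ (1 - γ / β)) * z ^ (γ / β) := by ring
          _ < z * τ (k + 1) ω * z ^ (γ / β) := this
      rw [hmul] at h1
      have h2 : t * (1 / 2 : ℝ) ^ k * z < z * (τ (k + 1) ω * z ^ (γ / β)) := by
        calc t * (1 / 2 : ℝ) ^ k * z < z * τ (k + 1) ω * z ^ (γ / β) := h1
          _ = z * (τ (k + 1) ω * z ^ (γ / β)) := by ring
      have := (mul_lt_mul_iff_right₀ hzpos).1 (by
        calc z * (t * (1 / 2 : ℝ) ^ k) = t * (1 / 2 : ℝ) ^ k * z := by ring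
          _ < z * (τ (k + 1) ω * z ^ (γ / β)) := h2)
      exact this
    -- identify the integral with M k
    have hYint : ∫⁻ ω, ENNReal.ofReal (Y ω ^ β) ∂μ = M k := by
      rw [hMdef]
      refine lintegral_congr fun ω => ?_
      congr 1
      rw [hYdef, ← Real.rpow_mul (hznn k ω), div_mul_cancel₀ _ hβ.ne']
    have hd := lemDyadic (ℱ.le k) μ (hτm k) hYmeas hY0 hCβ hβ (hτset k) hck
    rw [hYint] at hd
    -- numerical rearrangement of the constant
    have hhalf : (((1 / 2 : ℝ) ^ k : ℝ)) ^ (-β) = ((2 : ℝ) ^ β) ^ k := by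
      have h1 : ((1 / 2 : ℝ) ^ k : ℝ) = ((2 : ℝ) ^ k)⁻¹ := by rw [one_div, inv_pow]
      have hpk : (0 : ℝ) ≤ (2 : ℝ) ^ k := by positivity
      rw [h1, Real.inv_rpow hpk, Real.rpow_neg hpk, inv_inv,
        ← Real.rpow_natCast (2 : ℝ) k, ← Real.rpow_mul (by norm_num : (0:ℝ) ≤ 2),
        ← Real.rpow_natCast ((2 : ℝ) ^ β) k, ← Real.rpow_mul (by norm_num : (0:ℝ) ≤ 2),
        mul_comm (k : ℝ) β]
    have hcval : ((t * (1 / 2 : ℝ) ^ k) : ℝ) ^ (-β) = t ^ (-β) * ((2 : ℝ) ^ β) ^ k := by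
      rw [Real.mul_rpow ht0.le (by positivity), hhalf]
    have h24 : (2 : ℝ) ^ β * (4 : ℝ) ^ (-β) = (2 : ℝ) ^ (-β) := by
      have h4 : (4 : ℝ) = (2 : ℝ) ^ (2 : ℝ) := by
        rw [show (2:ℝ) = ((2:ℕ) : ℝ) by norm_num, Real.rpow_natCast]; norm_num
      rw [h4, ← Real.rpow_mul (by norm_num), ← Real.rpow_add two_pos]
      congr 1
      ring
    calc μ (Ek k) ≤ μ {ω | t * (1 / 2 : ℝ) ^ k < τ (k + 1) ω * Y ω} := measure_mono hsub
      _ ≤ ENNReal.ofReal ((1 + Cβ) * 2 ^ β * (t * (1 / 2 : ℝ) ^ k) ^ (-β)) * M k := hd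
      _ = ENNReal.ofReal ((1 + Cβ) * 2 ^ β * t ^ (-β)) *
            (ENNReal.ofReal (((2 : ℝ) ^ β) ^ k) * M k) := by
          rw [hcval, show (1 + Cβ) * 2 ^ β * (t ^ (-β) * ((2 : ℝ) ^ β) ^ k)
              = ((1 + Cβ) * 2 ^ β * t ^ (-β)) * ((2 : ℝ) ^ β) ^ k by ring,
            ENNReal.ofReal_mul (by positivity), mul_assoc]
      _ ≤ ENNReal.ofReal ((1 + Cβ) * 2 ^ β * t ^ (-β)) *
            (ENNReal.ofReal (((2 : ℝ) ^ β) ^ k) * (ENNReal.ofReal ((4 : ℝ) ^ (-β))) ^ k) :=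
          mul_le_mul_right (mul_le_mul_right (hM k) _) _
      _ = ENNReal.ofReal ((1 + Cβ) * 2 ^ β * t ^ (-β)) * (ENNReal.ofReal ((2 : ℝ) ^ (-β))) ^ k := by
          congr 1
          rw [← ENNReal.ofReal_pow (by positivity), ← ENNReal.ofReal_mul (by positivity),
            ← mul_pow, h24, ENNReal.ofReal_pow (by positivity)]
  -- final assembly
  have hgeom : ∑' k : ℕ, (ENNReal.ofReal ((2 : ℝ) ^ (-β))) ^ k
      = ENNReal.ofReal ((1 - (2 : ℝ) ^ (-β))⁻¹) := by
    rw [ENNReal.tsum_geometric]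
    rw [← ENNReal.ofReal_one, ← ENNReal.ofReal_sub _ (Real.rpow_nonneg (by norm_num) _),
      ENNReal.ofReal_inv_of_pos h2β]
  calc μ {ω |
      ENNReal.ofReal t *
          ∑' k : ℕ, ENNReal.ofReal
            ((1 / 2 : ℝ) ^ k * (ε₀ ^ k * ∏ j ∈ Finset.Icc 1 k, X j ω) ^ (1 - γ / β)) <
        ∑' k : ℕ, ENNReal.ofReal (ε₀ ^ k * (∏ j ∈ Finset.Icc 1 k, X j ω) * τ (k + 1) ω)}
      ≤ μ (⋃ k : ℕ, Ek k) := measure_mono hincl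
    _ ≤ ∑' k : ℕ, μ (Ek k) := measure_iUnion_le _
    _ ≤ ∑' k : ℕ, ENNReal.ofReal ((1 + Cβ) * 2 ^ β * t ^ (-β)) *
          (ENNReal.ofReal ((2 : ℝ) ^ (-β))) ^ k := ENNReal.tsum_le_tsum hbound
    _ = ENNReal.ofReal ((1 + Cβ) * 2 ^ β * t ^ (-β)) *
          ∑' k : ℕ, (ENNReal.ofReal ((2 : ℝ) ^ (-β))) ^ k := ENNReal.tsum_mul_left
    _ = ENNReal.ofReal ((1 + Cβ) * 2 ^ β * (1 - (2 : ℝ) ^ (-β))⁻¹ * t ^ (-β)) := by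
        rw [hgeom, ← ENNReal.ofReal_mul (by positivity)]
        congr 1
        ring
end

section
/- Suppose there are constants C_α > 0 and α > 0 such that for every i ≥ 0 and every real x ≥ 1 one has, almost surely, P(X_{i+1} > x | 𝓕_i) ≤ C_α x^{-α}. Fix β > 0 and γ with 0 < γ < min(α, β), and let ε₀ > 0 be determined by ε₀ (1 + γ C_α/(α−γ))^{1/γ} = 4^{-β/γ}. Then there is a constant C' > 0 depending only on β such that for all t ≥ 1, P( Σ_{k=1}^∞ 2^{-k} (ε₀^k Π_k)^{1−γ/β} > t^{β/γ − 1} ) ≤ C' t^{-β}. -/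
open MeasureTheory Set
open scoped ENNReal NNReal


lemma aux_cut {Ω : Type*} {m0 : MeasurableSpace Ω} (μ : Measure Ω) [IsProbabilityMeasure μ]
    (ℱ : Filtration ℕ m0) (i : ℕ) {Y : Ω → ℝ} (hY : Measurable Y)
    {c : ℝ} (hc : 0 ≤ c) {x : ℝ}
    (htail : ∀ᵐ ω ∂μ, (μ[Set.indicator {ω' | x < Y ω'} (fun _ => (1 : ℝ)) | ℱ i]) ω ≤ c)
    {g : Ω → ℝ} (hgm : StronglyMeasurable[ℱ i] g) (hg0 : ∀ ω, 0 ≤ g ω)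
    {b : ℝ} (hgb : ∀ ω, g ω ≤ b) :
    ∫⁻ ω in {ω | x < Y ω}, ENNReal.ofReal (g ω) ∂μ
      ≤ ENNReal.ofReal c * ∫⁻ ω, ENNReal.ofReal (g ω) ∂μ := by
  set A : Set Ω := {ω | x < Y ω} with hA_def
  have hA : MeasurableSet A := measurableSet_lt measurable_const hY
  set f : Ω → ℝ := A.indicator (fun _ => (1 : ℝ)) with hf_def
  have hgm0 : StronglyMeasurable g := hgm.mono (ℱ.le i)
  have hgint : Integrable g μ := by
    refine ⟨hgm0.aestronglyMeasurable, ?_⟩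
    refine HasFiniteIntegral.of_bounded (C := b) (Filter.Eventually.of_forall fun ω => ?_)
    rw [Real.norm_eq_abs, abs_of_nonneg (hg0 ω)]; exact hgb ω
  have hfint : Integrable f μ := (integrable_const (1 : ℝ)).indicator hA
  have hgf : Integrable (g * f) μ := by
    refine hgint.mono (hgm0.mul (stronglyMeasurable_const.indicator hA)).aestronglyMeasurable
      (Filter.Eventually.of_forall fun ω => ?_)
    simp only [Pi.mul_apply, Real.norm_eq_abs, abs_mul]
    have hf01 : |f ω| ≤ 1 := by
      simp only [hf_def, Set.indicator]; split <;> simp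
    calc |g ω| * |f ω| ≤ |g ω| * 1 :=
          mul_le_mul_of_nonneg_left hf01 (abs_nonneg _)
      _ = |g ω| := mul_one _
  have hcond : Integrable (g * μ[f|ℱ i]) μ :=
    (integrable_condExp (f := g * f)).congr (condExp_mul_of_stronglyMeasurable_left hgm hgf hfint)
  have hint_eq : ∫ ω in A, g ω ∂μ = ∫ ω, (g * f) ω ∂μ := by
    rw [← integral_indicator hA]
    congr 1; funext ω
    simp only [Pi.mul_apply, hf_def, Set.indicator]; split <;> simp
  have hbochner : ∫ ω in A, g ω ∂μ ≤ c * ∫ ω, g ω ∂μ := by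
    rw [hint_eq, ← integral_condExp (ℱ.le i) (f := g * f)]
    rw [integral_congr_ae (condExp_mul_of_stronglyMeasurable_left hgm hgf hfint)]
    have h0 : 0 ≤ᵐ[μ] μ[f|ℱ i] :=
      condExp_nonneg (Filter.Eventually.of_forall fun ω => Set.indicator_nonneg (by simp) ω)
    calc ∫ ω, (g * μ[f|ℱ i]) ω ∂μ ≤ ∫ ω, g ω * c ∂μ := by
          refine integral_mono_ae hcond (hgint.mul_const c) ?_
          filter_upwards [htail, h0] with ω h1 h2
          exact mul_le_mul_of_nonneg_left h1 (hg0 ω)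
      _ = c * ∫ ω, g ω ∂μ := by rw [integral_mul_const, mul_comm]
  have hL1 : ∫⁻ ω in A, ENNReal.ofReal (g ω) ∂μ = ENNReal.ofReal (∫ ω in A, g ω ∂μ) :=
    (ofReal_integral_eq_lintegral_ofReal hgint.integrableOn
      (Filter.Eventually.of_forall fun ω => hg0 ω)).symm
  have hL2 : ∫⁻ ω, ENNReal.ofReal (g ω) ∂μ = ENNReal.ofReal (∫ ω, g ω ∂μ) :=
    (ofReal_integral_eq_lintegral_ofReal hgint
      (Filter.Eventually.of_forall fun ω => hg0 ω)).symm
  rw [hL1, hL2, ← ENNReal.ofReal_mul hc]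
  exact ENNReal.ofReal_le_ofReal hbochner

section
variable {Ω : Type*} {m0 : MeasurableSpace Ω}

lemma aux_moment (μ : Measure Ω) [IsProbabilityMeasure μ]
    (ℱ : Filtration ℕ m0) (i : ℕ) {Y : Ω → ℝ} (hYm : Measurable Y) (hY0 : ∀ ω, 0 ≤ Y ω)
    {Cα α : ℝ} (hCα : 0 < Cα) {γ : ℝ} (hγ0 : 0 < γ) (hγα : γ < α)
    (htail : ∀ x : ℝ, 1 ≤ x → ∀ᵐ ω ∂μ,
      (μ[Set.indicator {ω' | x < Y ω'} (fun _ => (1 : ℝ)) | ℱ i]) ω ≤ Cα * x ^ (-α))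
    {g : Ω → ℝ} (hgm : StronglyMeasurable[ℱ i] g) (hg0 : ∀ ω, 0 ≤ g ω) :
    ∫⁻ ω, ENNReal.ofReal (g ω) * ENNReal.ofReal (Y ω ^ γ) ∂μ
      ≤ ENNReal.ofReal (1 + γ * Cα / (α - γ)) * ∫⁻ ω, ENNReal.ofReal (g ω) ∂μ := by
  have hαγ : 0 < α - γ := by linarith
  -- the two explicit real integrals
  have hval1 : ∫⁻ t in Ioc (0:ℝ) 1, ENNReal.ofReal (t ^ (γ - 1)) = ENNReal.ofReal (1 / γ) := by
    have hint : IntegrableOn (fun t : ℝ => t ^ (γ - 1)) (Ioc (0:ℝ) 1) := by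
      have h := intervalIntegral.intervalIntegrable_rpow' (a := (0:ℝ)) (b := 1)
        (show (-1:ℝ) < γ - 1 by linarith)
      rw [intervalIntegrable_iff, uIoc_of_le zero_le_one] at h
      exact h
    rw [← ofReal_integral_eq_lintegral_ofReal hint ?_]
    · congr 1
      rw [← intervalIntegral.integral_of_le zero_le_one,
        integral_rpow (Or.inl (show (-1:ℝ) < γ - 1 by linarith))]
      rw [sub_add_cancel, Real.one_rpow, Real.zero_rpow hγ0.ne']
      ring
    · filter_upwards [self_mem_ae_restrict (measurableSet_Ioc :
        MeasurableSet (Ioc (0:ℝ) 1))] with t ht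
      exact Real.rpow_nonneg ht.1.le _
  have hval2 : ∫⁻ t in Ioi (1:ℝ), ENNReal.ofReal (Cα * t ^ (γ - 1 - α))
      = ENNReal.ofReal (Cα / (α - γ)) := by
    have hlt : γ - 1 - α < -1 := by linarith
    have hint : IntegrableOn (fun t : ℝ => Cα * t ^ (γ - 1 - α)) (Ioi (1:ℝ)) :=
      (integrableOn_Ioi_rpow_of_lt hlt one_pos).const_mul Cα
    rw [← ofReal_integral_eq_lintegral_ofReal hint ?_]
    · congr 1
      rw [MeasureTheory.integral_const_mul, integral_Ioi_rpow_of_lt hlt one_pos]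
      rw [show γ - 1 - α + 1 = -(α - γ) by ring, Real.one_rpow, neg_div_neg_eq, mul_one_div]
    · filter_upwards [self_mem_ae_restrict (measurableSet_Ioi :
        MeasurableSet (Ioi (1:ℝ)))] with t ht
      have : (0:ℝ) < t := lt_trans one_pos ht
      positivity
  -- bounded case
  have key : ∀ g : Ω → ℝ, StronglyMeasurable[ℱ i] g → (∀ ω, 0 ≤ g ω) → ∀ b : ℝ,
      (∀ ω, g ω ≤ b) →
      ∫⁻ ω, ENNReal.ofReal (g ω) * ENNReal.ofReal (Y ω ^ γ) ∂μ
        ≤ ENNReal.ofReal (1 + γ * Cα / (α - γ)) * ∫⁻ ω, ENNReal.ofReal (g ω) ∂μ := by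
    intro g hgm hg0 b hgb
    have hgmeas : Measurable fun ω => ENNReal.ofReal (g ω) :=
      ((hgm.mono (ℱ.le i)).measurable).ennreal_ofReal
    set ν : Measure Ω := μ.withDensity (fun ω => ENNReal.ofReal (g ω)) with hν_def
    set I : ℝ≥0∞ := ∫⁻ ω, ENNReal.ofReal (g ω) ∂μ with hI_def
    have hνuniv : ν univ = I := by
      rw [hν_def, withDensity_apply _ MeasurableSet.univ, Measure.restrict_univ]
    have hwd : ∫⁻ ω, ENNReal.ofReal (Y ω ^ γ) ∂ν
        = ∫⁻ ω, ENNReal.ofReal (g ω) * ENNReal.ofReal (Y ω ^ γ) ∂μ := by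
      rw [hν_def, lintegral_withDensity_eq_lintegral_mul μ hgmeas
        ((hYm.pow measurable_const).ennreal_ofReal)]
      rfl
    have LC := lintegral_rpow_eq_lintegral_meas_lt_mul ν
      (Filter.Eventually.of_forall hY0) hYm.aemeasurable hγ0
    rw [← hwd, LC]
    -- split the t-integral
    have hsplit : ∫⁻ t in Ioi (0:ℝ), ν {a | t < Y a} * ENNReal.ofReal (t ^ (γ - 1))
        = (∫⁻ t in Ioc (0:ℝ) 1, ν {a | t < Y a} * ENNReal.ofReal (t ^ (γ - 1)))
          + ∫⁻ t in Ioi (1:ℝ), ν {a | t < Y a} * ENNReal.ofReal (t ^ (γ - 1)) := by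
      rw [← Ioc_union_Ioi_eq_Ioi (zero_le_one), lintegral_union measurableSet_Ioi
        (Ioc_disjoint_Ioi le_rfl)]
    have hb1 : ∫⁻ t in Ioc (0:ℝ) 1, ν {a | t < Y a} * ENNReal.ofReal (t ^ (γ - 1))
        ≤ I * ENNReal.ofReal (1 / γ) := by
      calc ∫⁻ t in Ioc (0:ℝ) 1, ν {a | t < Y a} * ENNReal.ofReal (t ^ (γ - 1))
          ≤ ∫⁻ t in Ioc (0:ℝ) 1, I * ENNReal.ofReal (t ^ (γ - 1)) := by
            refine lintegral_mono fun t => ?_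
            exact mul_le_mul_left (hνuniv ▸ measure_mono (subset_univ _)) _
        _ = I * ∫⁻ t in Ioc (0:ℝ) 1, ENNReal.ofReal (t ^ (γ - 1)) :=
            lintegral_const_mul I ((measurable_id'.pow measurable_const).ennreal_ofReal)
        _ = I * ENNReal.ofReal (1 / γ) := by rw [hval1]
    have hb2 : ∫⁻ t in Ioi (1:ℝ), ν {a | t < Y a} * ENNReal.ofReal (t ^ (γ - 1))
        ≤ I * ENNReal.ofReal (Cα / (α - γ)) := by
      have hptwise : ∀ᵐ t ∂(volume.restrict (Ioi (1:ℝ))),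
          ν {a | t < Y a} * ENNReal.ofReal (t ^ (γ - 1))
            ≤ I * ENNReal.ofReal (Cα * t ^ (γ - 1 - α)) := by
        filter_upwards [self_mem_ae_restrict (measurableSet_Ioi :
          MeasurableSet (Ioi (1:ℝ)))] with t ht
        have ht1 : (1:ℝ) ≤ t := le_of_lt ht
        have ht0 : (0:ℝ) < t := lt_of_lt_of_le one_pos ht1
        have hνt : ν {a | t < Y a} ≤ ENNReal.ofReal (Cα * t ^ (-α)) * I := by
          have hAm : MeasurableSet {a | t < Y a} := measurableSet_lt measurable_const hYm
          rw [hν_def, withDensity_apply _ hAm]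
          exact aux_cut μ ℱ i hYm (by positivity) (htail t ht1) hgm hg0 hgb
        calc ν {a | t < Y a} * ENNReal.ofReal (t ^ (γ - 1))
            ≤ ENNReal.ofReal (Cα * t ^ (-α)) * I * ENNReal.ofReal (t ^ (γ - 1)) :=
              mul_le_mul_left hνt _
          _ = I * (ENNReal.ofReal (Cα * t ^ (-α)) * ENNReal.ofReal (t ^ (γ - 1))) := by ring
          _ = I * ENNReal.ofReal (Cα * t ^ (γ - 1 - α)) := by
              rw [← ENNReal.ofReal_mul (by positivity)]
              congr 2
              rw [mul_assoc, ← Real.rpow_add ht0]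
              ring_nf
      calc ∫⁻ t in Ioi (1:ℝ), ν {a | t < Y a} * ENNReal.ofReal (t ^ (γ - 1))
          ≤ ∫⁻ t in Ioi (1:ℝ), I * ENNReal.ofReal (Cα * t ^ (γ - 1 - α)) :=
            lintegral_mono_ae hptwise
        _ = I * ∫⁻ t in Ioi (1:ℝ), ENNReal.ofReal (Cα * t ^ (γ - 1 - α)) :=
            lintegral_const_mul I (by
              exact (measurable_const.mul (measurable_id'.pow measurable_const)).ennreal_ofReal)
        _ = I * ENNReal.ofReal (Cα / (α - γ)) := by rw [hval2]
    calc ENNReal.ofReal γ * ∫⁻ t in Ioi (0:ℝ), ν {a | t < Y a} * ENNReal.ofReal (t ^ (γ - 1))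
        ≤ ENNReal.ofReal γ * (I * ENNReal.ofReal (1 / γ) + I * ENNReal.ofReal (Cα / (α - γ)))
          := by rw [hsplit]; exact mul_le_mul_right (add_le_add hb1 hb2) _
      _ = ENNReal.ofReal (1 + γ * Cα / (α - γ)) * I := by
          rw [← mul_add, ← ENNReal.ofReal_add (by positivity) (by positivity)]
          rw [mul_comm (ENNReal.ofReal γ), mul_assoc, ← ENNReal.ofReal_mul (by positivity)]
          rw [mul_comm I]
          congr 2
          field_simp
  -- monotone convergence
  set F : ℕ → Ω → ℝ≥0∞ := fun n ω => ENNReal.ofReal (min (g ω) n) * ENNReal.ofReal (Y ω ^ γ)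
    with hF_def
  have hFmeas : ∀ n, Measurable (F n) := by
    intro n
    exact (((hgm.mono (ℱ.le i)).measurable.min measurable_const).ennreal_ofReal).mul
      ((hYm.pow measurable_const).ennreal_ofReal)
  have hFmono : Monotone F := by
    intro n m hnm ω
    exact mul_le_mul_left (ENNReal.ofReal_le_ofReal (min_le_min le_rfl (by exact_mod_cast hnm)))
      _
  have hFsup : ∀ ω, (⨆ n, F n ω) = ENNReal.ofReal (g ω) * ENNReal.ofReal (Y ω ^ γ) := by
    intro ω
    rw [← ENNReal.iSup_mul]
    congr 1
    apply le_antisymm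
    · exact iSup_le fun n => ENNReal.ofReal_le_ofReal (min_le_left _ _)
    · refine le_iSup_of_le ⌈g ω⌉₊ (le_of_eq ?_)
      rw [min_eq_left (Nat.le_ceil _)]
  calc ∫⁻ ω, ENNReal.ofReal (g ω) * ENNReal.ofReal (Y ω ^ γ) ∂μ
      = ∫⁻ ω, ⨆ n, F n ω ∂μ := by simp_rw [hFsup]
    _ = ⨆ n, ∫⁻ ω, F n ω ∂μ := lintegral_iSup hFmeas hFmono
    _ ≤ ENNReal.ofReal (1 + γ * Cα / (α - γ)) * ∫⁻ ω, ENNReal.ofReal (g ω) ∂μ := by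
        refine iSup_le fun n => ?_
        refine (key _ ((hgm.measurable.min measurable_const).stronglyMeasurable) (fun ω => le_min (hg0 ω) n.cast_nonneg)
          n (fun ω => min_le_right _ _)).trans ?_
        exact mul_le_mul_right (lintegral_mono fun ω =>
          ENNReal.ofReal_le_ofReal (min_le_left _ _)) _

end

/-- With the conditional tail bound `P(X_{i+1} > x | ℱ i) ≤ C_α x^{-α}` (`x ≥ 1`),
fix `β > 0` and `0 < γ < min α β`, and let `ε₀ > 0` satisfy
`ε₀ (1 + γ C_α/(α-γ))^{1/γ} = 4^{-β/γ}`. Then there is `C' > 0` (depending only on `β`) such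
that for all `t ≥ 1`,
`P( Σ_{k=1}^∞ 2^{-k}(ε₀^k Π_k)^{1-γ/β} > t^{β/γ - 1} ) ≤ C' t^{-β}`, with `Π_k = ∏_{j=1}^k X_j`
(the series, a pointwise sum of nonnegative terms, is formalized in `ℝ≥0∞`). -/
theorem stmt4 {Ω : Type*} {m0 : MeasurableSpace Ω} (μ : Measure Ω) [IsProbabilityMeasure μ]
    (ℱ : Filtration ℕ m0) (X : ℕ → Ω → ℝ)
    (hXmeas : ∀ i : ℕ, StronglyMeasurable[ℱ (i + 1)] (X (i + 1)))
    (hX0 : ∀ (i : ℕ) (ω : Ω), 0 ≤ X (i + 1) ω)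
    (Cα α : ℝ) (hCα : 0 < Cα) (hα : 0 < α)
    (hXtail : ∀ i : ℕ, ∀ x : ℝ, 1 ≤ x →
      ∀ᵐ ω ∂μ,
        (μ[Set.indicator {ω' | x < X (i + 1) ω'} (fun _ => (1 : ℝ)) | ℱ i]) ω ≤ Cα * x ^ (-α))
    (β γ : ℝ) (hβ : 0 < β) (hγ0 : 0 < γ) (hγ : γ < min α β)
    (ε₀ : ℝ) (hε₀pos : 0 < ε₀)
    (hε₀ : ε₀ * (1 + γ * Cα / (α - γ)) ^ (1 / γ) = (4 : ℝ) ^ (-β / γ)) :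
    ∃ C' > (0 : ℝ), ∀ t : ℝ, 1 ≤ t →
      μ {ω |
          ENNReal.ofReal (t ^ (β / γ - 1)) <
            ∑' k : ℕ,
              ENNReal.ofReal
                ((1 / 2 : ℝ) ^ (k + 1) *
                  (ε₀ ^ (k + 1) * ∏ j ∈ Finset.Icc 1 (k + 1), X j ω) ^ (1 - γ / β))}
        ≤ ENNReal.ofReal (C' * t ^ (-β)) := by
  have hγα : γ < α := lt_of_lt_of_le hγ (min_le_left _ _)
  have hγβ : γ < β := lt_of_lt_of_le hγ (min_le_right _ _)
  have hαγ : 0 < α - γ := by linarith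
  set M : ℝ := 1 + γ * Cα / (α - γ) with hM_def
  have hM0 : (0 : ℝ) < M := by
    have : 0 < γ * Cα / (α - γ) := div_pos (mul_pos hγ0 hCα) hαγ
    simp only [hM_def]; linarith
  -- nonnegativity and measurability of the products
  have hXj : ∀ j : ℕ, 1 ≤ j → ∀ ω, 0 ≤ X j ω := by
    intro j hj ω
    cases j with
    | zero => omega
    | succ i => exact hX0 i ω
  have hP0 : ∀ (k : ℕ) (ω : Ω), 0 ≤ ∏ j ∈ Finset.Icc 1 k, X j ω := fun k ω =>
    Finset.prod_nonneg fun j hj => hXj j (Finset.mem_Icc.mp hj).1 ω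
  have hPm : ∀ k : ℕ, StronglyMeasurable[ℱ k] fun ω => ∏ j ∈ Finset.Icc 1 k, X j ω := by
    intro k
    refine Finset.stronglyMeasurable_fun_prod _ fun j hj => ?_
    obtain ⟨hj1, hjk⟩ := Finset.mem_Icc.mp hj
    cases j with
    | zero => omega
    | succ i => exact (hXmeas i).mono (ℱ.mono hjk)
  -- moment bound by induction
  have mom : ∀ k : ℕ, ∫⁻ ω, ENNReal.ofReal ((∏ j ∈ Finset.Icc 1 k, X j ω) ^ γ) ∂μ
      ≤ ENNReal.ofReal M ^ k := by
    intro k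
    induction k with
    | zero =>
      simp only [show Finset.Icc 1 0 = (∅ : Finset ℕ) from rfl, Finset.prod_empty,
        Real.one_rpow, ENNReal.ofReal_one, lintegral_one, measure_univ, pow_zero, le_refl]
    | succ k ih =>
      have hsm : StronglyMeasurable[ℱ k] fun ω => (∏ j ∈ Finset.Icc 1 k, X j ω) ^ γ :=
        ((hPm k).measurable.pow measurable_const).stronglyMeasurable
      have hstep := aux_moment μ ℱ k (((hXmeas k).mono (ℱ.le (k + 1))).measurable)
        (hX0 k) hCα hγ0 hγα (hXtail k) hsm fun ω => Real.rpow_nonneg (hP0 k ω) γ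
      calc ∫⁻ ω, ENNReal.ofReal ((∏ j ∈ Finset.Icc 1 (k + 1), X j ω) ^ γ) ∂μ
          = ∫⁻ ω, ENNReal.ofReal ((∏ j ∈ Finset.Icc 1 k, X j ω) ^ γ)
              * ENNReal.ofReal (X (k + 1) ω ^ γ) ∂μ := by
            refine lintegral_congr fun ω => ?_
            rw [Finset.prod_Icc_succ_top (by omega : 1 ≤ k + 1),
              Real.mul_rpow (hP0 k ω) (hX0 k ω),
              ENNReal.ofReal_mul (Real.rpow_nonneg (hP0 k ω) γ)]
        _ ≤ ENNReal.ofReal M * ∫⁻ ω, ENNReal.ofReal ((∏ j ∈ Finset.Icc 1 k, X j ω) ^ γ) ∂μ :=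
            hstep
        _ ≤ ENNReal.ofReal M * ENNReal.ofReal M ^ k := mul_le_mul_right ih _
        _ = ENNReal.ofReal M ^ (k + 1) := by rw [pow_succ, mul_comm]
  -- Markov
  have markov : ∀ (k : ℕ) (s : ℝ), 0 < s →
      μ {ω | s < ∏ j ∈ Finset.Icc 1 k, X j ω}
        ≤ (ENNReal.ofReal (s ^ γ))⁻¹ * ENNReal.ofReal M ^ k := by
    intro k s hs
    have hsub : {ω | s < ∏ j ∈ Finset.Icc 1 k, X j ω}
        ⊆ {ω | ENNReal.ofReal (s ^ γ)
            ≤ ENNReal.ofReal ((∏ j ∈ Finset.Icc 1 k, X j ω) ^ γ)} := by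
      intro ω hω
      exact ENNReal.ofReal_le_ofReal (Real.rpow_le_rpow hs.le (le_of_lt hω) hγ0.le)
    have hmeas : AEMeasurable (fun ω => ENNReal.ofReal ((∏ j ∈ Finset.Icc 1 k, X j ω) ^ γ)) μ :=
      ((((hPm k).mono (ℱ.le k)).measurable.pow measurable_const).ennreal_ofReal).aemeasurable
    have hmk := mul_meas_ge_le_lintegral₀ hmeas (ENNReal.ofReal (s ^ γ))
    have hne : ENNReal.ofReal (s ^ γ) ≠ 0 := by
      simp only [ne_eq, ENNReal.ofReal_eq_zero, not_le]
      positivity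
    have htop : ENNReal.ofReal (s ^ γ) ≠ ∞ := ENNReal.ofReal_ne_top
    calc μ {ω | s < ∏ j ∈ Finset.Icc 1 k, X j ω}
        ≤ μ {ω | ENNReal.ofReal (s ^ γ)
            ≤ ENNReal.ofReal ((∏ j ∈ Finset.Icc 1 k, X j ω) ^ γ)} := measure_mono hsub
      _ = (ENNReal.ofReal (s ^ γ))⁻¹ * (ENNReal.ofReal (s ^ γ) * μ _) := by
          rw [← mul_assoc, ENNReal.inv_mul_cancel hne htop, one_mul]
      _ ≤ (ENNReal.ofReal (s ^ γ))⁻¹ * ENNReal.ofReal M ^ k :=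
          mul_le_mul_right (hmk.trans (mom k)) _
  -- geometric series helper
  have hgeom : ∀ r : ℝ≥0∞, ∑' k : ℕ, r ^ (k + 1) = (1 - r)⁻¹ * r := by
    intro r
    simp_rw [pow_succ]
    rw [ENNReal.tsum_mul_right, ENNReal.tsum_geometric]
  have hhalf : ENNReal.ofReal ((1 : ℝ) / 2) = 2⁻¹ := by
    rw [one_div, ENNReal.ofReal_inv_of_pos two_pos, ENNReal.ofReal_ofNat]
  have hhalfsum : ∑' k : ℕ, (2⁻¹ : ℝ≥0∞) ^ (k + 1) = 1 := by
    rw [hgeom, ENNReal.one_sub_inv_two, inv_inv]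
    exact ENNReal.mul_inv_cancel two_ne_zero ENNReal.ofNat_ne_top
  -- the key identity ε₀ ^ γ * M = 4 ^ (-β)
  set q : ℝ := (4 : ℝ) ^ (-β) with hq_def
  have hq0 : 0 < q := Real.rpow_pos_of_pos (by norm_num) _
  have hq1 : q < 1 := by
    refine Real.rpow_lt_one_of_one_lt_of_neg (by norm_num) (by linarith)
  have hkey : ε₀ ^ γ * M = q := by
    have h1 : (ε₀ * M ^ (1 / γ)) ^ γ = ((4 : ℝ) ^ (-β / γ)) ^ γ := by rw [hε₀]
    rw [Real.mul_rpow hε₀pos.le (Real.rpow_nonneg hM0.le _), ← Real.rpow_mul hM0.le,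
      one_div_mul_cancel hγ0.ne', Real.rpow_one, ← Real.rpow_mul (by norm_num : (0:ℝ) ≤ 4),
      div_mul_cancel₀ _ hγ0.ne'] at h1
    exact h1
  refine ⟨q / (1 - q), div_pos hq0 (by linarith), fun t ht => ?_⟩
  have ht0 : (0 : ℝ) < t := lt_of_lt_of_le one_pos ht
  set s : ℕ → ℝ := fun k => (ε₀ ^ (k + 1))⁻¹ * t ^ (β / γ) with hs_def
  have hspos : ∀ k, 0 < s k := fun k =>
    mul_pos (inv_pos.mpr (pow_pos hε₀pos _)) (Real.rpow_pos_of_pos ht0 _)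
  set E : ℕ → Set Ω := fun k => {ω | s k < ∏ j ∈ Finset.Icc 1 (k + 1), X j ω} with hE_def
  have hincl : {ω |
      ENNReal.ofReal (t ^ (β / γ - 1)) <
        ∑' k : ℕ,
          ENNReal.ofReal
            ((1 / 2 : ℝ) ^ (k + 1) *
              (ε₀ ^ (k + 1) * ∏ j ∈ Finset.Icc 1 (k + 1), X j ω) ^ (1 - γ / β))}
      ⊆ ⋃ k, E k := by
    intro ω hω
    simp only [Set.mem_setOf_eq] at hω
    by_contra hnot
    simp only [Set.mem_iUnion, not_exists, hE_def, Set.mem_setOf_eq, not_lt] at hnot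
    have hterm : ∀ k : ℕ,
        (1 / 2 : ℝ) ^ (k + 1) *
            (ε₀ ^ (k + 1) * ∏ j ∈ Finset.Icc 1 (k + 1), X j ω) ^ (1 - γ / β)
          ≤ (1 / 2 : ℝ) ^ (k + 1) * t ^ (β / γ - 1) := by
      intro k
      refine mul_le_mul_of_nonneg_left ?_ (by positivity)
      have hb : ε₀ ^ (k + 1) * ∏ j ∈ Finset.Icc 1 (k + 1), X j ω ≤ t ^ (β / γ) := by
        calc ε₀ ^ (k + 1) * ∏ j ∈ Finset.Icc 1 (k + 1), X j ω
            ≤ ε₀ ^ (k + 1) * s k := mul_le_mul_of_nonneg_left (hnot k) (by positivity)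
          _ = t ^ (β / γ) := by
              rw [hs_def, ← mul_assoc, mul_inv_cancel₀ (by positivity), one_mul]
      have hδ : (0 : ℝ) ≤ 1 - γ / β := by
        have : γ / β < 1 := (div_lt_one hβ).mpr hγβ
        linarith
      have hPnn : (0:ℝ) ≤ ε₀ ^ (k + 1) * ∏ j ∈ Finset.Icc 1 (k + 1), X j ω := by
        have := hP0 (k + 1) ω
        positivity
      calc (ε₀ ^ (k + 1) * ∏ j ∈ Finset.Icc 1 (k + 1), X j ω) ^ (1 - γ / β)
          ≤ (t ^ (β / γ)) ^ (1 - γ / β) := Real.rpow_le_rpow hPnn hb hδ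
        _ = t ^ (β / γ - 1) := by
            rw [← Real.rpow_mul ht0.le]
            congr 1
            field_simp
    have hsum : (∑' k : ℕ,
        ENNReal.ofReal
          ((1 / 2 : ℝ) ^ (k + 1) *
            (ε₀ ^ (k + 1) * ∏ j ∈ Finset.Icc 1 (k + 1), X j ω) ^ (1 - γ / β)))
        ≤ ENNReal.ofReal (t ^ (β / γ - 1)) := by
      calc _ ≤ ∑' k : ℕ, ENNReal.ofReal ((1 / 2 : ℝ) ^ (k + 1) * t ^ (β / γ - 1)) :=
            ENNReal.tsum_le_tsum fun k => ENNReal.ofReal_le_ofReal (hterm k)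
        _ = ENNReal.ofReal (t ^ (β / γ - 1)) := by
            have heq : ∀ k : ℕ,
                ENNReal.ofReal ((1 / 2 : ℝ) ^ (k + 1) * t ^ (β / γ - 1))
                  = (2⁻¹ : ℝ≥0∞) ^ (k + 1) * ENNReal.ofReal (t ^ (β / γ - 1)) := by
              intro k
              rw [ENNReal.ofReal_mul (by positivity), ENNReal.ofReal_pow (by norm_num), hhalf]
            simp_rw [heq]
            rw [ENNReal.tsum_mul_right, hhalfsum, one_mul]
    exact absurd hω (not_lt.mpr hsum)
  have hEk : ∀ k : ℕ, μ (E k) ≤ ENNReal.ofReal (t ^ (-β)) * ENNReal.ofReal q ^ (k + 1) := by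
    intro k
    refine (markov (k + 1) (s k) (hspos k)).trans (le_of_eq ?_)
    have hsγ : s k ^ γ = ((ε₀ ^ (k + 1) : ℝ) ^ γ)⁻¹ * t ^ β := by
      rw [hs_def]
      rw [Real.mul_rpow (by positivity) (Real.rpow_nonneg ht0.le _),
        Real.inv_rpow (by positivity), ← Real.rpow_mul ht0.le, div_mul_cancel₀ _ hγ0.ne']
    have hεM : ((ε₀ ^ (k + 1) : ℝ)) ^ γ * M ^ (k + 1) = q ^ (k + 1) := by
      rw [← Real.rpow_natCast ε₀ (k + 1), ← Real.rpow_mul hε₀pos.le,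
        mul_comm (((k + 1 : ℕ) : ℝ)) γ, Real.rpow_mul hε₀pos.le, Real.rpow_natCast,
        ← mul_pow, hkey]
    have hreal : (s k ^ γ)⁻¹ * M ^ (k + 1) = t ^ (-β) * q ^ (k + 1) := by
      rw [hsγ, mul_inv, inv_inv, Real.rpow_neg ht0.le, ← hεM]
      ring
    calc (ENNReal.ofReal (s k ^ γ))⁻¹ * ENNReal.ofReal M ^ (k + 1)
        = ENNReal.ofReal ((s k ^ γ)⁻¹) * ENNReal.ofReal (M ^ (k + 1)) := by
          rw [ENNReal.ofReal_inv_of_pos (Real.rpow_pos_of_pos (hspos k) γ),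
            ENNReal.ofReal_pow hM0.le]
      _ = ENNReal.ofReal ((s k ^ γ)⁻¹ * M ^ (k + 1)) := by
          rw [ENNReal.ofReal_mul (by positivity)]
      _ = ENNReal.ofReal (t ^ (-β) * q ^ (k + 1)) := by rw [hreal]
      _ = ENNReal.ofReal (t ^ (-β)) * ENNReal.ofReal q ^ (k + 1) := by
          rw [ENNReal.ofReal_mul (by positivity), ENNReal.ofReal_pow hq0.le]
  have h2 : (1 : ℝ≥0∞) - ENNReal.ofReal q = ENNReal.ofReal (1 - q) := by
    rw [ENNReal.ofReal_sub _ hq0.le, ENNReal.ofReal_one]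
  calc μ {ω |
      ENNReal.ofReal (t ^ (β / γ - 1)) <
        ∑' k : ℕ,
          ENNReal.ofReal
            ((1 / 2 : ℝ) ^ (k + 1) *
              (ε₀ ^ (k + 1) * ∏ j ∈ Finset.Icc 1 (k + 1), X j ω) ^ (1 - γ / β))}
      ≤ μ (⋃ k, E k) := measure_mono hincl
    _ ≤ ∑' k, μ (E k) := measure_iUnion_le _
    _ ≤ ∑' k : ℕ, ENNReal.ofReal (t ^ (-β)) * ENNReal.ofReal q ^ (k + 1) :=
        ENNReal.tsum_le_tsum hEk
    _ = ENNReal.ofReal (t ^ (-β)) * ((1 - ENNReal.ofReal q)⁻¹ * ENNReal.ofReal q) := by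
        rw [ENNReal.tsum_mul_left, hgeom]
    _ = ENNReal.ofReal (t ^ (-β)) * (ENNReal.ofReal ((1 - q)⁻¹) * ENNReal.ofReal q) := by
        rw [h2, ENNReal.ofReal_inv_of_pos (by linarith)]
    _ = ENNReal.ofReal (q / (1 - q) * t ^ (-β)) := by
        rw [← ENNReal.ofReal_mul (inv_nonneg.mpr (by linarith : (0:ℝ) ≤ 1 - q)),
          ← ENNReal.ofReal_mul (by positivity)]
        congr 1
        rw [div_eq_mul_inv]
        ring
end

section
/- Suppose there are constants C > 0, α > 0, β > 0 (not depending on ε) and some ε ∈ (0,1) such that for all real M ≥ 1, P( sup_{0 ≤ t ≤ τ} |Y_t| ≥ M ) ≤ C M^{-α}, and for all real t ≥ ε, P( τ ≥ t ) ≤ C (ε/t)^{β}. Then, with γ'' = (min{α, β, 2})/8, there is a constant C' > 0 depending only on C, α, β (not on ε) such that for all real x ≥ ε^{1/2}, P( sup_{0 ≤ t ≤ τ} | ∫_0^t Y_s ds | ≥ x ) ≤ C' (ε/x²)^{γ''}. -/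
open MeasureTheory

/-- Lemma 2.3 (i), time-integral assertion: Let `Y` be a progressively
measurable real process and `τ` an (a.s. finite, nonnegative, real-valued) stopping time.
Suppose there exist constants `C, α, β > 0` (not depending on `ε`) and some `ε ∈ (0,1)` with
`P(sup_{t ≤ τ} |Y_t| ≥ M) ≤ C M^{-α}` for all `M ≥ 1` and `P(τ ≥ t) ≤ C (ε/t)^β` for all
`t ≥ ε`. Then, with `γ'' = (min {α, β, 2})/8`, there is `C' > 0` depending only on `C, α, β`
(in particular not on `ε`) such that for all `x ≥ ε^{1/2}`,
`P(sup_{t ≤ τ} |∫_0^t Y_s ds| ≥ x) ≤ C' (ε/x²)^{γ''}`.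
(Suprema over the random interval `[0, τ]` are taken in `ℝ≥0∞` via `ENNReal.ofReal`.) -/
theorem stmt5 {Ω : Type*} {m0 : MeasurableSpace Ω} (μ : Measure Ω) [IsProbabilityMeasure μ]
    (ℱ : Filtration ℝ m0) (Y : ℝ → Ω → ℝ) (τ : Ω → ℝ)
    (hY : ProgMeasurable ℱ Y) (hτ : IsStoppingTime ℱ (fun ω => (τ ω : WithTop ℝ))) (hτ0 : ∀ ω, 0 ≤ τ ω)
    (C α β : ℝ) (hC : 0 < C) (hα : 0 < α) (hβ : 0 < β) :
    ∃ C' > (0 : ℝ), ∀ ε : ℝ, 0 < ε → ε < 1 →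
      (∀ M : ℝ, 1 ≤ M →
        μ {ω | ENNReal.ofReal M ≤ ⨆ t ∈ Set.Icc (0 : ℝ) (τ ω), ENNReal.ofReal |Y t ω|}
          ≤ ENNReal.ofReal (C * M ^ (-α))) →
      (∀ t : ℝ, ε ≤ t → μ {ω | t ≤ τ ω} ≤ ENNReal.ofReal (C * (ε / t) ^ β)) →
      ∀ x : ℝ, ε ^ ((1 : ℝ) / 2) ≤ x →
        μ {ω | ENNReal.ofReal x ≤
            ⨆ t ∈ Set.Icc (0 : ℝ) (τ ω), ENNReal.ofReal |∫ s in Set.Ioc (0 : ℝ) t, Y s ω|}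
          ≤ ENNReal.ofReal (C' * (ε / x ^ 2) ^ (min (min α β) 2 / 8)) := by

  refine ⟨2 * C, by positivity, ?_⟩
  intro ε hε0 hε1 hA hB x hx
  set γ : ℝ := min (min α β) 2 / 8 with hγdef
  have hm0 : 0 < min (min α β) 2 := lt_min (lt_min hα hβ) two_pos
  have hγ0 : 0 < γ := by rw [hγdef]; positivity
  have hx0 : 0 < x := lt_of_lt_of_le (Real.rpow_pos_of_pos hε0 _) hx
  have hεx2 : ε ≤ x ^ 2 := by
    calc ε = ε ^ ((1:ℝ)/2) * ε ^ ((1:ℝ)/2) := by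
          rw [← Real.rpow_add hε0]; norm_num
      _ ≤ x * x := mul_le_mul hx hx (Real.rpow_pos_of_pos hε0 _).le hx0.le
      _ = x ^ 2 := (sq x).symm
  set r : ℝ := x ^ 2 / ε with hrdef
  have hr1 : 1 ≤ r := (one_le_div hε0).mpr hεx2
  have hr0 : 0 < r := lt_of_lt_of_le one_pos hr1
  set M : ℝ := r ^ (γ / α) with hMdef
  set T : ℝ := ε * r ^ (γ / β) with hTdef
  have hM1 : 1 ≤ M := by
    calc (1:ℝ) = r ^ (0:ℝ) := (Real.rpow_zero r).symm
      _ ≤ M := Real.rpow_le_rpow_of_exponent_le hr1 (by positivity)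
  have hM0 : 0 < M := lt_of_lt_of_le one_pos hM1
  have hrβ1 : 1 ≤ r ^ (γ / β) := by
    calc (1:ℝ) = r ^ (0:ℝ) := (Real.rpow_zero r).symm
      _ ≤ r ^ (γ / β) := Real.rpow_le_rpow_of_exponent_le hr1 (by positivity)
  have hTε : ε ≤ T := le_mul_of_one_le_right hε0.le hrβ1
  have hγα : γ / α ≤ 1 / 8 := by
    have h1 : min (min α β) 2 ≤ α := le_trans (min_le_left _ _) (min_le_left _ _)
    calc γ / α = min (min α β) 2 / α / 8 := by rw [hγdef]; ring
      _ ≤ α / α / 8 := by gcongr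
      _ = 1 / 8 := by rw [div_self hα.ne']
  have hγβ : γ / β ≤ 1 / 8 := by
    have h1 : min (min α β) 2 ≤ β := le_trans (min_le_left _ _) (min_le_right _ _)
    calc γ / β = min (min α β) 2 / β / 8 := by rw [hγdef]; ring
      _ ≤ β / β / 8 := by gcongr
      _ = 1 / 8 := by rw [div_self hβ.ne']
  have hεr : ε * r = x ^ 2 := by rw [hrdef]; field_simp
  have hMT : M * T ≤ x := by
    have h1 : M * T = ε * r ^ (γ/α + γ/β) := by
      rw [hMdef, hTdef, Real.rpow_add hr0]; ring
    have h2 : r ^ (γ/α + γ/β) ≤ r ^ ((1:ℝ)/2) :=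
      Real.rpow_le_rpow_of_exponent_le hr1 (by linarith)
    have h3 : ε ≤ ε ^ ((1:ℝ)/2) := by
      calc ε = ε ^ (1:ℝ) := (Real.rpow_one ε).symm
        _ ≤ ε ^ ((1:ℝ)/2) :=
          Real.rpow_le_rpow_of_exponent_ge hε0 hε1.le (by norm_num)
    calc M * T = ε * r ^ (γ/α + γ/β) := h1
      _ ≤ ε ^ ((1:ℝ)/2) * r ^ ((1:ℝ)/2) := by
          apply mul_le_mul h3 h2 (by positivity) (by positivity)
      _ = (ε * r) ^ ((1:ℝ)/2) := (Real.mul_rpow hε0.le hr0.le).symm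
      _ = (x ^ 2) ^ ((1:ℝ)/2) := by rw [hεr]
      _ = x := by
          rw [← Real.rpow_natCast x 2, ← Real.rpow_mul hx0.le]
          norm_num
  have hMα : C * M ^ (-α) = C * r ^ (-γ) := by
    rw [hMdef, ← Real.rpow_mul hr0.le]
    congr 2
    field_simp
  have hTβ : C * (ε / T) ^ β = C * r ^ (-γ) := by
    have hεT : ε / T = r ^ (-(γ/β)) := by
      have hy : r ^ (γ/β) ≠ 0 := by positivity
      rw [hTdef, Real.rpow_neg hr0.le]
      field_simp
    rw [hεT, ← Real.rpow_mul hr0.le]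
    congr 2
    field_simp
  have hfinal : (ε / x ^ 2) ^ γ = r ^ (-γ) := by
    rw [Real.rpow_neg hr0.le, ← Real.inv_rpow hr0.le]
    congr 1
    rw [hrdef, inv_div]
  set A := {ω | ENNReal.ofReal M ≤ ⨆ t ∈ Set.Icc (0 : ℝ) (τ ω), ENNReal.ofReal |Y t ω|} with hAdef
  set B := {ω | T ≤ τ ω} with hBdef
  have hsub : {ω | ENNReal.ofReal x ≤
      ⨆ t ∈ Set.Icc (0 : ℝ) (τ ω), ENNReal.ofReal |∫ s in Set.Ioc (0 : ℝ) t, Y s ω|}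
      ⊆ A ∪ B := by
    intro ω hω
    by_contra hcon
    simp only [Set.mem_union, not_or] at hcon
    obtain ⟨hA', hB'⟩ := hcon
    have hA'' : (⨆ t ∈ Set.Icc (0 : ℝ) (τ ω), ENNReal.ofReal |Y t ω|) < ENNReal.ofReal M :=
      not_le.mp hA'
    have hB'' : τ ω < T := not_le.mp hB'
    have hYlt : ∀ s ∈ Set.Icc (0 : ℝ) (τ ω), |Y s ω| < M := by
      intro s hs
      have h1 : ENNReal.ofReal |Y s ω| ≤
          ⨆ t ∈ Set.Icc (0 : ℝ) (τ ω), ENNReal.ofReal |Y t ω| :=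
        le_iSup₂ (f := fun t (_ : t ∈ Set.Icc (0:ℝ) (τ ω)) => ENNReal.ofReal |Y t ω|) s hs
      exact (ENNReal.ofReal_lt_ofReal_iff hM0).mp (lt_of_le_of_lt h1 hA'')
    have hint : ∀ t ∈ Set.Icc (0 : ℝ) (τ ω),
        |∫ s in Set.Ioc (0:ℝ) t, Y s ω| ≤ M * τ ω := by
      intro t ht
      have key : |∫ s in Set.Ioc (0:ℝ) t, Y s ω| ≤ M * t := by
        by_cases hI : IntegrableOn (fun s => Y s ω) (Set.Ioc (0:ℝ) t) volume
        · have h1 : |∫ s in Set.Ioc (0:ℝ) t, Y s ω| ≤ ∫ s in Set.Ioc (0:ℝ) t, |Y s ω| :=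
            by simpa [Real.norm_eq_abs] using
              norm_integral_le_integral_norm
                (μ := volume.restrict (Set.Ioc (0:ℝ) t)) fun s => Y s ω
          have h2 : (∫ _s in Set.Ioc (0:ℝ) t, M) = M * t := by
            rw [setIntegral_const, measureReal_def, Real.volume_Ioc,
              ENNReal.toReal_ofReal (by linarith [ht.1]), smul_eq_mul]
            ring
          have h3 : (∫ s in Set.Ioc (0:ℝ) t, |Y s ω|) ≤ ∫ _s in Set.Ioc (0:ℝ) t, M := by
            apply setIntegral_mono_on hI.abs
              (integrableOn_const (by
                rw [Real.volume_Ioc]; exact ENNReal.ofReal_ne_top))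
              measurableSet_Ioc
            intro s hs
            exact (hYlt s ⟨hs.1.le, hs.2.trans ht.2⟩).le
          linarith
        · rw [integral_undef hI]
          simp only [abs_zero]
          have := ht.1
          positivity
      exact key.trans (mul_le_mul_of_nonneg_left ht.2 hM0.le)
    have hsup : (⨆ t ∈ Set.Icc (0 : ℝ) (τ ω),
        ENNReal.ofReal |∫ s in Set.Ioc (0:ℝ) t, Y s ω|) ≤ ENNReal.ofReal (M * τ ω) :=
      iSup₂_le fun t ht => ENNReal.ofReal_le_ofReal (hint t ht)
    have hlt : ENNReal.ofReal (M * τ ω) < ENNReal.ofReal x := by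
      rw [ENNReal.ofReal_lt_ofReal_iff hx0]
      calc M * τ ω < M * T := mul_lt_mul_of_pos_left hB'' hM0
        _ ≤ x := hMT
    exact absurd hω (lt_of_le_of_lt hsup hlt).not_ge
  calc μ {ω | ENNReal.ofReal x ≤
        ⨆ t ∈ Set.Icc (0 : ℝ) (τ ω), ENNReal.ofReal |∫ s in Set.Ioc (0 : ℝ) t, Y s ω|}
      ≤ μ (A ∪ B) := measure_mono hsub
    _ ≤ μ A + μ B := measure_union_le A B
    _ ≤ ENNReal.ofReal (C * M ^ (-α)) + ENNReal.ofReal (C * (ε / T) ^ β) :=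
        add_le_add (hA M hM1) (hB T hTε)
    _ = ENNReal.ofReal (C * r ^ (-γ) + C * r ^ (-γ)) := by
        rw [hMα, hTβ, ENNReal.ofReal_add (by positivity) (by positivity)]
    _ = ENNReal.ofReal (2 * C * (ε / x ^ 2) ^ γ) := by
        rw [hfinal]; ring_nf
end

section
/- Suppose there are constants C > 0, α > 0, β > 0 (not depending on ε) and some ε ∈ (0,1] such that for all real M ≥ ε, P( sup_{0 ≤ t ≤ τ} |Y_t| ≥ M ) ≤ C (ε/M)^{α}, and for all real t ≥ 1, P( τ ≥ t ) ≤ C t^{-β}. Then, with γ'' = (min{α, β, 2})/8, there is a constant C' > 0 depending only on C, α, β (not on ε) such that for all real x ≥ ε^{1/2}, P( sup_{0 ≤ t ≤ τ} | ∫_0^t Y_s ds | ≥ x ) ≤ C' (ε/x²)^{γ''}. -/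
open MeasureTheory

/-- Lemma 2.3 (ii), time-integral assertion: Let `Y` be a progressively
measurable real process and `τ` an (a.s. finite, nonnegative, real-valued) stopping time.
Suppose there exist constants `C, α, β > 0` (not depending on `ε`) and some `ε ∈ (0,1]` with
`P(sup_{t ≤ τ} |Y_t| ≥ M) ≤ C (ε/M)^α` for all `M ≥ ε` and `P(τ ≥ t) ≤ C t^{-β}` for all
`t ≥ 1`. Then, with `γ'' = (min {α, β, 2})/8`, there is `C' > 0` depending only on `C, α, β`
(in particular not on `ε`) such that for all `x ≥ ε^{1/2}`,
`P(sup_{t ≤ τ} |∫_0^t Y_s ds| ≥ x) ≤ C' (ε/x²)^{γ''}`.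
(Suprema over the random interval `[0, τ]` are taken in `ℝ≥0∞` via `ENNReal.ofReal`.) -/
theorem stmt6 {Ω : Type*} {m0 : MeasurableSpace Ω} (μ : Measure Ω) [IsProbabilityMeasure μ]
    (ℱ : Filtration ℝ m0) (Y : ℝ → Ω → ℝ) (τ : Ω → ℝ)
    (hY : ProgMeasurable ℱ Y) (hτ : IsStoppingTime ℱ (fun ω => (τ ω : WithTop ℝ))) (hτ0 : ∀ ω, 0 ≤ τ ω)
    (C α β : ℝ) (hC : 0 < C) (hα : 0 < α) (hβ : 0 < β) :
    ∃ C' > (0 : ℝ), ∀ ε : ℝ, 0 < ε → ε ≤ 1 →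
      (∀ M : ℝ, ε ≤ M →
        μ {ω | ENNReal.ofReal M ≤ ⨆ t ∈ Set.Icc (0 : ℝ) (τ ω), ENNReal.ofReal |Y t ω|}
          ≤ ENNReal.ofReal (C * (ε / M) ^ α)) →
      (∀ t : ℝ, 1 ≤ t → μ {ω | t ≤ τ ω} ≤ ENNReal.ofReal (C * t ^ (-β))) →
      ∀ x : ℝ, ε ^ ((1 : ℝ) / 2) ≤ x →
        μ {ω | ENNReal.ofReal x ≤
            ⨆ t ∈ Set.Icc (0 : ℝ) (τ ω), ENNReal.ofReal |∫ s in Set.Ioc (0 : ℝ) t, Y s ω|}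
          ≤ ENNReal.ofReal (C' * (ε / x ^ 2) ^ (min (min α β) 2 / 8)) := by
  refine ⟨2 * C, by linarith, ?_⟩
  intro ε hε hε1 h1 h2 x hx
  set γ : ℝ := min (min α β) 2 / 8 with hγdef
  have hγα : γ ≤ α / 4 := by
    have h' : min (min α β) 2 ≤ α := le_trans (min_le_left _ _) (min_le_left _ _)
    have h0 : 0 < min (min α β) 2 := lt_min (lt_min hα hβ) two_pos
    rw [hγdef]; linarith
  have hγβ : γ ≤ β / 4 := by
    have h' : min (min α β) 2 ≤ β := le_trans (min_le_left _ _) (min_le_right _ _)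
    have h0 : 0 < min (min α β) 2 := lt_min (lt_min hα hβ) two_pos
    rw [hγdef]; linarith
  have hx0 : 0 < x := lt_of_lt_of_le (Real.rpow_pos_of_pos hε _) hx
  have hεx2 : ε ≤ x ^ 2 := by
    have h := pow_le_pow_left₀ (Real.rpow_pos_of_pos hε ((1:ℝ)/2)).le hx 2
    calc ε = (ε ^ ((1:ℝ)/2)) ^ 2 := by
            rw [← Real.rpow_natCast (ε ^ ((1:ℝ)/2)) 2, ← Real.rpow_mul hε.le]
            norm_num
      _ ≤ x ^ 2 := h
  set r : ℝ := x ^ 2 / ε with hrdef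
  have hr0 : 0 < r := by positivity
  have hr1 : 1 ≤ r := (one_le_div hε).mpr hεx2
  set T : ℝ := r ^ ((1:ℝ)/4) with hTdef
  have hT0 : 0 < T := Real.rpow_pos_of_pos hr0 _
  have hT1 : 1 ≤ T := by
    calc (1:ℝ) = 1 ^ ((1:ℝ)/4) := (Real.one_rpow _).symm
      _ ≤ T := Real.rpow_le_rpow zero_le_one hr1 (by norm_num)
  have hT4 : T ^ 4 = r := by
    rw [hTdef, ← Real.rpow_natCast (r ^ ((1:ℝ)/4)) 4, ← Real.rpow_mul hr0.le]
    norm_num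
  have hK : ε * T ^ 2 ≤ x := by
    have hsq : (ε * T ^ 2) ^ 2 ≤ x ^ 2 := by
      have e1 : (ε * T ^ 2) ^ 2 = ε ^ 2 * T ^ 4 := by ring
      have e2 : ε ^ 2 * r = ε * x ^ 2 := by
        rw [hrdef]; field_simp
      rw [e1, hT4, e2]
      nlinarith [sq_nonneg x]
    nlinarith [mul_nonneg hε.le (sq_nonneg T), hx0]
  have hMε : ε ≤ x / T := by
    rw [le_div_iff₀ hT0]
    nlinarith [mul_nonneg hε.le hT0.le]
  have hxT0 : 0 < x / T := by positivity
  -- set inclusion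
  have hsub : {ω | ENNReal.ofReal x ≤
        ⨆ t ∈ Set.Icc (0 : ℝ) (τ ω), ENNReal.ofReal |∫ s in Set.Ioc (0 : ℝ) t, Y s ω|}
      ⊆ {ω | T ≤ τ ω} ∪ {ω | ENNReal.ofReal (x / T) ≤
        ⨆ t ∈ Set.Icc (0 : ℝ) (τ ω), ENNReal.ofReal |Y t ω|} := by
    intro ω hω
    simp only [Set.mem_setOf_eq] at hω
    simp only [Set.mem_union, Set.mem_setOf_eq]
    by_contra hcon
    push_neg at hcon
    obtain ⟨hτT, hS⟩ := hcon
    have hYbd : ∀ t ∈ Set.Icc (0:ℝ) (τ ω), |Y t ω| ≤ x / T := by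
      intro t ht
      have h' : ENNReal.ofReal |Y t ω| < ENNReal.ofReal (x / T) :=
        lt_of_le_of_lt
          (le_iSup₂ (f := fun t (_ : t ∈ Set.Icc (0:ℝ) (τ ω)) => ENNReal.ofReal |Y t ω|) t ht) hS
      exact ((ENNReal.ofReal_lt_ofReal_iff hxT0).mp h').le
    have hIbd : (⨆ t ∈ Set.Icc (0:ℝ) (τ ω), ENNReal.ofReal |∫ s in Set.Ioc (0:ℝ) t, Y s ω|)
        ≤ ENNReal.ofReal (x / T * τ ω) := by
      refine iSup₂_le fun t ht => ENNReal.ofReal_le_ofReal ?_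
      have hvol : volume (Set.Ioc (0:ℝ) t) < ⊤ := by
        rw [Real.volume_Ioc]; exact ENNReal.ofReal_lt_top
      have hint : ‖∫ s in Set.Ioc (0:ℝ) t, Y s ω‖
          ≤ (x / T) * (volume (Set.Ioc (0:ℝ) t)).toReal := by
        apply norm_setIntegral_le_of_norm_le_const_ae' hvol
        filter_upwards with s hs
        rw [Real.norm_eq_abs]
        exact hYbd s ⟨hs.1.le, hs.2.trans ht.2⟩
      rw [Real.volume_Ioc, ENNReal.toReal_ofReal (by linarith [ht.1])] at hint
      rw [Real.norm_eq_abs] at hint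
      calc |∫ s in Set.Ioc (0:ℝ) t, Y s ω| ≤ (x / T) * (t - 0) := hint
        _ ≤ x / T * τ ω := by nlinarith [ht.2, hxT0]
    have hle : x ≤ x / T * τ ω := by
      have h' := hω.trans hIbd
      exact (ENNReal.ofReal_le_ofReal_iff (mul_nonneg hxT0.le (hτ0 ω))).mp h'
    have hlt : x / T * τ ω < x := by
      calc x / T * τ ω < x / T * T := mul_lt_mul_of_pos_left hτT hxT0
        _ = x := div_mul_cancel₀ x hT0.ne'
    linarith
  have hB := h2 T hT1
  have hD := h1 (x / T) hMε
  -- real inequality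
  have hreal : C * T ^ (-β) + C * (ε / (x / T)) ^ α ≤ 2 * C * (ε / x ^ 2) ^ γ := by
    have hεx : ε / x ^ 2 = r⁻¹ := by rw [hrdef, inv_div]
    have hrγ : (ε / x ^ 2) ^ γ = r ^ (-γ) := by
      rw [hεx, Real.inv_rpow hr0.le, Real.rpow_neg hr0.le]
    have ht1 : C * T ^ (-β) ≤ C * r ^ (-γ) := by
      apply mul_le_mul_of_nonneg_left _ hC.le
      rw [hTdef, ← Real.rpow_mul hr0.le]
      exact Real.rpow_le_rpow_of_exponent_le hr1 (by linarith)
    have ht2 : C * (ε / (x / T)) ^ α ≤ C * r ^ (-γ) := by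
      apply mul_le_mul_of_nonneg_left _ hC.le
      have hdiv : ε / (x / T) = ε * T / x := div_div_eq_mul_div ε x T
      have hbd : ε * T / x ≤ T⁻¹ := by
        rw [div_le_iff₀ hx0, inv_mul_eq_div, le_div_iff₀ hT0]
        nlinarith
      calc (ε / (x / T)) ^ α ≤ (T⁻¹) ^ α := by
            rw [hdiv]
            exact Real.rpow_le_rpow (by positivity) hbd hα.le
        _ = T ^ (-α) := by rw [← Real.rpow_neg_one T, ← Real.rpow_mul hT0.le]; norm_num
        _ = r ^ ((1:ℝ)/4 * (-α)) := by rw [hTdef, ← Real.rpow_mul hr0.le]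
        _ ≤ r ^ (-γ) := Real.rpow_le_rpow_of_exponent_le hr1 (by linarith)
    rw [hrγ]
    linarith
  calc μ {ω | ENNReal.ofReal x ≤
        ⨆ t ∈ Set.Icc (0 : ℝ) (τ ω), ENNReal.ofReal |∫ s in Set.Ioc (0 : ℝ) t, Y s ω|}
      ≤ μ ({ω | T ≤ τ ω} ∪ {ω | ENNReal.ofReal (x / T) ≤
        ⨆ t ∈ Set.Icc (0 : ℝ) (τ ω), ENNReal.ofReal |Y t ω|}) := measure_mono hsub
    _ ≤ μ {ω | T ≤ τ ω} + μ {ω | ENNReal.ofReal (x / T) ≤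
        ⨆ t ∈ Set.Icc (0 : ℝ) (τ ω), ENNReal.ofReal |Y t ω|} := measure_union_le _ _
    _ ≤ ENNReal.ofReal (C * T ^ (-β)) + ENNReal.ofReal (C * (ε / (x / T)) ^ α) :=
        add_le_add hB hD
    _ = ENNReal.ofReal (C * T ^ (-β) + C * (ε / (x / T)) ^ α) :=
        (ENNReal.ofReal_add (by positivity) (by positivity)).symm
    _ ≤ ENNReal.ofReal (2 * C * (ε / x ^ 2) ^ γ) := ENNReal.ofReal_le_ofReal hreal
end

section
/- For any word I = (i₁, …, i_N) ∈ {1,2}^N of length N ≥ 2 with i_{N−1} = 1 and i_N = 2, the iterated Lie bracket satisfies, for all x ∈ ℝ^d, V_I(x) = Σ_{j=3}^d (∂₁^{n₁(I)−1} ∂₂^{n₂(I)−1} ψ_j)(x₁, x₂) e_j, where n₁(I) and n₂(I) denote the number of occurrences of 1 and of 2 in the word I, and ψ_j is the j-th component of ψ. -/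
open MvPolynomial

/-- Lie bracket of vector fields on ℝ^d: `[U,V](x) = DV(x)·U(x) − DU(x)·V(x)`. -/
noncomputable def lieBracketVF {d : ℕ} (U V : (Fin d → ℝ) → (Fin d → ℝ)) :
    (Fin d → ℝ) → (Fin d → ℝ) :=
  fun x => fderiv ℝ V x (U x) - fderiv ℝ U x (V x)

/-- The driving vector fields `V_i(x) = e_i + Σ_{j ≥ 3} σ_{i,j}(x₁,x₂) e_j`, `i = 1,2`
(zero-based: `i : Fin 2`, components of `ℝ^d` indexed by `Fin d`, the "first two"
coordinates being indices `0, 1` and the remaining ones the indices `j ≥ 2`). -/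
noncomputable def driftField (d : ℕ) (hd : 3 ≤ d)
    (σ : Fin 2 → Fin d → MvPolynomial (Fin 2) ℝ) (i : Fin 2) :
    (Fin d → ℝ) → (Fin d → ℝ) :=
  fun x j =>
    (if (j : ℕ) = (i : ℕ) then 1 else 0) +
      (if 2 ≤ (j : ℕ) then
        MvPolynomial.eval (fun k : Fin 2 => x (Fin.castLE (by omega) k)) (σ i j)
      else 0)

/-- Right-nested iterated Lie bracket over a word `I ∈ {1,2}^N`:
`V_I = [V_{i₁}, [V_{i₂}, [... [V_{i_{N-1}}, V_{i_N}] ...]]]` (empty word ↦ 0). -/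
noncomputable def wordBracket {d : ℕ} (V : Fin 2 → (Fin d → ℝ) → (Fin d → ℝ)) :
    List (Fin 2) → (Fin d → ℝ) → (Fin d → ℝ)
  | [] => fun _ _ => 0
  | [i] => V i
  | i :: j :: l => lieBracketVF (V i) (wordBracket V (j :: l))

section Aux

variable {d : ℕ}

lemma my_pderiv_comm (i j : Fin 2) (p : MvPolynomial (Fin 2) ℝ) :
    pderiv i (pderiv j p) = pderiv j (pderiv i p) := by
  induction p using MvPolynomial.induction_on' with
  | monomial s a =>
    rcases eq_or_ne i j with rfl | hij
    · rfl
    · simp only [pderiv_monomial]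
      rw [tsub_tsub, tsub_tsub, add_comm]
      congr 1
      rw [Finsupp.tsub_apply, Finsupp.tsub_apply, Finsupp.single_apply, Finsupp.single_apply,
        if_neg hij, if_neg (Ne.symm hij)]
      simp only [Nat.sub_zero]
      ring
  | add p q hp hq => simp [hp, hq]

noncomputable def polyField (h2 : 2 ≤ d) (P : Fin d → MvPolynomial (Fin 2) ℝ) :
    (Fin d → ℝ) → (Fin d → ℝ) :=
  fun x j => if 2 ≤ (j : ℕ) then
      MvPolynomial.eval (fun k : Fin 2 => x (Fin.castLE h2 k)) (P j)
    else 0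

noncomputable def evalDeriv (h2 : 2 ≤ d) (P : MvPolynomial (Fin 2) ℝ) (x : Fin d → ℝ) :
    (Fin d → ℝ) →L[ℝ] ℝ :=
  ∑ k : Fin 2, MvPolynomial.eval (fun k : Fin 2 => x (Fin.castLE h2 k)) (pderiv k P) •
    (ContinuousLinearMap.proj (R := ℝ) (φ := fun _ : Fin d => ℝ) (Fin.castLE h2 k))

lemma evalDeriv_apply (h2 : 2 ≤ d) (P : MvPolynomial (Fin 2) ℝ) (x v : Fin d → ℝ) :
    evalDeriv h2 P x v =
      ∑ k : Fin 2, MvPolynomial.eval (fun k : Fin 2 => x (Fin.castLE h2 k)) (pderiv k P)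
        * v (Fin.castLE h2 k) := by
  simp [evalDeriv]

lemma hasFDerivAt_evalP (h2 : 2 ≤ d) (P : MvPolynomial (Fin 2) ℝ) (x : Fin d → ℝ) :
    HasFDerivAt (fun y : Fin d → ℝ => MvPolynomial.eval (fun k : Fin 2 => y (Fin.castLE h2 k)) P)
      (evalDeriv h2 P x) x := by
  induction P using MvPolynomial.induction_on with
  | C a =>
    simpa [evalDeriv] using hasFDerivAt_const (E := Fin d → ℝ) a x
  | add p q hp hq =>
    have := hp.add hq
    simp only [evalDeriv, map_add, add_smul, Finset.sum_add_distrib] at this ⊢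
    exact this
  | mul_X p i hp =>
    have hproj : HasFDerivAt (fun y : Fin d → ℝ => y (Fin.castLE h2 i))
        (ContinuousLinearMap.proj (R := ℝ) (φ := fun _ : Fin d => ℝ) (Fin.castLE h2 i)) x :=
      hasFDerivAt_apply (Fin.castLE h2 i) x
    have := hp.mul hproj
    simp only [map_mul, eval_X] at this ⊢
    refine this.congr_fderiv ?_
    ext v
    simp only [evalDeriv, ContinuousLinearMap.coe_sum', Finset.sum_apply,
      ContinuousLinearMap.coe_smul', Pi.smul_apply, ContinuousLinearMap.proj_apply,
      ContinuousLinearMap.add_apply, smul_eq_mul, Fin.sum_univ_two, pderiv_mul]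
    fin_cases i <;>
      simp [Fin.sum_univ_two, pderiv_X_self, pderiv_X_of_ne, smul_eq_mul] <;> ring

noncomputable def polyFieldDeriv (h2 : 2 ≤ d) (P : Fin d → MvPolynomial (Fin 2) ℝ)
    (x : Fin d → ℝ) : (Fin d → ℝ) →L[ℝ] (Fin d → ℝ) :=
  ContinuousLinearMap.pi fun j => if 2 ≤ (j : ℕ) then evalDeriv h2 (P j) x else 0

lemma polyField_hasFDerivAt (h2 : 2 ≤ d) (P : Fin d → MvPolynomial (Fin 2) ℝ) (x : Fin d → ℝ) :
    HasFDerivAt (polyField h2 P) (polyFieldDeriv h2 P x) x := by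
  have : HasFDerivAt (fun (y : Fin d → ℝ) (j : Fin d) => if 2 ≤ (j : ℕ) then
        MvPolynomial.eval (fun k : Fin 2 => y (Fin.castLE h2 k)) (P j) else 0)
      (ContinuousLinearMap.pi fun j : Fin d => if 2 ≤ (j : ℕ) then evalDeriv h2 (P j) x else 0) x := by
    apply hasFDerivAt_pi.2
    intro j
    by_cases hj : 2 ≤ (j : ℕ)
    · simpa [hj] using hasFDerivAt_evalP h2 (P j) x
    · simpa [hj] using hasFDerivAt_const (E := Fin d → ℝ) (0 : ℝ) x
  exact this

lemma polyField_fderiv (h2 : 2 ≤ d) (P : Fin d → MvPolynomial (Fin 2) ℝ) (x : Fin d → ℝ) :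
    fderiv ℝ (polyField h2 P) x = polyFieldDeriv h2 P x :=
  (polyField_hasFDerivAt h2 P x).fderiv

lemma driftField_eq (hd : 3 ≤ d) (σ : Fin 2 → Fin d → MvPolynomial (Fin 2) ℝ) (i : Fin 2) :
    driftField d hd σ i = fun x => (fun j : Fin d => if (j : ℕ) = (i : ℕ) then (1:ℝ) else 0)
      + polyField (by omega) (σ i) x := by
  funext x j
  simp [driftField, polyField]

lemma driftField_fderiv (hd : 3 ≤ d) (σ : Fin 2 → Fin d → MvPolynomial (Fin 2) ℝ) (i : Fin 2)
    (x : Fin d → ℝ) :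
    fderiv ℝ (driftField d hd σ i) x = polyFieldDeriv (by omega) (σ i) x := by
  rw [driftField_eq hd σ i]
  simpa using (polyField_hasFDerivAt (by omega) (σ i) x).fderiv

lemma polyFieldDeriv_apply_drift (hd : 3 ≤ d) (σ : Fin 2 → Fin d → MvPolynomial (Fin 2) ℝ)
    (P : Fin d → MvPolynomial (Fin 2) ℝ) (i : Fin 2) (x : Fin d → ℝ) :
    polyFieldDeriv (by omega : 2 ≤ d) P x (driftField d hd σ i x)
      = polyField (by omega) (fun j => pderiv i (P j)) x := by
  funext j
  simp only [polyFieldDeriv, ContinuousLinearMap.pi_apply, polyField]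
  by_cases hj : 2 ≤ (j : ℕ)
  · simp only [hj, if_true, evalDeriv_apply]
    have hv : ∀ k : Fin 2, driftField d hd σ i x (Fin.castLE (by omega) k)
        = if k = i then 1 else 0 := by
      intro k
      have hk : ¬ (2 ≤ ((Fin.castLE (by omega : 2 ≤ d) k : Fin d) : ℕ)) := by
        simpa using k.isLt.not_ge
      simp only [driftField]
      rw [if_neg hk, add_zero]
      simp [Fin.ext_iff]
    rw [Finset.sum_congr rfl (fun k _ => by rw [hv k])]
    rw [Finset.sum_eq_single i (by intro k _ hk; simp [hk]) (by simp)]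
    simp
  · simp [hj]

lemma polyFieldDeriv_apply_poly (h2 : 2 ≤ d)
    (P Q : Fin d → MvPolynomial (Fin 2) ℝ) (x : Fin d → ℝ) :
    polyFieldDeriv h2 P x (polyField h2 Q x) = 0 := by
  funext j
  simp only [polyFieldDeriv, ContinuousLinearMap.pi_apply]
  by_cases hj : 2 ≤ (j : ℕ)
  · simp only [hj, if_true, evalDeriv_apply]
    apply Finset.sum_eq_zero
    intro k _
    have hk : ¬ (2 ≤ ((Fin.castLE h2 k : Fin d) : ℕ)) := by simpa using k.isLt.not_ge
    simp [polyField, hk, k.isLt.not_ge]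
  · simp [hj]

lemma bracket_drift_poly (hd : 3 ≤ d) (σ : Fin 2 → Fin d → MvPolynomial (Fin 2) ℝ)
    (P : Fin d → MvPolynomial (Fin 2) ℝ) (i : Fin 2) (x : Fin d → ℝ) :
    lieBracketVF (driftField d hd σ i) (polyField (by omega) P) x
      = polyField (by omega) (fun j => pderiv i (P j)) x := by
  unfold lieBracketVF
  rw [polyField_fderiv, driftField_fderiv, polyFieldDeriv_apply_drift,
    polyFieldDeriv_apply_poly]
  simp

lemma bracket_base (hd : 3 ≤ d) (σ : Fin 2 → Fin d → MvPolynomial (Fin 2) ℝ) (x : Fin d → ℝ) :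
    lieBracketVF (driftField d hd σ 0) (driftField d hd σ 1) x
      = polyField (by omega) (fun j => pderiv 0 (σ 1 j) - pderiv 1 (σ 0 j)) x := by
  unfold lieBracketVF
  rw [driftField_fderiv, driftField_fderiv, polyFieldDeriv_apply_drift,
    polyFieldDeriv_apply_drift]
  funext j
  simp only [Pi.sub_apply, polyField]
  by_cases hj : 2 ≤ (j : ℕ) <;> simp [hj]

lemma wordBracket_poly (hd : 3 ≤ d) (σ : Fin 2 → Fin d → MvPolynomial (Fin 2) ℝ)
    (l : List (Fin 2)) :
    wordBracket (driftField d hd σ) (l ++ [(0 : Fin 2), (1 : Fin 2)])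
      = polyField (by omega) (fun j =>
          l.foldr (fun i q => pderiv i q)
            (pderiv (0 : Fin 2) (σ 1 j) - pderiv (1 : Fin 2) (σ 0 j))) := by
  induction l with
  | nil =>
    funext x
    exact bracket_base hd σ x
  | cons i l ih =>
    funext x
    obtain ⟨a, t, h⟩ : ∃ a t, l ++ [(0 : Fin 2), 1] = a :: t := by
      cases l with
      | nil => exact ⟨0, [1], rfl⟩
      | cons a t => exact ⟨a, t ++ [0, 1], by simp⟩
    have key : wordBracket (driftField d hd σ) ((i :: l) ++ [(0 : Fin 2), 1])
        = lieBracketVF (driftField d hd σ i)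
            (wordBracket (driftField d hd σ) (l ++ [(0 : Fin 2), 1])) := by
      rw [List.cons_append, h]
      rfl
    rw [key, ih]
    exact bracket_drift_poly hd σ _ i x

lemma foldr_pderiv_eq (l : List (Fin 2)) (p : MvPolynomial (Fin 2) ℝ) :
    l.foldr (fun i q => pderiv i q) p
      = (fun q => pderiv (0 : Fin 2) q)^[l.count 0]
          ((fun q => pderiv (1 : Fin 2) q)^[l.count 1] p) := by
  have hcomm : Function.Commute (fun q : MvPolynomial (Fin 2) ℝ => pderiv (0 : Fin 2) q)
      (fun q => pderiv (1 : Fin 2) q) := by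
    intro q
    exact my_pderiv_comm 0 1 q
  induction l with
  | nil => simp
  | cons i l ih =>
    have hi : i = 0 ∨ i = 1 := by omega
    rcases hi with rfl | rfl
    · have c1 : (((0 : Fin 2) :: l).count 0) = l.count 0 + 1 := by simp
      have c2 : (((0 : Fin 2) :: l).count 1) = l.count 1 := by
        rw [List.count_cons_of_ne (by decide)]
      rw [List.foldr_cons, ih, c1, c2, Function.iterate_succ_apply']
    · have c1 : (((1 : Fin 2) :: l).count 0) = l.count 0 := by
        rw [List.count_cons_of_ne (by decide)]
      have c2 : (((1 : Fin 2) :: l).count 1) = l.count 1 + 1 := by simp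
      rw [List.foldr_cons, ih, c1, c2, Function.iterate_succ_apply',
        ← (hcomm.iterate_left (l.count 0)).eq]

end Aux

/-- key identity in the proof of Lemma 1.1: for any word
`I = (i₁, …, i_N) ∈ {1,2}^N` with `N ≥ 2`, `i_{N-1} = 1` and `i_N = 2` (in the zero-based
encoding: `I = l ++ [0, 1]`), the iterated bracket satisfies, for all `x ∈ ℝ^d`,
`V_I(x) = Σ_{j ≥ 3} (∂₁^{n₁(I)-1} ∂₂^{n₂(I)-1} ψ_j)(x₁,x₂) e_j`, where `n₁(I), n₂(I)` count
the occurrences of `1` resp. `2` in `I` and `ψ = ∂₁σ₂ − ∂₂σ₁`. -/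
theorem stmt7 (d n : ℕ) (hd : 3 ≤ d) (hn : 1 ≤ n)
    (σ : Fin 2 → Fin d → MvPolynomial (Fin 2) ℝ)
    (hdeg : ∀ i j, (σ i j).totalDegree ≤ n)
    (I : List (Fin 2)) (hlen : 2 ≤ I.length)
    (hend : ∃ l : List (Fin 2), I = l ++ [(0 : Fin 2), (1 : Fin 2)]) :
    ∀ x : Fin d → ℝ,
      wordBracket (driftField d hd σ) I x = fun j : Fin d =>
        if 2 ≤ (j : ℕ) then
          MvPolynomial.eval (fun k : Fin 2 => x (Fin.castLE (by omega) k))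
            ((fun p => pderiv (0 : Fin 2) p)^[I.count 0 - 1]
              ((fun p => pderiv (1 : Fin 2) p)^[I.count 1 - 1]
                (pderiv (0 : Fin 2) (σ 1 j) - pderiv (1 : Fin 2) (σ 0 j))))
        else 0 := by
  obtain ⟨l, rfl⟩ := hend
  intro x
  rw [wordBracket_poly hd σ l]
  funext j
  simp only [polyField]
  rw [foldr_pderiv_eq]
  have h0 : (l ++ [(0 : Fin 2), 1]).count 0 - 1 = l.count 0 := by simp
  have h1 : (l ++ [(0 : Fin 2), 1]).count 1 - 1 = l.count 1 := by simp
  rw [h0, h1]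
end

section
/- For any word I = (i₁, …, i_N) ∈ {1,2}^N of length N ≥ n + 2, the iterated Lie bracket V_I is identically zero on ℝ^d. In particular, all iterated Lie brackets of V₁ and V₂ involving at least n + 1 bracket operations vanish, so the family {V₁, V₂} generates a nilpotent Lie algebra of vector fields. -/
open MvPolynomial

/-! ### Auxiliary lemmas -/

section Aux

lemma totalDegree_pderiv_le' {ι : Type*} (i : ι) (p : MvPolynomial ι ℝ) (m : ℕ)
    (hp : p.totalDegree ≤ m + 1) : (pderiv i p).totalDegree ≤ m := by
  classical
  conv_lhs => rw [p.as_sum, map_sum]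
  refine totalDegree_finsetSum_le ?_
  intro s hs
  rw [pderiv_monomial]
  rcases eq_or_ne (s i) 0 with h0 | h0
  · simp [h0]
  · refine (totalDegree_monomial_le _ _).trans ?_
    simp only [Function.id_def]
    have hle : Finsupp.single i 1 ≤ s := by
      rw [Finsupp.single_le_iff]; omega
    have hsum : (s - Finsupp.single i 1).sum (fun _ n => n) + 1 = s.sum (fun _ n => n) := by
      have := tsub_add_cancel_of_le hle
      calc (s - Finsupp.single i 1).sum (fun _ n => n) + 1
          = (s - Finsupp.single i 1).sum (fun _ n => n)
            + (Finsupp.single i 1).sum (fun _ n => n) := by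
            rw [Finsupp.sum_single_index]; rfl
        _ = ((s - Finsupp.single i 1) + Finsupp.single i 1).sum (fun _ n => n) := by
            rw [Finsupp.sum_add_index] <;> simp
        _ = s.sum (fun _ n => n) := by rw [this]
    have hsdeg : s.sum (fun _ n => n) ≤ m + 1 := le_trans (le_totalDegree hs) hp
    omega

lemma pderiv_eq_zero_of_totalDegree_eq_zero {ι : Type*} (i : ι) (p : MvPolynomial ι ℝ)
    (hp : p.totalDegree = 0) : pderiv i p = 0 := by
  classical
  rw [p.as_sum, map_sum]
  refine Finset.sum_eq_zero fun s hs => ?_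
  rw [pderiv_monomial, (totalDegree_eq_zero_iff ι p).1 hp s hs i]
  simp

lemma hasFDerivAt_eval_pi {ι : Type*} [Fintype ι] [DecidableEq ι] (p : MvPolynomial ι ℝ)
    (x : ι → ℝ) :
    HasFDerivAt (fun y : ι → ℝ => eval y p)
      (∑ k, eval x (pderiv k p) • (ContinuousLinearMap.proj k : (ι → ℝ) →L[ℝ] ℝ)) x := by
  induction p using MvPolynomial.induction_on with
  | C a =>
      simp only [eval_C, pderiv_C, map_zero, zero_smul, Finset.sum_const_zero]
      exact hasFDerivAt_const a x
  | add p q hp hq =>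
      have := hp.add hq
      simp only [map_add]
      refine this.congr_fderiv ?_
      refine ContinuousLinearMap.ext fun v => ?_
      simp [add_mul, Finset.sum_add_distrib]
  | mul_X p k hp =>
      have h1 := hp.mul (hasFDerivAt_apply k x)
      have e : (fun y : ι → ℝ => eval y (p * X k)) = (fun y => eval y p) * fun f => f k := by
        ext y; simp
      rw [e]
      refine h1.congr_fderiv ?_
      · refine ContinuousLinearMap.ext fun v => ?_
        have key : ∀ j : ι, eval x (pderiv j (p * X k)) * v j
            = x k * (eval x (pderiv j p) * v j) + (if j = k then eval x p * v j else 0) := by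
          intro j
          rcases eq_or_ne j k with rfl | h
          · simp [pderiv_mul]; ring
          · simp [pderiv_mul, pderiv_X_of_ne h.symm, h]; ring
        simp only [ContinuousLinearMap.coe_sum', Finset.sum_apply,
          ContinuousLinearMap.smul_apply, ContinuousLinearMap.proj_apply, smul_eq_mul, key,
          Finset.sum_add_distrib, Finset.sum_ite_eq', Finset.mem_univ, if_true,
          ContinuousLinearMap.add_apply, ← Finset.mul_sum]
        ring

variable {d : ℕ}

/-- Projection onto the first two coordinates. -/
noncomputable def projD (h2 : 2 ≤ d) : (Fin d → ℝ) →L[ℝ] (Fin 2 → ℝ) :=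
  ContinuousLinearMap.pi (fun k : Fin 2 => ContinuousLinearMap.proj (Fin.castLE h2 k))

/-- Derivative of `x ↦ eval (x ∘ castLE) p`. -/
noncomputable def DevalD (h2 : 2 ≤ d) (p : MvPolynomial (Fin 2) ℝ) (x : Fin d → ℝ) :
    (Fin d → ℝ) →L[ℝ] ℝ :=
  ∑ k : Fin 2, eval (fun k' : Fin 2 => x (Fin.castLE h2 k')) (pderiv k p) •
    (ContinuousLinearMap.proj (Fin.castLE h2 k) : (Fin d → ℝ) →L[ℝ] ℝ)

lemma DevalD_apply (h2 : 2 ≤ d) (p : MvPolynomial (Fin 2) ℝ) (x v : Fin d → ℝ) :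
    DevalD h2 p x v
      = ∑ k : Fin 2, eval (fun k' : Fin 2 => x (Fin.castLE h2 k')) (pderiv k p)
          * v (Fin.castLE h2 k) := by
  simp [DevalD]

lemma hasFDerivAt_evalD (h2 : 2 ≤ d) (p : MvPolynomial (Fin 2) ℝ) (x : Fin d → ℝ) :
    HasFDerivAt (fun y : Fin d → ℝ => eval (fun k : Fin 2 => y (Fin.castLE h2 k)) p)
      (DevalD h2 p x) x := by
  have hπ := (projD (d := d) h2).hasFDerivAt (x := x)
  have h := (hasFDerivAt_eval_pi p ((projD h2) x)).comp x hπ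
  have e : (∑ k, eval ((projD h2) x) (pderiv k p) •
        (ContinuousLinearMap.proj k : (Fin 2 → ℝ) →L[ℝ] ℝ)).comp (projD h2)
      = DevalD h2 p x := by
    ext v
    simp [DevalD, projD]
  rw [e] at h
  refine h.congr_of_eventuallyEq ?_
  filter_upwards with y
  simp [projD, Function.comp]

/-- The general shape of our vector fields: constant plus polynomial part in coordinates ≥ 2. -/
noncomputable def fieldF (h2 : 2 ≤ d) (c : Fin d → ℝ)
    (q : Fin d → MvPolynomial (Fin 2) ℝ) : (Fin d → ℝ) → (Fin d → ℝ) :=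
  fun x j => c j +
    if 2 ≤ (j : ℕ) then eval (fun k : Fin 2 => x (Fin.castLE h2 k)) (q j) else 0

noncomputable def DfieldF (h2 : 2 ≤ d) (q : Fin d → MvPolynomial (Fin 2) ℝ)
    (x : Fin d → ℝ) : (Fin d → ℝ) →L[ℝ] (Fin d → ℝ) :=
  ContinuousLinearMap.pi (fun j : Fin d => if 2 ≤ (j : ℕ) then DevalD h2 (q j) x else 0)

lemma hasFDerivAt_fieldF (h2 : 2 ≤ d) (c : Fin d → ℝ)
    (q : Fin d → MvPolynomial (Fin 2) ℝ) (x : Fin d → ℝ) :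
    HasFDerivAt (fieldF h2 c q) (DfieldF h2 q x) x := by
  unfold fieldF DfieldF
  apply hasFDerivAt_pi.2
  intro j
  by_cases hj : 2 ≤ (j : ℕ)
  · simp only [hj, if_true]
    exact (hasFDerivAt_evalD h2 (q j) x).const_add (c j)
  · simp only [hj, if_false]
    exact hasFDerivAt_const _ _

lemma fieldF_castLE (h2 : 2 ≤ d) (c : Fin d → ℝ) (q : Fin d → MvPolynomial (Fin 2) ℝ)
    (x : Fin d → ℝ) (k : Fin 2) :
    fieldF h2 c q x (Fin.castLE h2 k) = c (Fin.castLE h2 k) := by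
  have hk : ¬ 2 ≤ ((Fin.castLE h2 k : Fin d) : ℕ) := by
    simp only [Fin.coe_castLE]
    have := k.isLt; omega
  simp [fieldF, hk]
  intro h; exact absurd h (by have := k.isLt; omega)

lemma bracket_fieldF (h2 : 2 ≤ d) (c c' : Fin d → ℝ)
    (q q' : Fin d → MvPolynomial (Fin 2) ℝ) :
    lieBracketVF (fieldF h2 c q) (fieldF h2 c' q') =
      fieldF h2 0 (fun j =>
        (∑ k : Fin 2, C (c (Fin.castLE h2 k)) * pderiv k (q' j))
          - ∑ k : Fin 2, C (c' (Fin.castLE h2 k)) * pderiv k (q j)) := by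
  funext x j
  have key : ∀ (c₁ : Fin d → ℝ) (q₁ q₂ : Fin d → MvPolynomial (Fin 2) ℝ),
      2 ≤ (j : ℕ) →
      DfieldF h2 q₂ x (fieldF h2 c₁ q₁ x) j
        = eval (fun k' : Fin 2 => x (Fin.castLE h2 k'))
            (∑ k : Fin 2, C (c₁ (Fin.castLE h2 k)) * pderiv k (q₂ j)) := by
    intro c₁ q₁ q₂ hj
    rw [DfieldF]
    simp only [ContinuousLinearMap.pi_apply, hj, if_true]
    rw [DevalD_apply, map_sum]
    refine Finset.sum_congr rfl fun k _ => ?_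
    rw [fieldF_castLE, eval_mul, eval_C, mul_comm]
  simp only [lieBracketVF, (hasFDerivAt_fieldF h2 c q x).fderiv,
    (hasFDerivAt_fieldF h2 c' q' x).fderiv, Pi.sub_apply]
  by_cases hj : 2 ≤ (j : ℕ)
  · rw [key c q q' hj, key c' q' q hj]
    simp [fieldF, hj]
  · simp [DfieldF, fieldF, hj, ContinuousLinearMap.pi_apply]

lemma sum_ind (h2 : 2 ≤ d) (i : Fin 2) (P : Fin 2 → MvPolynomial (Fin 2) ℝ) :
    (∑ k : Fin 2,
        C (if ((Fin.castLE h2 k : Fin d) : ℕ) = (i : ℕ) then (1 : ℝ) else 0) * P k)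
      = P i := by
  rw [Finset.sum_eq_single i]
  · simp
  · intro k _ hk
    have hne : ¬ (k : ℕ) = (i : ℕ) := fun h => hk (Fin.ext h)
    simp [hne]
  · simp

end Aux

section Main

variable {d : ℕ}

lemma drift_eq (hd : 3 ≤ d) (σ : Fin 2 → Fin d → MvPolynomial (Fin 2) ℝ) (i : Fin 2) :
    driftField d hd σ i
      = fieldF (by omega) (fun j => if (j : ℕ) = (i : ℕ) then 1 else 0) (σ i) := rfl

lemma bracket_drift_fieldF (hd : 3 ≤ d) (σ : Fin 2 → Fin d → MvPolynomial (Fin 2) ℝ)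
    (i : Fin 2) (q : Fin d → MvPolynomial (Fin 2) ℝ) :
    lieBracketVF (driftField d hd σ i) (fieldF (by omega : 2 ≤ d) 0 q)
      = fieldF (by omega : 2 ≤ d) 0 (fun j => pderiv i (q j)) := by
  have h2 : 2 ≤ d := by omega
  rw [drift_eq hd σ i, bracket_fieldF h2]
  funext x j
  simp only [fieldF, Pi.zero_apply, zero_add]
  by_cases hj : 2 ≤ (j : ℕ)
  · simp only [hj, if_true]
    rw [sum_ind h2 i]
    simp
  · simp [hj]

lemma main_induction (hd : 3 ≤ d) (n : ℕ) (hn : 1 ≤ n)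
    (σ : Fin 2 → Fin d → MvPolynomial (Fin 2) ℝ)
    (hdeg : ∀ i j, (σ i j).totalDegree ≤ n) :
    ∀ (l : List (Fin 2)) (i i' : Fin 2),
      ∃ q : Fin d → MvPolynomial (Fin 2) ℝ,
        (∀ j, q j = 0 ∨ (q j).totalDegree + (i :: i' :: l).length ≤ n + 1) ∧
        wordBracket (driftField d hd σ) (i :: i' :: l) = fieldF (by omega : 2 ≤ d) 0 q := by
  have h2 : 2 ≤ d := by omega
  intro l
  induction l with
  | nil =>
      intro i i'
      refine ⟨fun j => pderiv i (σ i' j) - pderiv i' (σ i j), ?_, ?_⟩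
      · intro j
        right
        have b1 : (pderiv i (σ i' j)).totalDegree ≤ n - 1 :=
          totalDegree_pderiv_le' _ _ _ (by have := hdeg i' j; omega)
        have b2 : (pderiv i' (σ i j)).totalDegree ≤ n - 1 :=
          totalDegree_pderiv_le' _ _ _ (by have := hdeg i j; omega)
        have hsub : (pderiv i (σ i' j) - pderiv i' (σ i j)).totalDegree
            ≤ max (pderiv i (σ i' j)).totalDegree (pderiv i' (σ i j)).totalDegree := by
          rw [sub_eq_add_neg]
          refine (totalDegree_add _ _).trans ?_
          rw [totalDegree_neg]
        simp only [List.length]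
        omega
      · show lieBracketVF (driftField d hd σ i) (driftField d hd σ i') = _
        rw [drift_eq hd σ i, drift_eq hd σ i', bracket_fieldF h2]
        funext x j
        simp only [fieldF, Pi.zero_apply, zero_add]
        by_cases hj : 2 ≤ (j : ℕ)
        · simp only [hj, if_true]
          rw [sum_ind h2 i, sum_ind h2 i']
        · simp [hj]
  | cons a t ih =>
      intro i i'
      obtain ⟨q, hq, hw⟩ := ih i' a
      refine ⟨fun j => pderiv i (q j), ?_, ?_⟩
      · intro j
        rcases hq j with h0 | hdq
        · left; simp [h0]
        · rcases Nat.eq_zero_or_pos (q j).totalDegree with hz | hpos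
          · left; exact pderiv_eq_zero_of_totalDegree_eq_zero i (q j) hz
          · right
            have : (pderiv i (q j)).totalDegree ≤ (q j).totalDegree - 1 :=
              totalDegree_pderiv_le' _ _ _ (by omega)
            simp only [List.length] at hdq ⊢
            omega
      · show lieBracketVF (driftField d hd σ i) (wordBracket (driftField d hd σ) (i' :: a :: t))
            = _
        rw [hw, bracket_drift_fieldF hd σ i q]

end Main

/-- for any word `I ∈ {1,2}^N` of length `N ≥ n + 2`, the iterated Lie
bracket `V_I` vanishes identically on `ℝ^d`; in particular all iterated brackets of
`V₁, V₂` involving at least `n + 1` bracket operations vanish, so `{V₁, V₂}` generates a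
nilpotent Lie algebra of vector fields. -/
theorem stmt9 (d n : ℕ) (hd : 3 ≤ d) (hn : 1 ≤ n)
    (σ : Fin 2 → Fin d → MvPolynomial (Fin 2) ℝ)
    (hdeg : ∀ i j, (σ i j).totalDegree ≤ n)
    (I : List (Fin 2)) (hlen : n + 2 ≤ I.length) :
    ∀ x : Fin d → ℝ, wordBracket (driftField d hd σ) I x = 0 := by
  intro x
  match I, hlen with
  | i :: i' :: l, hlen =>
    obtain ⟨q, hq, hw⟩ := main_induction hd n hn σ hdeg l i i'
    have hq0 : ∀ j, q j = 0 := by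
      intro j
      rcases hq j with h | h
      · exact h
      · exfalso
        simp only [List.length] at h hlen
        omega
    rw [hw]
    funext j
    simp [fieldF, hq0 j]
end

section
/- Fix any point w = (w₁, w₂) ∈ ℝ². Then the following are equivalent: (a) for every x ∈ ℝ^d, the linear span of the set of vectors { V_I(x) : I a word over {1,2} of length ≥ 1 } equals ℝ^d (the parabolic Hörmander condition for the driftless system with driving fields V₁, V₂); (b) the (d−2) × K matrix Σ(w₁, w₂), whose columns are the vectors (∂₁^{l} ∂₂^{m} ψ)(w₁, w₂) ∈ ℝ^{d−2} indexed by the pairs (l, m) with l, m ≥ 0 and l + m ≤ n − 1, has full rank d − 2. -/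
open MvPolynomial

noncomputable def evalD {m : ℕ} (p : MvPolynomial (Fin m) ℝ) (x : Fin m → ℝ) :
    (Fin m → ℝ) →L[ℝ] ℝ :=
  ∑ i, MvPolynomial.eval x (pderiv i p) • ContinuousLinearMap.proj i

lemma evalD_apply {m : ℕ} (p : MvPolynomial (Fin m) ℝ) (x v : Fin m → ℝ) :
    evalD p x v = ∑ i, MvPolynomial.eval x (pderiv i p) * v i := by
  simp [evalD]

lemma hasFDerivAt_eval {m : ℕ} (p : MvPolynomial (Fin m) ℝ) (x : Fin m → ℝ) :
    HasFDerivAt (fun y : Fin m → ℝ => MvPolynomial.eval y p) (evalD p x) x := by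
  induction p using MvPolynomial.induction_on with
  | C a =>
      have : evalD (C a : MvPolynomial (Fin m) ℝ) x = 0 := by
        ext v; simp [evalD_apply]
      rw [this]
      simpa using hasFDerivAt_const a x
  | add p q hp hq =>
      have : evalD (p + q) x = evalD p x + evalD q x := by
        ext v; simp [evalD_apply, add_mul, Finset.sum_add_distrib]
      rw [this]
      have h := hp.add hq
      simpa [Pi.add_def] using h
  | mul_X p i hp =>
      have hXi : HasFDerivAt (fun y : Fin m → ℝ => y i)
          (ContinuousLinearMap.proj i : (Fin m → ℝ) →L[ℝ] ℝ) x := by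
        exact (ContinuousLinearMap.proj i : (Fin m → ℝ) →L[ℝ] ℝ).hasFDerivAt
      have h := hp.mul hXi
      have : evalD (p * X i) x
          = x i • evalD p x
            + eval x p • (ContinuousLinearMap.proj i : (Fin m → ℝ) →L[ℝ] ℝ) := by
        ext v
        simp only [evalD_apply, ContinuousLinearMap.add_apply, ContinuousLinearMap.smul_apply,
          ContinuousLinearMap.proj_apply, smul_eq_mul, pderiv_mul]
        classical
        simp only [map_add, map_mul, eval_X, add_mul, Finset.sum_add_distrib]
        congr 1
        · rw [Finset.mul_sum]; apply Finset.sum_congr rfl; intro j _; ring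
        · classical
          simp [pderiv_X, Pi.single_apply, apply_ite (MvPolynomial.eval x), mul_ite, ite_mul,
            Finset.sum_ite_eq]
      rw [this]
      simpa [smul_smul, add_comm, Pi.mul_def] using h
section
variable (d : ℕ) (hd : 3 ≤ d)

noncomputable def pr2 : (Fin d → ℝ) →L[ℝ] (Fin 2 → ℝ) :=
  ContinuousLinearMap.pi fun t : Fin 2 =>
    ContinuousLinearMap.proj (Fin.castLE (by omega) t)

lemma pr2_apply (x : Fin d → ℝ) (t : Fin 2) :
    pr2 d hd x t = x (Fin.castLE (by omega) t) := rfl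

noncomputable def polyVF (c : Fin d → ℝ) (q : Fin d → MvPolynomial (Fin 2) ℝ) :
    (Fin d → ℝ) → (Fin d → ℝ) :=
  fun x j => c j + if 2 ≤ (j : ℕ) then MvPolynomial.eval (pr2 d hd x) (q j) else 0

noncomputable def polyVFD (q : Fin d → MvPolynomial (Fin 2) ℝ) (x : Fin d → ℝ) :
    (Fin d → ℝ) →L[ℝ] (Fin d → ℝ) :=
  ContinuousLinearMap.pi fun j =>
    if 2 ≤ (j : ℕ) then (evalD (q j) (pr2 d hd x)).comp (pr2 d hd) else 0

lemma hasFDerivAt_polyVF (c : Fin d → ℝ) (q : Fin d → MvPolynomial (Fin 2) ℝ)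
    (x : Fin d → ℝ) :
    HasFDerivAt (polyVF d hd c q) (polyVFD d hd q x) x := by
  rw [polyVFD]
  apply hasFDerivAt_pi.2
  intro j
  by_cases h : 2 ≤ (j : ℕ)
  · simp only [polyVF, h, if_true]
    have := (hasFDerivAt_const (c j) x).add
      (((hasFDerivAt_eval (q j) (pr2 d hd x)).comp x (pr2 d hd).hasFDerivAt))
    simpa [Function.comp_def, Pi.add_def] using this
  · simp only [polyVF, h, if_false]
    exact hasFDerivAt_const _ x

lemma fderiv_polyVF_apply (c : Fin d → ℝ) (q : Fin d → MvPolynomial (Fin 2) ℝ)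
    (x v : Fin d → ℝ) (j : Fin d) :
    fderiv ℝ (polyVF d hd c q) x v j =
      if 2 ≤ (j : ℕ) then
        ∑ t : Fin 2, MvPolynomial.eval (pr2 d hd x) (pderiv t (q j)) * v (Fin.castLE (by omega) t)
      else 0 := by
  rw [(hasFDerivAt_polyVF d hd c q x).fderiv]
  by_cases h : 2 ≤ (j : ℕ) <;>
    simp [polyVFD, ContinuousLinearMap.pi_apply, h, evalD_apply, pr2_apply]

lemma lieBracket_polyVF (c₁ c₂ : Fin d → ℝ) (q₁ q₂ : Fin d → MvPolynomial (Fin 2) ℝ) :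
    lieBracketVF (polyVF d hd c₁ q₁) (polyVF d hd c₂ q₂) =
      polyVF d hd 0 (fun j =>
        (∑ t : Fin 2, C (c₁ (Fin.castLE (by omega) t)) * pderiv t (q₂ j)) -
          ∑ t : Fin 2, C (c₂ (Fin.castLE (by omega) t)) * pderiv t (q₁ j)) := by
  funext x j
  have hv : ∀ (c : Fin d → ℝ) (q : Fin d → MvPolynomial (Fin 2) ℝ) (t : Fin 2),
      polyVF d hd c q x (Fin.castLE (by omega) t) = c (Fin.castLE (by omega) t) := by
    intro c q t
    have : ¬ 2 ≤ ((Fin.castLE (by omega : 2 ≤ d) t : Fin d) : ℕ) := by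
      simpa using t.isLt
    simp [polyVF, this]
    intro h; omega
  simp only [lieBracketVF, Pi.sub_apply, fderiv_polyVF_apply, hv]
  by_cases h : 2 ≤ (j : ℕ)
  · simp only [h, if_true, polyVF, Pi.zero_apply, zero_add, map_sub, map_sum, map_mul, eval_C]
    congr 1 <;> (apply Finset.sum_congr rfl; intro t _; ring)
  · simp [polyVF, h]
noncomputable def wordC (i : Fin 2) : Fin d → ℝ := fun j => if (j : ℕ) = (i : ℕ) then 1 else 0

noncomputable def wcst : List (Fin 2) → Fin d → ℝ
  | [i] => wordC d i
  | _ => 0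

variable {d} in
noncomputable def wordQ (σ : Fin 2 → Fin d → MvPolynomial (Fin 2) ℝ) :
    List (Fin 2) → Fin d → MvPolynomial (Fin 2) ℝ
  | [] => 0
  | [i] => σ i
  | [i, j] => fun k => pderiv i (σ j k) - pderiv j (σ i k)
  | i :: j :: m :: l => fun k => pderiv i (wordQ σ (j :: m :: l) k)

lemma driftField_eq_s10 (σ : Fin 2 → Fin d → MvPolynomial (Fin 2) ℝ) (i : Fin 2) :
    driftField d hd σ i = polyVF d hd (wordC d i) (σ i) := rfl

lemma sum_wordC (i : Fin 2) (p : Fin 2 → MvPolynomial (Fin 2) ℝ) :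
    (∑ t : Fin 2, C (wordC d i (Fin.castLE (by omega : 2 ≤ d) t)) * p t) = p i := by
  have hv : ∀ t : Fin 2, ((Fin.castLE (by omega : 2 ≤ d) t : Fin d) : ℕ) = (t : ℕ) := fun t => rfl
  fin_cases i <;>
    simp [wordC, Fin.sum_univ_two, hv]

lemma wordBracket_eq (σ : Fin 2 → Fin d → MvPolynomial (Fin 2) ℝ) :
    ∀ I : List (Fin 2), I ≠ [] →
      wordBracket (driftField d hd σ) I = polyVF d hd (wcst d I) (wordQ σ I)
  | [], h => absurd rfl h
  | [i], _ => driftField_eq_s10 d hd σ i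
  | [i, j], _ => by
      show lieBracketVF (driftField d hd σ i) (driftField d hd σ j) = _
      rw [driftField_eq_s10, driftField_eq_s10, lieBracket_polyVF]
      have hq : (fun k => (∑ t : Fin 2, C (wordC d i (Fin.castLE (by omega : 2 ≤ d) t)) *
            pderiv t (σ j k)) -
          ∑ t : Fin 2, C (wordC d j (Fin.castLE (by omega : 2 ≤ d) t)) * pderiv t (σ i k)) =
          wordQ σ [i, j] := by
        funext k
        rw [sum_wordC d hd, sum_wordC d hd]
        rfl
      rw [hq]
      rfl
  | i :: j :: m :: l, _ => by
      show lieBracketVF (driftField d hd σ i) (wordBracket (driftField d hd σ) (j :: m :: l)) = _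
      rw [driftField_eq_s10, wordBracket_eq σ (j :: m :: l) (by simp), lieBracket_polyVF]
      have hc : wcst d (j :: m :: l) = 0 := by cases l <;> rfl
      have hq : (fun k => (∑ t : Fin 2, C (wordC d i (Fin.castLE (by omega : 2 ≤ d) t)) *
            pderiv t (wordQ σ (j :: m :: l) k)) -
          ∑ t : Fin 2, C (wcst d (j :: m :: l) (Fin.castLE (by omega : 2 ≤ d) t)) *
            pderiv t (σ i k)) = wordQ σ (i :: j :: m :: l) := by
        funext k
        rw [sum_wordC d hd, hc]
        show _ = pderiv i (wordQ σ (j :: m :: l) k)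
        simp
      rw [hq]
      rfl
end


lemma coeff_pderiv' {σ : Type*} [DecidableEq σ] (i : σ) (p : MvPolynomial σ ℝ) (e : σ →₀ ℕ) :
    coeff e (pderiv i p) = ((e i : ℝ) + 1) * coeff (e + Finsupp.single i 1) p := by
  induction p using MvPolynomial.induction_on' with
  | monomial u a =>
      rw [pderiv_monomial, coeff_monomial, coeff_monomial]
      by_cases h : u = e + Finsupp.single i 1
      · subst h
        have h1 : e + Finsupp.single i 1 - Finsupp.single i 1 = e := by
          ext j
          simp [Finsupp.tsub_apply, Finsupp.add_apply]
        rw [if_pos h1]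
        simp [Finsupp.add_apply, Finsupp.single_eq_same, mul_comm]
      · rw [if_neg h]
        by_cases hu : u i = 0
        · by_cases h2 : u - Finsupp.single i 1 = e <;> simp [h2, hu]
        · have hle : Finsupp.single i 1 ≤ u := by
            rw [Finsupp.single_le_iff]
            omega
          have h2 : u - Finsupp.single i 1 ≠ e := by
            intro h3
            apply h
            rw [← h3, tsub_add_cancel_of_le hle]
          simp [h2]
  | add p q hp hq =>
      simp [hp, hq, mul_add]

lemma pderiv_comm' {σ : Type*} (i j : σ) (p : MvPolynomial σ ℝ) :
    pderiv i (pderiv j p) = pderiv j (pderiv i p) := by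
  classical
  apply MvPolynomial.ext
  intro e
  rw [coeff_pderiv', coeff_pderiv', coeff_pderiv', coeff_pderiv']
  rw [add_right_comm]
  by_cases h : i = j
  · subst h; ring
  · rw [Finsupp.add_apply, Finsupp.add_apply, Finsupp.single_apply, Finsupp.single_apply,
      if_neg h, if_neg fun hh => h hh.symm]
    push_cast
    ring

noncomputable def Dit (l m : ℕ) (p : MvPolynomial (Fin 2) ℝ) : MvPolynomial (Fin 2) ℝ :=
  (fun q => pderiv (0 : Fin 2) q)^[l] ((fun q => pderiv (1 : Fin 2) q)^[m] p)

lemma pderiv_iterate_comm (i j : Fin 2) (l : ℕ) (p : MvPolynomial (Fin 2) ℝ) :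
    pderiv i ((fun q => pderiv j q)^[l] p) = (fun q => pderiv j q)^[l] (pderiv i p) := by
  induction l generalizing p with
  | zero => rfl
  | succ l ih =>
      rw [Function.iterate_succ_apply, Function.iterate_succ_apply, ih, pderiv_comm']

lemma pderiv0_Dit (l m : ℕ) (p : MvPolynomial (Fin 2) ℝ) :
    pderiv (0 : Fin 2) (Dit l m p) = Dit (l + 1) m p := by
  simp only [Dit, Function.iterate_succ_apply']

lemma pderiv1_Dit (l m : ℕ) (p : MvPolynomial (Fin 2) ℝ) :
    pderiv (1 : Fin 2) (Dit l m p) = Dit l (m + 1) p := by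
  simp only [Dit]
  rw [pderiv_iterate_comm]
  congr 1
  exact (Function.iterate_succ_apply' (fun q => pderiv (1 : Fin 2) q) m p).symm

lemma Dit_smul (l m : ℕ) (e : ℝ) (p : MvPolynomial (Fin 2) ℝ) :
    Dit l m (e • p) = e • Dit l m p := by
  have h : ∀ (i : Fin 2) (k : ℕ) (q : MvPolynomial (Fin 2) ℝ),
      (fun q => pderiv i q)^[k] (e • q) = e • (fun q => pderiv i q)^[k] q := by
    intro i k
    induction k with
    | zero => intro q; rfl
    | succ k ih =>
        intro q
        rw [Function.iterate_succ_apply, Function.iterate_succ_apply,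
          show pderiv i (e • q) = e • pderiv i q from
            map_smul (pderiv i).toLinearMap e q, ih]
  rw [Dit, h, h]
  rfl



lemma coeff_iterI (i : Fin 2) (l : ℕ) (p : MvPolynomial (Fin 2) ℝ) (c : Fin 2 →₀ ℕ) :
    coeff c ((fun q => pderiv i q)^[l] p) =
      (∏ t ∈ Finset.range l, ((c i : ℝ) + 1 + t)) * coeff (c + Finsupp.single i l) p := by
  induction l generalizing p with
  | zero => simp
  | succ l ih =>
      rw [Function.iterate_succ_apply, ih, coeff_pderiv']
      rw [Finset.prod_range_succ]
      have h1 : ((c + Finsupp.single i l) i : ℝ) = (c i : ℝ) + l := by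
        simp [Finsupp.add_apply, Finsupp.single_eq_same]
      have h2 : c + Finsupp.single i l + Finsupp.single i 1 = c + Finsupp.single i (l + 1) := by
        rw [add_assoc, ← Finsupp.single_add]
      rw [h1, h2]
      ring

/-- combinatorial coefficient -/
noncomputable def Acoef (c : Fin 2 →₀ ℕ) (l m : ℕ) : ℝ :=
  (∏ t ∈ Finset.range l, ((c 0 : ℝ) + 1 + t)) * ∏ t ∈ Finset.range m, ((c 1 : ℝ) + 1 + t)

lemma Acoef_pos (c : Fin 2 →₀ ℕ) (l m : ℕ) : 0 < Acoef c l m := by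
  apply mul_pos <;> exact Finset.prod_pos fun t _ => by positivity

lemma coeff_Dit (l m : ℕ) (p : MvPolynomial (Fin 2) ℝ) (c : Fin 2 →₀ ℕ) :
    coeff c (Dit l m p) =
      Acoef c l m * coeff (c + Finsupp.single 0 l + Finsupp.single 1 m) p := by
  rw [Dit, coeff_iterI, coeff_iterI]
  have h1 : (c + Finsupp.single (0 : Fin 2) l) 1 = c 1 := by
    simp [Finsupp.add_apply, Finsupp.single_apply]
  rw [h1, Acoef]
  ring

lemma fin2_decomp (c : Fin 2 →₀ ℕ) : c = Finsupp.single 0 (c 0) + Finsupp.single 1 (c 1) := by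
  ext j
  fin_cases j <;> simp [Finsupp.add_apply, Finsupp.single_apply]

lemma fin2_sum (c : Fin 2 →₀ ℕ) : (∑ i ∈ c.support, c i) = c 0 + c 1 := by
  rw [show (∑ i ∈ c.support, c i) = c.sum fun _ e => e from rfl]
  rw [Finsupp.sum_fintype _ _ fun _ => rfl]
  exact Fin.sum_univ_two c

/-- the fixed superset of supports -/
noncomputable def Tn (n : ℕ) : Finset (Fin 2 →₀ ℕ) :=
  Finset.image (fun ab : ℕ × ℕ => Finsupp.single 0 ab.1 + Finsupp.single 1 ab.2)
    ((Finset.range (n + 1)) ×ˢ (Finset.range (n + 1)))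

lemma mem_Tn {n : ℕ} {c : Fin 2 →₀ ℕ} (h0 : c 0 ≤ n) (h1 : c 1 ≤ n) : c ∈ Tn n := by
  rw [Tn, Finset.mem_image]
  exact ⟨(c 0, c 1), by simp [Finset.mem_product, Finset.mem_range]; omega,
    (fin2_decomp c).symm⟩

lemma zero_mem_Tn (n : ℕ) : (0 : Fin 2 →₀ ℕ) ∈ Tn n := mem_Tn (by simp) (by simp)

lemma eval_eq_sum_Tn {n : ℕ} (p : MvPolynomial (Fin 2) ℝ)
    (hp : ∀ c ∈ p.support, c 0 ≤ n ∧ c 1 ≤ n) (y : Fin 2 → ℝ) :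
    MvPolynomial.eval y p = ∑ c ∈ Tn n, coeff c p * ∏ i, y i ^ c i := by
  rw [MvPolynomial.eval_eq']
  apply Finset.sum_subset
  · intro c hc
    exact mem_Tn (hp c hc).1 (hp c hc).2
  · intro c _ hc
    rw [MvPolynomial.notMem_support_iff.1 hc, zero_mul]








noncomputable def psi {d : ℕ} (σ : Fin 2 → Fin d → MvPolynomial (Fin 2) ℝ) (k : Fin d) :
    MvPolynomial (Fin 2) ℝ :=
  pderiv (0 : Fin 2) (σ 1 k) - pderiv (1 : Fin 2) (σ 0 k)

lemma wordQ_cons {d : ℕ} (σ : Fin 2 → Fin d → MvPolynomial (Fin 2) ℝ) (i : Fin 2)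
    (I : List (Fin 2)) (h : 2 ≤ I.length) (k : Fin d) :
    wordQ σ (i :: I) k = pderiv i (wordQ σ I k) := by
  match I with
  | a :: b :: t => rfl

lemma wordQ_normal {d : ℕ} (σ : Fin 2 → Fin d → MvPolynomial (Fin 2) ℝ) :
    ∀ I : List (Fin 2), 2 ≤ I.length →
      ∃ (l m : ℕ) (e : ℝ), ∀ k, wordQ σ I k = e • Dit l m (psi σ k)
  | [], h => by simp at h
  | [i], h => by simp at h
  | [i, j], _ => by
      refine ⟨0, 0, ?_⟩
      fin_cases i <;> fin_cases j
      · exact ⟨0, fun k => by simp [wordQ, Dit]⟩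
      · exact ⟨1, fun k => by simp [wordQ, Dit, psi]⟩
      · refine ⟨-1, fun k => ?_⟩
        show pderiv 1 (σ 0 k) - pderiv 0 (σ 1 k) = _
        simp [Dit, psi]
      · exact ⟨0, fun k => by simp [wordQ, Dit]⟩
  | i :: j :: m :: l, _ => by
      obtain ⟨l0, m0, e, h⟩ := wordQ_normal σ (j :: m :: l) (by simp)
      fin_cases i
      · refine ⟨l0 + 1, m0, e, fun k => ?_⟩
        show pderiv 0 (wordQ σ (j :: m :: l) k) = _
        rw [h, show pderiv (0 : Fin 2) (e • Dit l0 m0 (psi σ k)) =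
          e • pderiv (0 : Fin 2) (Dit l0 m0 (psi σ k)) from
          map_smul (pderiv (0 : Fin 2)).toLinearMap e _, pderiv0_Dit]
      · refine ⟨l0, m0 + 1, e, fun k => ?_⟩
        show pderiv 1 (wordQ σ (j :: m :: l) k) = _
        rw [h, show pderiv (1 : Fin 2) (e • Dit l0 m0 (psi σ k)) =
          e • pderiv (1 : Fin 2) (Dit l0 m0 (psi σ k)) from
          map_smul (pderiv (1 : Fin 2)).toLinearMap e _, pderiv1_Dit]

lemma wordQ_realize {d : ℕ} (σ : Fin 2 → Fin d → MvPolynomial (Fin 2) ℝ) (l m : ℕ) :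
    ∃ I : List (Fin 2), 2 ≤ I.length ∧ ∀ k, wordQ σ I k = Dit l m (psi σ k) := by
  have hbase : ∀ m : ℕ, ∀ k, wordQ σ (List.replicate m 1 ++ [0, 1]) k = Dit 0 m (psi σ k) := by
    intro m
    induction m with
    | zero => intro k; simp [wordQ, Dit, psi]
    | succ m ih =>
        intro k
        rw [List.replicate_succ, List.cons_append,
          wordQ_cons σ _ _ (by simp) k, ih, ← pderiv1_Dit]
  have hmain : ∀ l : ℕ, ∀ k,
      wordQ σ (List.replicate l 0 ++ (List.replicate m 1 ++ [0, 1])) k = Dit l m (psi σ k) := by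
    intro l
    induction l with
    | zero => intro k; simpa using hbase m k
    | succ l ih =>
        intro k
        rw [List.replicate_succ, List.cons_append,
          wordQ_cons σ _ _ (by simp; omega) k, ih, ← pderiv0_Dit]
  exact ⟨_, by simp; omega, hmain l⟩

noncomputable def emb2 {d : ℕ} (j : Fin (d - 2)) : Fin d :=
  ⟨(j : ℕ) + 2, by have := j.isLt; omega⟩

noncomputable def Emb (d : ℕ) : (Fin (d - 2) → ℝ) →ₗ[ℝ] (Fin d → ℝ) where
  toFun u := fun j =>
    if h : 2 ≤ (j : ℕ) then u ⟨(j : ℕ) - 2, by have := j.isLt; omega⟩ else 0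
  map_add' u v := by
    funext j; by_cases h : 2 ≤ (j : ℕ) <;> simp [h]
  map_smul' a u := by
    funext j; by_cases h : 2 ≤ (j : ℕ) <;> simp [h]

lemma Emb_emb2 {d : ℕ} (u : Fin (d - 2) → ℝ) (j : Fin (d - 2)) :
    Emb d u (emb2 j) = u j := by
  have h : 2 ≤ ((emb2 j : Fin d) : ℕ) := by simp [emb2]
  simp only [Emb, LinearMap.coe_mk, AddHom.coe_mk, dif_pos h]
  congr 1

lemma Emb_inj {d : ℕ} : Function.Injective (Emb d) := by
  intro u v h
  funext j
  rw [← Emb_emb2 u j, ← Emb_emb2 v j, h]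

lemma polyVF_decomp (d : ℕ) (hd : 3 ≤ d) (c : Fin d → ℝ)
    (q : Fin d → MvPolynomial (Fin 2) ℝ) (x : Fin d → ℝ) :
    polyVF d hd c q x = c + Emb d (fun j => MvPolynomial.eval (pr2 d hd x) (q (emb2 j))) := by
  funext j
  by_cases h : 2 ≤ (j : ℕ)
  · simp only [polyVF, if_pos h, Pi.add_apply, Emb, LinearMap.coe_mk, AddHom.coe_mk, dif_pos h]
    have hj : (emb2 (⟨(j : ℕ) - 2, by have := j.isLt; omega⟩ : Fin (d - 2)) : Fin d) = j := by
      ext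
      simp only [emb2]
      omega
    rw [hj]
  · simp [polyVF, if_neg h, Emb, dif_neg h]

lemma top_le_span_singles {m : ℕ} (S : Set (Fin m → ℝ))
    (h : ∀ j : Fin m, Pi.single j (1 : ℝ) ∈ Submodule.span ℝ S) :
    Submodule.span ℝ S = ⊤ := by
  rw [eq_top_iff]
  intro u _
  have hu : u = ∑ j : Fin m, u j • (Pi.single j 1 : Fin m → ℝ) := by
    funext j'
    simp [Pi.single_apply, Finset.sum_apply, eq_comm]
  rw [hu]
  exact Submodule.sum_mem _ fun j _ => Submodule.smul_mem _ _ (h j)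

lemma single_eq_Emb {d : ℕ} (j : Fin d) (hj : 2 ≤ (j : ℕ)) :
    (Pi.single j 1 : Fin d → ℝ) =
      Emb d (Pi.single (⟨(j : ℕ) - 2, by have := j.isLt; omega⟩ : Fin (d - 2)) 1) := by
  funext j'
  by_cases h' : 2 ≤ (j' : ℕ)
  · simp only [Emb, LinearMap.coe_mk, AddHom.coe_mk, dif_pos h', Pi.single_apply, Fin.ext_iff]
    have hiff : ((j' : ℕ) - 2 = (j : ℕ) - 2) ↔ ((j' : ℕ) = (j : ℕ)) := by omega
    simp only [hiff]
  · have : (j' : ℕ) ≠ (j : ℕ) := by omega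
    simp only [Emb, LinearMap.coe_mk, AddHom.coe_mk, dif_neg h', Pi.single_apply, Fin.ext_iff]
    simp [this]

lemma wcst_long (d : ℕ) (i j : Fin 2) (t : List (Fin 2)) :
    wcst d (i :: j :: t) = 0 := by cases t <;> rfl

lemma spanA (d : ℕ) (hd : 3 ≤ d) (σ : Fin 2 → Fin d → MvPolynomial (Fin 2) ℝ) (x : Fin d → ℝ) :
    (Submodule.span ℝ
      {v : Fin d → ℝ | ∃ I : List (Fin 2), I ≠ [] ∧
        v = wordBracket (driftField d hd σ) I x} = ⊤) ↔
    Submodule.span ℝ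
      {u : Fin (d - 2) → ℝ | ∃ l m : ℕ,
        u = fun j => MvPolynomial.eval (pr2 d hd x) (Dit l m (psi σ (emb2 j)))} = ⊤ := by
  set S : Set (Fin d → ℝ) :=
    {v | ∃ I : List (Fin 2), I ≠ [] ∧ v = wordBracket (driftField d hd σ) I x} with hSdef
  set Bs : Set (Fin (d - 2) → ℝ) :=
    {u | ∃ l m : ℕ, u = fun j => MvPolynomial.eval (pr2 d hd x) (Dit l m (psi σ (emb2 j)))}
    with hBdef
  -- brackets of length ≥ 2 are scalar multiples of embedded derivative vectors
  have f2 : ∀ (i j : Fin 2) (t : List (Fin 2)), ∃ (e : ℝ) (u : Fin (d - 2) → ℝ),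
      u ∈ Bs ∧ wordBracket (driftField d hd σ) (i :: j :: t) x = e • Emb d u := by
    intro i j t
    obtain ⟨l, m, e, hq⟩ := wordQ_normal σ (i :: j :: t) (by simp)
    refine ⟨e, fun j' => MvPolynomial.eval (pr2 d hd x) (Dit l m (psi σ (emb2 j'))),
      ⟨l, m, rfl⟩, ?_⟩
    rw [wordBracket_eq d hd σ (i :: j :: t) (by simp), wcst_long, polyVF_decomp]
    have : (fun j' => MvPolynomial.eval (pr2 d hd x) (wordQ σ (i :: j :: t) (emb2 j')))
        = e • fun j' => MvPolynomial.eval (pr2 d hd x) (Dit l m (psi σ (emb2 j'))) := by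
      funext j'
      rw [hq, MvPolynomial.smul_eval]
      rfl
    rw [this, map_smul]
    simp
  -- embedded derivative vectors are values of word brackets
  have hEmbMem : ∀ l m : ℕ,
      Emb d (fun j => MvPolynomial.eval (pr2 d hd x) (Dit l m (psi σ (emb2 j)))) ∈ S := by
    intro l m
    obtain ⟨I, hlen, hI⟩ := wordQ_realize σ l m
    match I, hlen with
    | i :: j :: t, _ =>
      refine ⟨i :: j :: t, by simp, ?_⟩
      rw [wordBracket_eq d hd σ (i :: j :: t) (by simp), wcst_long, polyVF_decomp]
      have : (fun j' => MvPolynomial.eval (pr2 d hd x) (wordQ σ (i :: j :: t) (emb2 j')))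
          = fun j' => MvPolynomial.eval (pr2 d hd x) (Dit l m (psi σ (emb2 j'))) := by
        funext j'; rw [hI]
      rw [this]
      simp
  have hdrift : ∀ i : Fin 2, driftField d hd σ i x = wordC d i +
      Emb d (fun j => MvPolynomial.eval (pr2 d hd x) (σ i (emb2 j))) := by
    intro i
    rw [driftField_eq_s10 d hd, polyVF_decomp]
  constructor
  · -- Hörmander at x implies derivative vectors span
    intro hS
    set M := Submodule.span ℝ
        ({driftField d hd σ 0 x, driftField d hd σ 1 x} : Set (Fin d → ℝ)) ⊔
      Submodule.map (Emb d) (Submodule.span ℝ Bs) with hMdef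
    have hSM : S ⊆ (M : Set (Fin d → ℝ)) := by
      rintro v ⟨I, hne, rfl⟩
      match I, hne with
      | [i], _ =>
          apply Submodule.mem_sup_left
          apply Submodule.subset_span
          show wordBracket (driftField d hd σ) [i] x ∈ _
          fin_cases i
          · left; rfl
          · right; rfl
      | i :: j :: t, _ =>
          obtain ⟨e, u', hu', hv⟩ := f2 i j t
          rw [hv]
          exact Submodule.smul_mem _ _ (Submodule.mem_sup_right
            (Submodule.mem_map_of_mem (Submodule.subset_span hu')))
    have hMtop : M = ⊤ := by
      rw [eq_top_iff, ← hS]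
      exact Submodule.span_le.2 hSM
    rw [Submodule.eq_top_iff']
    intro u
    have hu : Emb d u ∈ M := by rw [hMtop]; trivial
    obtain ⟨p, hp, q, hq, hpq⟩ := Submodule.mem_sup.1 hu
    obtain ⟨a, b, hab⟩ := Submodule.mem_span_pair.1 hp
    obtain ⟨u', hu', rfl⟩ := hq
    have hj0 : (⟨0, by omega⟩ : Fin d) = ⟨0, by omega⟩ := rfl
    have hEmb0 : ∀ w : Fin (d - 2) → ℝ, Emb d w ⟨0, by omega⟩ = 0 := by
      intro w
      simp [Emb]
    have hEmb1 : ∀ w : Fin (d - 2) → ℝ, Emb d w ⟨1, by omega⟩ = 0 := by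
      intro w
      simp [Emb]
    have hV : ∀ i : Fin 2, ∀ jj : Fin d, ¬ 2 ≤ (jj : ℕ) →
        driftField d hd σ i x jj = if (jj : ℕ) = (i : ℕ) then 1 else 0 := by
      intro i jj hjj
      simp [driftField, hjj]
    have h0 := congrFun hpq ⟨0, by omega⟩
    have h1 := congrFun hpq ⟨1, by omega⟩
    rw [← hab] at h0 h1
    simp only [Pi.add_apply, Pi.smul_apply, smul_eq_mul, hEmb0, hEmb1,
      hV 0 ⟨0, by omega⟩ (by norm_num), hV 1 ⟨0, by omega⟩ (by norm_num),
      hV 0 ⟨1, by omega⟩ (by norm_num), hV 1 ⟨1, by omega⟩ (by norm_num)] at h0 h1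
    norm_num at h0 h1
    -- h0 : a = 0, h1 : b = 0
    have hp0 : p = 0 := by rw [← hab, h0, h1]; simp
    rw [hp0, zero_add] at hpq
    exact Emb_inj hpq ▸ hu'
  · -- derivative vectors span implies Hörmander at x
    intro hB
    have hEmbAll : ∀ u : Fin (d - 2) → ℝ, Emb d u ∈ Submodule.span ℝ S := by
      intro u
      have hu : u ∈ Submodule.span ℝ Bs := by rw [hB]; trivial
      have h1 : Emb d u ∈ Submodule.map (Emb d) (Submodule.span ℝ Bs) :=
        Submodule.mem_map_of_mem hu
      rw [Submodule.map_span] at h1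
      refine Submodule.span_le.2 ?_ h1
      rintro _ ⟨u', ⟨l, m, rfl⟩, rfl⟩
      exact Submodule.subset_span (hEmbMem l m)
    apply top_le_span_singles
    intro j
    by_cases hj : 2 ≤ (j : ℕ)
    · rw [single_eq_Emb j hj]
      exact hEmbAll _
    · set i : Fin 2 := ⟨(j : ℕ), by omega⟩ with hidef
      have hwc : wordC d i = (Pi.single j 1 : Fin d → ℝ) := by
        funext j'
        simp only [wordC, Pi.single_apply, Fin.ext_iff]
        rfl
      have hdmem : driftField d hd σ i x ∈ Submodule.span ℝ S :=
        Submodule.subset_span ⟨[i], by simp, rfl⟩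
      have := sub_mem hdmem
        (hEmbAll (fun j' => MvPolynomial.eval (pr2 d hd x) (σ i (emb2 j'))))
      rwa [hdrift i, add_sub_cancel_right, hwc] at this

section PartB
variable {d : ℕ} (n : ℕ) (σ : Fin 2 → Fin d → MvPolynomial (Fin 2) ℝ)

/-- coefficient vectors of ψ -/
noncomputable def coefvec (c : Fin 2 →₀ ℕ) : Fin (d - 2) → ℝ :=
  fun j => coeff c (psi σ (emb2 j))

lemma coeff_psi_zero (hdeg : ∀ i k, (σ i k).totalDegree ≤ n) (k : Fin d)
    (c : Fin 2 →₀ ℕ) (hc : n ≤ c 0 + c 1) : coeff c (psi σ k) = 0 := by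
  have hz : ∀ (i : Fin 2) (q : MvPolynomial (Fin 2) ℝ), q.totalDegree ≤ n →
      coeff c (pderiv i q) = 0 := by
    intro i q hq
    rw [coeff_pderiv']
    have : coeff (c + Finsupp.single i 1) q = 0 := by
      apply coeff_eq_zero_of_totalDegree_lt
      rw [fin2_sum]
      set e : Fin 2 →₀ ℕ := c + Finsupp.single i 1 with he
      have h0 : e 0 + e 1 = c 0 + c 1 + 1 := by
        rw [he]
        fin_cases i <;>
          simp [Finsupp.add_apply, Finsupp.single_apply] <;> omega
      omega
    rw [this, mul_zero]
  show coeff c (pderiv (0 : Fin 2) (σ 1 k) - pderiv (1 : Fin 2) (σ 0 k)) = 0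
  rw [MvPolynomial.coeff_sub, hz 0 (σ 1 k) (hdeg 1 k), hz 1 (σ 0 k) (hdeg 0 k), sub_zero]

lemma Dit_psi_zero (hdeg : ∀ i k, (σ i k).totalDegree ≤ n) (k : Fin d)
    (l m : ℕ) (hlm : n ≤ l + m) : Dit l m (psi σ k) = 0 := by
  apply MvPolynomial.ext
  intro c
  rw [coeff_Dit, coeff_psi_zero n σ hdeg k _ ?_, mul_zero, coeff_zero]
  simp only [Finsupp.add_apply, Finsupp.single_apply]
  norm_num
  omega

lemma Dit_psi_supp (hdeg : ∀ i k, (σ i k).totalDegree ≤ n) (k : Fin d) (l m : ℕ) :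
    ∀ c ∈ (Dit l m (psi σ k)).support, c 0 ≤ n ∧ c 1 ≤ n := by
  intro c hc
  rw [MvPolynomial.mem_support_iff, coeff_Dit] at hc
  have h2 : coeff (c + Finsupp.single 0 l + Finsupp.single 1 m) (psi σ k) ≠ 0 := by
    intro h; rw [h, mul_zero] at hc; exact hc rfl
  by_contra hcon
  apply h2
  apply coeff_psi_zero n σ hdeg
  simp only [Finsupp.add_apply, Finsupp.single_apply]
  norm_num
  omega

lemma derivvec_mem_span_coef (hdeg : ∀ i k, (σ i k).totalDegree ≤ n) (y : Fin 2 → ℝ)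
    (l m : ℕ) :
    (fun j => MvPolynomial.eval y (Dit l m (psi σ (emb2 j)))) ∈
      Submodule.span ℝ {u : Fin (d - 2) → ℝ | ∃ c : Fin 2 →₀ ℕ, u = coefvec σ c} := by
  have hvec : (fun j => MvPolynomial.eval y (Dit l m (psi σ (emb2 j))))
      = ∑ c ∈ Tn n, ((∏ i, y i ^ c i) * Acoef c l m) •
          coefvec σ (c + Finsupp.single 0 l + Finsupp.single 1 m) := by
    funext j
    rw [Finset.sum_apply]
    rw [eval_eq_sum_Tn _ (Dit_psi_supp n σ hdeg (emb2 j) l m) y]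
    apply Finset.sum_congr rfl
    intro c _
    rw [coeff_Dit]
    simp only [Pi.smul_apply, smul_eq_mul, coefvec]
    ring
  rw [hvec]
  exact Submodule.sum_mem _ fun c _ =>
    Submodule.smul_mem _ _ (Submodule.subset_span ⟨_, rfl⟩)

lemma coefvec_mem_span_deriv (hdeg : ∀ i k, (σ i k).totalDegree ≤ n) (hn : 1 ≤ n)
    (y : Fin 2 → ℝ) (c : Fin 2 →₀ ℕ) :
    coefvec σ c ∈ Submodule.span ℝ
      {u : Fin (d - 2) → ℝ | ∃ l m : ℕ, l + m ≤ n - 1 ∧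
        u = fun j => MvPolynomial.eval y (Dit l m (psi σ (emb2 j)))} := by
  set SS := Submodule.span ℝ
      {u : Fin (d - 2) → ℝ | ∃ l m : ℕ, l + m ≤ n - 1 ∧
        u = fun j => MvPolynomial.eval y (Dit l m (psi σ (emb2 j)))} with hSS
  have hzero : ∀ c' : Fin 2 →₀ ℕ, n ≤ c' 0 + c' 1 → coefvec σ c' = 0 := by
    intro c' hc'
    funext j
    exact coeff_psi_zero n σ hdeg _ c' hc'
  have key : ∀ k : ℕ, ∀ c' : Fin 2 →₀ ℕ, n - (c' 0 + c' 1) ≤ k → coefvec σ c' ∈ SS := by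
    intro k
    induction k with
    | zero =>
        intro c' hc'
        rw [hzero c' (by omega)]
        exact zero_mem _
    | succ k ih =>
        intro c' hc'
        by_cases hcn : n ≤ c' 0 + c' 1
        · rw [hzero c' hcn]; exact zero_mem _
        push_neg at hcn
        set l := c' 0 with hl
        set m := c' 1 with hm
        have hc'' : c' = Finsupp.single 0 l + Finsupp.single 1 m := fin2_decomp c'
        have hA0 : Acoef 0 l m ≠ 0 := ne_of_gt (Acoef_pos 0 l m)
        -- the Taylor identity at level of vectors
        have hvec : (fun j => MvPolynomial.eval y (Dit l m (psi σ (emb2 j))))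
            = Acoef 0 l m • coefvec σ c' +
              ∑ c'' ∈ (Tn n).erase 0, ((∏ i, y i ^ c'' i) * Acoef c'' l m) •
                coefvec σ (c'' + Finsupp.single 0 l + Finsupp.single 1 m) := by
          funext j
          simp only [Pi.add_apply, Pi.smul_apply, smul_eq_mul, Finset.sum_apply]
          rw [eval_eq_sum_Tn _ (Dit_psi_supp n σ hdeg (emb2 j) l m) y,
            ← Finset.add_sum_erase _ _ (zero_mem_Tn n)]
          congr 1
          · rw [coeff_Dit]
            simp only [coefvec]
            rw [show (0 : Fin 2 →₀ ℕ) + Finsupp.single 0 l + Finsupp.single 1 m = c' by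
              rw [zero_add]; exact hc''.symm]
            simp [Finsupp.coe_zero]
          · apply Finset.sum_congr rfl
            intro c'' _
            rw [coeff_Dit]
            simp only [coefvec]
            ring
        have hsum : (∑ c'' ∈ (Tn n).erase 0, ((∏ i, y i ^ c'' i) * Acoef c'' l m) •
            coefvec σ (c'' + Finsupp.single 0 l + Finsupp.single 1 m)) ∈ SS := by
          apply Submodule.sum_mem
          intro c'' hc''mem
          apply Submodule.smul_mem
          have hne : c'' ≠ 0 := (Finset.mem_erase.1 hc''mem).1
          have hge : 1 ≤ c'' 0 + c'' 1 := by
            by_contra hcon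
            push_neg at hcon
            apply hne
            have h0 : c'' 0 = 0 := by omega
            have h1 : c'' 1 = 0 := by omega
            rw [fin2_decomp c'', h0, h1]
            simp
          apply ih
          simp only [Finsupp.add_apply, Finsupp.single_apply]
          norm_num
          omega
        have hd' : (fun j => MvPolynomial.eval y (Dit l m (psi σ (emb2 j)))) ∈ SS :=
          Submodule.subset_span ⟨l, m, by omega, rfl⟩
        have : Acoef 0 l m • coefvec σ c'
            = (fun j => MvPolynomial.eval y (Dit l m (psi σ (emb2 j))))
              - ∑ c'' ∈ (Tn n).erase 0, ((∏ i, y i ^ c'' i) * Acoef c'' l m) •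
                coefvec σ (c'' + Finsupp.single 0 l + Finsupp.single 1 m) := by
          rw [hvec]; abel
        have hmem : Acoef 0 l m • coefvec σ c' ∈ SS := by
          rw [this]
          exact sub_mem hd' hsum
        have hfin := Submodule.smul_mem SS (Acoef 0 l m)⁻¹ hmem
        rwa [smul_smul, inv_mul_cancel₀ hA0, one_smul] at hfin
  exact key n c (by omega)

end PartB


/-- Lemma 1.1: for a fixed point `w ∈ ℝ²`, the parabolic Hörmander
condition for the driftless system — the iterated Lie brackets `V_I(x)` over all nonempty
words `I` span `ℝ^d` at every `x` — holds if and only if the `(d-2) × K` matrix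
`Σ(w)` with columns `(∂₁^l ∂₂^m ψ)(w)`, indexed by the pairs `(l,m)` with
`l + m ≤ n - 1`, has full rank `d - 2` (i.e. its columns span `ℝ^{d-2}`), where
`ψ = ∂₁σ₂ − ∂₂σ₁`. -/
theorem stmt10 (d n : ℕ) (hd : 3 ≤ d) (hn : 1 ≤ n)
    (σ : Fin 2 → Fin d → MvPolynomial (Fin 2) ℝ)
    (hdeg : ∀ i j, (σ i j).totalDegree ≤ n)
    (w : Fin 2 → ℝ) :
    (∀ x : Fin d → ℝ,
        Submodule.span ℝ
          {v : Fin d → ℝ |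
            ∃ I : List (Fin 2), I ≠ [] ∧ v = wordBracket (driftField d hd σ) I x} = ⊤) ↔
      Submodule.span ℝ
        {v : Fin (d - 2) → ℝ |
          ∃ l m : ℕ, l + m ≤ n - 1 ∧
            v = fun j : Fin (d - 2) =>
              MvPolynomial.eval w
                ((fun p => pderiv (0 : Fin 2) p)^[l]
                  ((fun p => pderiv (1 : Fin 2) p)^[m]
                    (pderiv (0 : Fin 2) (σ 1 ⟨(j : ℕ) + 2, by have := j.isLt; omega⟩) -
                      pderiv (1 : Fin 2) (σ 0 ⟨(j : ℕ) + 2, by have := j.isLt; omega⟩))))} =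
        ⊤ := by
  -- rewrite the RHS set in terms of `Dit`, `psi`, `emb2`
  have hset : ∀ y : Fin 2 → ℝ,
      {v : Fin (d - 2) → ℝ |
        ∃ l m : ℕ, l + m ≤ n - 1 ∧
          v = fun j : Fin (d - 2) =>
            MvPolynomial.eval y
              ((fun p => pderiv (0 : Fin 2) p)^[l]
                ((fun p => pderiv (1 : Fin 2) p)^[m]
                  (pderiv (0 : Fin 2) (σ 1 ⟨(j : ℕ) + 2, by have := j.isLt; omega⟩) -
                    pderiv (1 : Fin 2) (σ 0 ⟨(j : ℕ) + 2, by have := j.isLt; omega⟩))))} =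
      {u : Fin (d - 2) → ℝ | ∃ l m : ℕ, l + m ≤ n - 1 ∧
        u = fun j => MvPolynomial.eval y (Dit l m (psi σ (emb2 j)))} := fun _ => rfl
  -- restricted and unrestricted derivative spans agree
  have spaneq : ∀ y : Fin 2 → ℝ,
      Submodule.span ℝ {u : Fin (d - 2) → ℝ | ∃ l m : ℕ,
          u = fun j => MvPolynomial.eval y (Dit l m (psi σ (emb2 j)))} =
      Submodule.span ℝ {u : Fin (d - 2) → ℝ | ∃ l m : ℕ, l + m ≤ n - 1 ∧
          u = fun j => MvPolynomial.eval y (Dit l m (psi σ (emb2 j)))} := by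
    intro y
    apply le_antisymm
    · apply Submodule.span_le.2
      rintro _ ⟨l, m, rfl⟩
      by_cases h : l + m ≤ n - 1
      · exact Submodule.subset_span ⟨l, m, h, rfl⟩
      · have hv : (fun j => MvPolynomial.eval y (Dit l m (psi σ (emb2 j))))
            = (0 : Fin (d - 2) → ℝ) := by
          funext j
          rw [Dit_psi_zero n σ hdeg (emb2 j) l m (by omega)]
          simp
        rw [hv]
        exact zero_mem _
    · exact Submodule.span_mono fun u ⟨l, m, _, hu⟩ => ⟨l, m, hu⟩
  -- restricted span is the coefficient span, independent of the point
  have hcoef : ∀ y : Fin 2 → ℝ,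
      Submodule.span ℝ {u : Fin (d - 2) → ℝ | ∃ l m : ℕ, l + m ≤ n - 1 ∧
          u = fun j => MvPolynomial.eval y (Dit l m (psi σ (emb2 j)))} =
      Submodule.span ℝ {u : Fin (d - 2) → ℝ | ∃ c : Fin 2 →₀ ℕ, u = coefvec σ c} := by
    intro y
    apply le_antisymm
    · apply Submodule.span_le.2
      rintro _ ⟨l, m, _, rfl⟩
      exact derivvec_mem_span_coef n σ hdeg y l m
    · apply Submodule.span_le.2
      rintro _ ⟨c, rfl⟩
      exact coefvec_mem_span_deriv n σ hdeg hn y c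
  constructor
  · intro hall
    have h1 := (spanA d hd σ (fun _ => 0)).1 (hall (fun _ => 0))
    rw [spaneq, hcoef] at h1
    rw [hset w, hcoef w]
    exact h1
  · intro hres x
    apply (spanA d hd σ x).2
    rw [spaneq, hcoef]
    rw [hset w, hcoef w] at hres
    exact hres
end
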